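/- arXiv:2201.12076 — 6 statements merged into one kernel-verified Lean document; each statement's English description precedes it below -/
import Mathlib

section
/- Let T be a power-bounded operator on a complex Banach space X satisfying the (dGSF) condition, let f ∈ 𝓑(𝔻) with continuous extension f̃ to the closed unit disc, and let f(T) ∈ L(X) be the operator-norm limit of f(rT) as r → 1−. If lim_{n→∞} ‖Tⁿ f(T)‖ = 0, then f̃(λ) = 0 for every λ ∈ σ(T) ∩ 𝕋. -/
open MeasureTheory Filter Metric
open scoped ENNReal Topology

/-- The Besov seminorm `‖f‖_{𝓑₀} = ∫₀¹ sup_{|θ|≤π} |f'(r e^{iθ})| dr`. -/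
noncomputable def besovNorm0 (f : ℂ → ℂ) : ℝ≥0∞ :=
  ∫⁻ r in Set.Ioo (0:ℝ) 1,
    ⨆ θ ∈ Set.Icc (-Real.pi) Real.pi,
      (‖deriv f ((r : ℂ) * Complex.exp ((θ : ℂ) * Complex.I))‖₊ : ℝ≥0∞)

/-- `T` is power-bounded. -/
def PowerBounded {X : Type*} [NormedAddCommGroup X] [NormedSpace ℂ X]
    (T : X →L[ℂ] X) : Prop :=
  ∃ M : ℝ, ∀ n : ℕ, ‖T ^ n‖ ≤ M

/-- The discrete Gomilko–Shi–Feng condition. -/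
def dGSF {X : Type*} [NormedAddCommGroup X] [NormedSpace ℂ X]
    (T : X →L[ℂ] X) : Prop :=
  ∀ (x : X) (x' : X →L[ℂ] ℂ), ∃ M : ℝ, ∀ r : ℝ, 0 < r → r < 1 →
    (1 - r) * ∫ θ in (-Real.pi)..Real.pi,
      ‖x' ((T * (Ring.inverse ((1 : X →L[ℂ] X)
          - (((r : ℂ) * Complex.exp ((θ : ℂ) * Complex.I)) • T))) ^ 2) x)‖ ≤ M

lemma spec_mem_of_tendsto {A : Type*} [NormedRing A] [NormedAlgebra ℂ A] [CompleteSpace A]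
    {ι : Type*} {l : Filter ι} [l.NeBot] {c : ι → ℂ} {B : ι → A} {c0 : ℂ} {B0 : A}
    (hc : Tendsto c l (nhds c0)) (hB : Tendsto B l (nhds B0))
    (h : ∀ᶠ i in l, c i ∈ spectrum ℂ (B i)) : c0 ∈ spectrum ℂ B0 := by
  by_contra h0
  rw [spectrum.notMem_iff] at h0
  have ht : Tendsto (fun i => algebraMap ℂ A (c i) - B i) l
      (nhds (algebraMap ℂ A c0 - B0)) :=
    (((continuous_algebraMap ℂ A).tendsto c0).comp hc).sub hB
  have hev : ∀ᶠ i in l, IsUnit (algebraMap ℂ A (c i) - B i) :=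
    ht.eventually (Units.isOpen.eventually_mem h0)
  rcases (h.and hev).exists with ⟨i, hi1, hi2⟩
  exact (spectrum.notMem_iff.mpr hi2) hi1

lemma poly_step {X : Type*} [NormedAddCommGroup X] [NormedSpace ℂ X] [CompleteSpace X]
    (T : X →L[ℂ] X) {lam : ℂ} (hlam : lam ∈ spectrum ℂ T) (b : ℕ → ℂ) (n N : ℕ) :
    lam ^ n * ∑ m ∈ Finset.range N, b m * lam ^ m ∈
      spectrum ℂ (T ^ n * ∑ m ∈ Finset.range N, b m • T ^ m) := by
  have h := spectrum.subset_polynomial_aeval T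
    (Polynomial.X ^ n * ∑ m ∈ Finset.range N, Polynomial.C (b m) * Polynomial.X ^ m)
    ⟨lam, hlam, rfl⟩
  simpa [map_mul, map_pow, map_sum, Polynomial.eval_finset_sum, Algebra.smul_def] using h

theorem kt_besov_necessity
    {X : Type*} [NormedAddCommGroup X] [NormedSpace ℂ X] [CompleteSpace X]
    (T : X →L[ℂ] X) (hpb : PowerBounded T) (hdgsf : dGSF T)
    (f : ℂ → ℂ) (hf : ∀ z ∈ ball (0:ℂ) 1, DifferentiableAt ℂ f z)
    (hB : besovNorm0 f < ⊤)
    (ftilde : ℂ → ℂ) (hft : ContinuousOn ftilde (closedBall (0:ℂ) 1))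
    (hext : ∀ z ∈ ball (0:ℂ) 1, ftilde z = f z)
    (a : ℕ → ℂ) (ha : ∀ z ∈ ball (0:ℂ) 1, HasSum (fun n => a n * z ^ n) (f z))
    (fT : X →L[ℂ] X)
    (hfT : Tendsto (fun r : ℝ => ∑' n : ℕ, (a n * (r : ℂ) ^ n) • T ^ n)
      (nhdsWithin 1 (Set.Iio 1)) (nhds fT))
    (hlim : Tendsto (fun n : ℕ => ‖T ^ n * fT‖) atTop (nhds 0)) :
    ∀ z ∈ spectrum ℂ T, ‖z‖ = 1 → ftilde z = 0 := by
  intro lam hlam hnl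
  rcases subsingleton_or_nontrivial X with hX | hX
  · haveI : Subsingleton (X →L[ℂ] X) :=
      ⟨fun A B => ContinuousLinearMap.ext fun x => Subsingleton.elim _ _⟩
    exact absurd hlam (spectrum.notMem_iff.mpr (isUnit_of_subsingleton _))
  obtain ⟨M, hM⟩ := hpb
  set M0 : ℝ := max M 0 with hM0def
  have hM0 : ∀ m : ℕ, ‖T ^ m‖ ≤ M0 := fun m => (hM m).trans (le_max_left _ _)
  have hmem : Set.Ioo (0:ℝ) 1 ∈ 𝓝[<] (1:ℝ) :=
    Ioo_mem_nhdsLT_of_mem ⟨zero_lt_one, le_rfl⟩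
  -- Step 1: for each r ∈ (0,1), spectral membership for the series
  have key : ∀ n : ℕ, ∀ r : ℝ, r ∈ Set.Ioo (0:ℝ) 1 →
      lam ^ n * f ((r:ℂ) * lam) ∈
        spectrum ℂ (T ^ n * ∑' m : ℕ, (a m * (r:ℂ) ^ m) • T ^ m) := by
    intro n r hr
    set z : ℂ := (r:ℂ) * lam with hz_def
    have hz : z ∈ ball (0:ℂ) 1 := by
      rw [mem_ball, dist_zero_right, hz_def, norm_mul, hnl, mul_one,
        Complex.norm_real, Real.norm_eq_abs, abs_of_pos hr.1]
      exact hr.2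
    have hsum := ha z hz
    have hnormsum : Summable (fun m => ‖a m * z ^ m‖) :=
      summable_norm_iff.mpr hsum.summable
    have hnorm_eq : ∀ m : ℕ, ‖a m * (r:ℂ) ^ m‖ = ‖a m * z ^ m‖ := by
      intro m
      rw [hz_def, mul_pow, norm_mul, norm_mul, norm_mul, norm_pow, norm_pow, hnl,
        one_pow, mul_one]
    have hS : Summable (fun m : ℕ => (a m * (r:ℂ) ^ m) • T ^ m) := by
      apply Summable.of_norm
      refine Summable.of_nonneg_of_le (fun m => norm_nonneg _) (fun m => ?_)
        (hnormsum.mul_right M0)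
      refine le_trans (norm_smul_le (a m * (r:ℂ) ^ m) (T ^ m)) ?_
      calc ‖a m * (r:ℂ) ^ m‖ * ‖T ^ m‖ ≤ ‖a m * (r:ℂ) ^ m‖ * M0 :=
            mul_le_mul_of_nonneg_left (hM0 m) (norm_nonneg _)
        _ = ‖a m * z ^ m‖ * M0 := by rw [hnorm_eq]
    have htend1 : Tendsto (fun N => lam ^ n * ∑ m ∈ Finset.range N, a m * z ^ m)
        atTop (nhds (lam ^ n * f z)) := hsum.tendsto_sum_nat.const_mul _
    have htend2 : Tendsto
        (fun N => T ^ n * ∑ m ∈ Finset.range N, (a m * (r:ℂ) ^ m) • T ^ m)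
        atTop (nhds (T ^ n * ∑' m : ℕ, (a m * (r:ℂ) ^ m) • T ^ m)) :=
      hS.hasSum.tendsto_sum_nat.const_mul _
    refine spec_mem_of_tendsto htend1 htend2 (Eventually.of_forall fun N => ?_)
    have hp := poly_step T hlam (fun m => a m * (r:ℂ) ^ m) n N
    have : ∀ m : ℕ, a m * z ^ m = a m * (r:ℂ) ^ m * lam ^ m := by
      intro m; rw [hz_def, mul_pow, mul_assoc]
    simpa only [this] using hp
  -- Step 2: pass to the limit r → 1⁻
  have keyB : ∀ n : ℕ, lam ^ n * ftilde lam ∈ spectrum ℂ (T ^ n * fT) := by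
    intro n
    have hlamcb : lam ∈ closedBall (0:ℂ) 1 := by
      rw [mem_closedBall, dist_zero_right, hnl]
    have hpath : Tendsto (fun r : ℝ => (r:ℂ) * lam) (𝓝[<] (1:ℝ))
        (𝓝[closedBall (0:ℂ) 1] lam) := by
      apply tendsto_nhdsWithin_of_tendsto_nhds_of_eventually_within
      · have h1 : Tendsto (fun r : ℝ => (r:ℂ) * lam) (𝓝 1) (𝓝 lam) := by
          have h0 : Continuous (fun r : ℝ => (r:ℂ) * lam) :=
            Complex.continuous_ofReal.mul continuous_const
          simpa using h0.tendsto (1:ℝ)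
        exact h1.mono_left nhdsWithin_le_nhds
      · filter_upwards [hmem] with r hr
        show ((r:ℂ) * lam) ∈ closedBall (0:ℂ) 1
        rw [mem_closedBall, dist_zero_right, norm_mul, hnl, mul_one,
          Complex.norm_real, Real.norm_eq_abs, abs_of_pos hr.1]
        exact hr.2.le
    have h1 : Tendsto (fun r : ℝ => ftilde ((r:ℂ) * lam)) (𝓝[<] (1:ℝ))
        (𝓝 (ftilde lam)) := (hft lam hlamcb).tendsto.comp hpath
    have h2 : (fun r : ℝ => ftilde ((r:ℂ) * lam)) =ᶠ[𝓝[<] (1:ℝ)]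
        (fun r : ℝ => f ((r:ℂ) * lam)) := by
      filter_upwards [hmem] with r hr
      apply hext
      rw [mem_ball, dist_zero_right, norm_mul, hnl, mul_one, Complex.norm_real,
        Real.norm_eq_abs, abs_of_pos hr.1]
      exact hr.2
    have hc : Tendsto (fun r : ℝ => lam ^ n * f ((r:ℂ) * lam)) (𝓝[<] (1:ℝ))
        (𝓝 (lam ^ n * ftilde lam)) := (h1.congr' h2).const_mul _
    have hA : Tendsto (fun r : ℝ => T ^ n * ∑' m : ℕ, (a m * (r:ℂ) ^ m) • T ^ m)
        (𝓝[<] (1:ℝ)) (𝓝 (T ^ n * fT)) := hfT.const_mul _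
    refine spec_mem_of_tendsto hc hA ?_
    filter_upwards [hmem] with r hr using key n r hr
  -- Step 3: conclude
  have hbound : ∀ n : ℕ, ‖ftilde lam‖ ≤ ‖T ^ n * fT‖ := by
    intro n
    have := spectrum.norm_le_norm_of_mem (keyB n)
    rwa [norm_mul, norm_pow, hnl, one_pow, one_mul] at this
  have hle : ‖ftilde lam‖ ≤ 0 := ge_of_tendsto' hlim hbound
  exact norm_le_zero_iff.mp hle
end

section
/- Let f be holomorphic on 𝔻 with ∫₀¹ sup_{|θ|≤π} |f'(r e^{iθ})| dr < ∞. Then f is uniformly continuous on 𝔻, and hence extends to a continuous function on the closed unit disc. -/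
open MeasureTheory Metric
open scoped ENNReal

noncomputable def Sf (f : ℂ → ℂ) (r : ℝ) : ℝ≥0∞ :=
  ⨆ θ ∈ Set.Icc (-Real.pi) Real.pi,
    (‖deriv f ((r : ℂ) * Complex.exp ((θ : ℂ) * Complex.I))‖₊ : ℝ≥0∞)

lemma Sf_bound (f : ℂ → ℂ) (r : ℝ) (u : ℂ) (hu : ‖u‖ = 1) :
    (‖deriv f ((r:ℂ) * u)‖₊ : ℝ≥0∞) ≤ Sf f r := by
  have hθ : u.arg ∈ Set.Icc (-Real.pi) Real.pi :=
    ⟨(Complex.neg_pi_lt_arg u).le, Complex.arg_le_pi u⟩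
  have hexp : Complex.exp ((u.arg : ℂ) * Complex.I) = u := by
    have h := Complex.norm_mul_exp_arg_mul_I u
    have : ((‖u‖ : ℝ) : ℂ) = 1 := by
      rw [hu]; norm_num
    rwa [this, one_mul] at h
  calc (‖deriv f ((r:ℂ) * u)‖₊ : ℝ≥0∞)
      = (‖deriv f ((r:ℂ) * Complex.exp ((u.arg : ℂ) * Complex.I))‖₊ : ℝ≥0∞) := by rw [hexp]
    _ ≤ Sf f r := le_iSup₂ (f := fun θ (_ : θ ∈ Set.Icc (-Real.pi) Real.pi) =>
        (‖deriv f ((r:ℂ) * Complex.exp ((θ : ℂ) * Complex.I))‖₊ : ℝ≥0∞)) u.arg hθ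

lemma deriv_cont (f : ℂ → ℂ) (hf : ∀ z ∈ ball (0:ℂ) 1, DifferentiableAt ℂ f z) :
    ContinuousOn (deriv f) (ball (0:ℂ) 1) := by
  have hdo : DifferentiableOn ℂ f (ball (0:ℂ) 1) :=
    fun z hz => (hf z hz).differentiableWithinAt
  exact (hdo.analyticOnNhd isOpen_ball).deriv.continuousOn

lemma tail_small (f : ℂ → ℂ)
    (hB : (∫⁻ r in Set.Ioo (0:ℝ) 1, Sf f r) < ⊤) {ε : ℝ≥0∞} (hε : 0 < ε) :
    ∃ ρ : ℝ, 1/2 ≤ ρ ∧ ρ < 1 ∧ (∫⁻ r in Set.Ioo ρ 1, Sf f r) < ε := by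
  classical
  set p : ℕ → ℝ := fun n => 1 - (1/2 : ℝ)^(n+1) with hp
  have hplt : ∀ n, p n < 1 := by
    intro n; simp only [hp]; have : (0:ℝ) < (1/2:ℝ)^(n+1) := by positivity
    linarith
  have hphalf : ∀ n, 1/2 ≤ p n := by
    intro n; simp only [hp]
    have : (1/2:ℝ)^(n+1) ≤ (1/2:ℝ)^1 := by
      apply pow_le_pow_of_le_one (by norm_num) (by norm_num) (by omega)
    simp at this ⊢; linarith
  have hpmono : ∀ n, p n ≤ p (n+1) := by
    intro n; simp only [hp]
    have : (1/2:ℝ)^(n+1+1) ≤ (1/2:ℝ)^(n+1) :=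
      pow_le_pow_of_le_one (by norm_num) (by norm_num) (by omega)
    linarith
  set T : ℕ → ℝ≥0∞ := fun n => ∫⁻ r in Set.Ioc (p n) (p (n+1)), Sf f r with hT
  have hple : ∀ m n, m ≤ n → p m ≤ p n := by
    intro m n h
    induction n with
    | zero => simp_all
    | succ k ih =>
      rcases Nat.lt_or_ge m (k+1) with h'|h'
      · exact le_trans (ih (by omega)) (hpmono k)
      · have : m = k+1 := by omega
        simp [this]
  -- partial sums
  have hpart : ∀ N, ∑ n ∈ Finset.range N, T n = ∫⁻ r in Set.Ioc (p 0) (p N), Sf f r := by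
    intro N
    induction N with
    | zero => simp
    | succ k ih =>
      rw [Finset.sum_range_succ, ih, hT]
      rw [← MeasureTheory.lintegral_union measurableSet_Ioc]
      · rw [Set.Ioc_union_Ioc_eq_Ioc (hple 0 k (by omega)) (hpmono k)]
      · rw [Set.disjoint_left]
        rintro x ⟨_, hx2⟩ ⟨hx3, _⟩
        linarith
  have hbound : ∀ N, ∑ n ∈ Finset.range N, T n ≤ ∫⁻ r in Set.Ioo (0:ℝ) 1, Sf f r := by
    intro N
    rw [hpart]
    refine lintegral_mono' (Measure.restrict_mono ?_ le_rfl) le_rfl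
    intro x hx
    exact ⟨lt_of_lt_of_le (by norm_num) (le_trans (hphalf 0) hx.1.le), lt_of_le_of_lt hx.2 (hplt N)⟩
  have htsum : ∑' n, T n ≤ ∫⁻ r in Set.Ioo (0:ℝ) 1, Sf f r :=
    Summable.tsum_le_of_sum_range_le ENNReal.summable hbound
  have htne : ∑' n, T n ≠ ⊤ := (lt_of_le_of_lt htsum hB).ne
  have htail : Filter.Tendsto (fun N => ∑' k, T (k + N)) Filter.atTop (nhds 0) :=
    ENNReal.tendsto_sum_nat_add T htne
  obtain ⟨N, hN⟩ : ∃ N, ∑' k, T (k + N) < ε := by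
    exact (htail.eventually_lt_const hε).exists
  refine ⟨p N, hphalf N, hplt N, ?_⟩
  -- Ioo (p N) 1 ⊆ ⋃ k, Ioc (p (k+N)) (p (k+N+1))
  have hcover : Set.Ioo (p N) 1 ⊆ ⋃ k, Set.Ioc (p (k + N)) (p (k + N + 1)) := by
    intro x hx
    have hex : ∃ k, x ≤ p (k + N + 1) := by
      obtain ⟨m, hm⟩ := exists_pow_lt_of_lt_one (show (0:ℝ) < 1 - x by linarith [hx.2]) (by norm_num : (1/2:ℝ) < 1)
      refine ⟨m, ?_⟩
      have h2 : (1/2:ℝ)^(m + N + 1 + 1) ≤ (1/2:ℝ)^m :=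
        pow_le_pow_of_le_one (by norm_num) (by norm_num) (by omega)
      simp only [hp]
      nlinarith
    set k := Nat.find hex with hk
    have hk1 : x ≤ p (k + N + 1) := Nat.find_spec hex
    have hk0 : p (k + N) < x := by
      rcases Nat.eq_zero_or_pos k with h0|h0
      · rw [h0]; simpa using hx.1
      · have := Nat.find_min hex (m := k - 1) (by omega)
        push_neg at this
        have hkk : k - 1 + N + 1 = k + N := by omega
        rwa [hkk] at this
    exact Set.mem_iUnion.2 ⟨k, hk0, hk1⟩
  calc (∫⁻ r in Set.Ioo (p N) 1, Sf f r)
      ≤ ∫⁻ r in ⋃ k, Set.Ioc (p (k + N)) (p (k + N + 1)), Sf f r :=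
        lintegral_mono' (Measure.restrict_mono hcover le_rfl) le_rfl
    _ ≤ ∑' k, ∫⁻ r in Set.Ioc (p (k + N)) (p (k + N + 1)), Sf f r :=
        lintegral_iUnion_le _ _
    _ = ∑' k, T (k + N) := rfl
    _ < ε := hN
lemma radial_ftc (f : ℂ → ℂ)
    (hf : ∀ z ∈ ball (0:ℂ) 1, DifferentiableAt ℂ f z)
    (hd : ContinuousOn (deriv f) (ball (0:ℂ) 1))
    (u : ℂ) (hu : ‖u‖ = 1) {a b : ℝ} (ha : 0 < a) (hab : a ≤ b) (hb : b < 1) :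
    ‖f ((b:ℂ) * u) - f ((a:ℂ) * u)‖ ≤ ∫ t in a..b, ‖deriv f ((t:ℂ) * u)‖ := by
  have hmem : ∀ t : ℝ, t ∈ Set.uIcc a b → ((t:ℂ) * u) ∈ ball (0:ℂ) 1 := by
    intro t ht
    rw [Set.uIcc_of_le hab] at ht
    simp only [mem_ball, dist_zero_right, norm_mul, hu, mul_one, Complex.norm_real]
    rw [Real.norm_eq_abs, abs_of_pos (lt_of_lt_of_le ha ht.1)]
    exact lt_of_le_of_lt ht.2 hb
  have hder : ∀ t ∈ Set.uIcc a b,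
      HasDerivAt (fun s : ℝ => f ((s:ℂ) * u)) (deriv f ((t:ℂ) * u) * u) t := by
    intro t ht
    have h1 : HasDerivAt (fun z : ℂ => f (z * u)) (deriv f ((t:ℂ) * u) * u) (t:ℂ) := by
      have := ((hf _ (hmem t ht)).hasDerivAt).comp (t:ℂ) ((hasDerivAt_id ((t:ℂ))).mul_const u)
      simp only [one_mul] at this
      exact this
    exact h1.comp_ofReal
  have hcm : ContinuousOn (fun t : ℝ => deriv f ((t:ℂ) * u) * u) (Set.uIcc a b) := by
    apply ContinuousOn.mul _ continuousOn_const
    exact hd.comp ((Complex.continuous_ofReal.mul continuous_const).continuousOn) hmem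
  have hint : IntervalIntegrable (fun t : ℝ => deriv f ((t:ℂ) * u) * u) volume a b :=
    hcm.intervalIntegrable
  have heq := intervalIntegral.integral_eq_sub_of_hasDerivAt hder hint
  rw [← heq]
  calc ‖∫ t in a..b, deriv f ((t:ℂ) * u) * u‖
      ≤ ∫ t in a..b, ‖deriv f ((t:ℂ) * u) * u‖ :=
        intervalIntegral.norm_integral_le_integral_norm hab
    _ = ∫ t in a..b, ‖deriv f ((t:ℂ) * u)‖ := by
        simp [norm_mul, hu]

lemma proj_lip {ρ : ℝ} (hρ : 0 < ρ) {x y : ℂ} (hx : ρ ≤ ‖x‖) (hy : ρ ≤ ‖y‖) :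
    ‖(ρ:ℂ) * ((‖x‖:ℂ)⁻¹ * x) - (ρ:ℂ) * ((‖y‖:ℂ)⁻¹ * y)‖ ≤ 2 * ‖x - y‖ := by
  have hx0 : (0:ℝ) < ‖x‖ := lt_of_lt_of_le hρ hx
  have hy0 : (0:ℝ) < ‖y‖ := lt_of_lt_of_le hρ hy
  have hxc : ((‖x‖:ℝ):ℂ) ≠ 0 := by exact_mod_cast hx0.ne'
  have hyc : ((‖y‖:ℝ):ℂ) ≠ 0 := by exact_mod_cast hy0.ne'
  have key : (ρ:ℂ) * ((‖x‖:ℂ)⁻¹ * x) - (ρ:ℂ) * ((‖y‖:ℂ)⁻¹ * y)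
      = (ρ:ℂ) * (‖x‖:ℂ)⁻¹ * (x - y)
        + (ρ:ℂ) * (((‖y‖:ℂ) - (‖x‖:ℂ)) * ((‖x‖:ℂ)⁻¹ * (‖y‖:ℂ)⁻¹)) * y := by
    linear_combination (-(ρ:ℂ) * ((‖x‖:ℂ))⁻¹ * y) * (mul_inv_cancel₀ hyc)
      + ((ρ:ℂ) * ((‖y‖:ℂ))⁻¹ * y) * (mul_inv_cancel₀ hxc)
  rw [key]
  have habs : |‖y‖ - ‖x‖| ≤ ‖x - y‖ := by
    calc |‖y‖ - ‖x‖| ≤ ‖y - x‖ := abs_norm_sub_norm_le y x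
      _ = ‖x - y‖ := norm_sub_rev y x
  have h1 : ‖(ρ:ℂ) * (‖x‖:ℂ)⁻¹ * (x - y)‖ ≤ ‖x - y‖ := by
    simp only [norm_mul, norm_inv]
    simp only [Complex.norm_real, Real.norm_eq_abs, abs_of_pos hρ, abs_of_pos hx0]
    have hle : ρ * ‖x‖⁻¹ ≤ 1 := by
      rw [← div_eq_mul_inv, div_le_one hx0]; exact hx
    nlinarith [norm_nonneg (x - y)]
  have h2 : ‖(ρ:ℂ) * (((‖y‖:ℂ) - (‖x‖:ℂ)) * ((‖x‖:ℂ)⁻¹ * (‖y‖:ℂ)⁻¹)) * y‖ ≤ ‖x - y‖ := by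
    have hc : ((‖y‖:ℂ) - (‖x‖:ℂ)) = ((‖y‖ - ‖x‖ : ℝ) : ℂ) := by push_cast; ring
    rw [hc]
    simp only [norm_mul, norm_inv]
    simp only [Complex.norm_real, Real.norm_eq_abs, abs_of_pos hρ, abs_of_pos hx0,
      abs_of_pos hy0]
    have hle : ρ * ‖x‖⁻¹ ≤ 1 := by
      rw [← div_eq_mul_inv, div_le_one hx0]; exact hx
    have hyy : ‖y‖⁻¹ * ‖y‖ = 1 := inv_mul_cancel₀ hy0.ne'
    calc ρ * (|‖y‖ - ‖x‖| * (‖x‖⁻¹ * ‖y‖⁻¹)) * ‖y‖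
        = (ρ * ‖x‖⁻¹) * |‖y‖ - ‖x‖| * (‖y‖⁻¹ * ‖y‖) := by ring
      _ = (ρ * ‖x‖⁻¹) * |‖y‖ - ‖x‖| := by rw [hyy, mul_one]
      _ ≤ 1 * ‖x - y‖ := by
          apply mul_le_mul hle habs (abs_nonneg _) zero_le_one
      _ = ‖x - y‖ := one_mul _
  calc ‖(ρ:ℂ) * (‖x‖:ℂ)⁻¹ * (x - y)
        + (ρ:ℂ) * (((‖y‖:ℂ) - (‖x‖:ℂ)) * ((‖x‖:ℂ)⁻¹ * (‖y‖:ℂ)⁻¹)) * y‖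
      ≤ ‖(ρ:ℂ) * (‖x‖:ℂ)⁻¹ * (x - y)‖
        + ‖(ρ:ℂ) * (((‖y‖:ℂ) - (‖x‖:ℂ)) * ((‖x‖:ℂ)⁻¹ * (‖y‖:ℂ)⁻¹)) * y‖ := norm_add_le _ _
    _ ≤ 2 * ‖x - y‖ := by linarith

lemma radial_tail (f : ℂ → ℂ)
    (hf : ∀ z ∈ ball (0:ℂ) 1, DifferentiableAt ℂ f z)
    (hd : ContinuousOn (deriv f) (ball (0:ℂ) 1))
    {ρ : ℝ} (hρ0 : 0 < ρ) {z : ℂ} (hz1 : ρ ≤ ‖z‖) (hz2 : ‖z‖ < 1) :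
    ENNReal.ofReal ‖f z - f ((ρ:ℂ) * ((‖z‖:ℂ)⁻¹ * z))‖ ≤ ∫⁻ r in Set.Ioo ρ 1, Sf f r := by
  have hz0 : (0:ℝ) < ‖z‖ := lt_of_lt_of_le hρ0 hz1
  set u : ℂ := (‖z‖:ℂ)⁻¹ * z with hudef
  have hu : ‖u‖ = 1 := by
    rw [hudef, norm_mul, norm_inv, Complex.norm_real, Real.norm_eq_abs, abs_of_pos hz0,
      inv_mul_cancel₀ hz0.ne']
  have hzu : ((‖z‖ : ℝ):ℂ) * u = z := by
    rw [hudef, ← mul_assoc, mul_inv_cancel₀ (by exact_mod_cast hz0.ne' : ((‖z‖:ℝ):ℂ) ≠ 0), one_mul]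
  have hftc := radial_ftc f hf hd u hu hρ0 hz1 hz2
  rw [hzu] at hftc
  refine le_trans (ENNReal.ofReal_le_ofReal hftc) ?_
  rw [intervalIntegral.integral_of_le hz1]
  have hmaps : Set.MapsTo (fun t : ℝ => (t:ℂ) * u) (Set.Icc ρ ‖z‖) (ball (0:ℂ) 1) := by
    intro t ht
    simp only [mem_ball, dist_zero_right, norm_mul, hu, mul_one, Complex.norm_real,
      Real.norm_eq_abs]
    rw [abs_of_pos (lt_of_lt_of_le hρ0 ht.1)]
    exact lt_of_le_of_lt ht.2 hz2
  have hcont : ContinuousOn (fun t : ℝ => ‖deriv f ((t:ℂ) * u)‖) (Set.Icc ρ ‖z‖) :=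
    (hd.comp ((Complex.continuous_ofReal.mul continuous_const).continuousOn) hmaps).norm
  have hInt : IntegrableOn (fun t : ℝ => ‖deriv f ((t:ℂ) * u)‖) (Set.Ioc ρ ‖z‖) volume :=
    (hcont.integrableOn_Icc).mono_set Set.Ioc_subset_Icc_self
  rw [MeasureTheory.ofReal_integral_eq_lintegral_ofReal hInt
    (Filter.Eventually.of_forall (fun t => norm_nonneg _))]
  calc (∫⁻ t in Set.Ioc ρ ‖z‖, ENNReal.ofReal ‖deriv f ((t:ℂ) * u)‖)
      ≤ ∫⁻ t in Set.Ioc ρ ‖z‖, Sf f t := by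
        refine setLIntegral_mono' measurableSet_Ioc (fun t ht => ?_)
        rw [ofReal_norm]
        exact Sf_bound f t u hu
    _ ≤ ∫⁻ r in Set.Ioo ρ 1, Sf f r := by
        refine lintegral_mono' (Measure.restrict_mono ?_ le_rfl) le_rfl
        intro t ht
        exact ⟨ht.1, lt_of_le_of_lt ht.2 hz2⟩
lemma extend_lemma (f : ℂ → ℂ) (hUC : UniformContinuousOn f (ball (0:ℂ) 1)) :
    ∃ g : ℂ → ℂ, ContinuousOn g (closedBall (0:ℂ) 1) ∧ ∀ z ∈ ball (0:ℂ) 1, g z = f z := by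
  classical
  have hsub : ball (0:ℂ) 1 ⊆ closedBall (0:ℂ) 1 := ball_subset_closedBall
  have hue : IsUniformEmbedding (Set.inclusion hsub) := isUniformEmbedding_set_inclusion hsub
  have hdr : DenseRange (Set.inclusion hsub) := by
    rw [DenseRange, Set.range_inclusion, Subtype.dense_iff]
    intro x hx
    have hcl : closure (ball (0:ℂ) 1) = closedBall 0 1 := closure_ball 0 one_ne_zero
    have himg : (Subtype.val '' {x : closedBall (0:ℂ) 1 | ↑x ∈ ball (0:ℂ) 1}) = ball (0:ℂ) 1 := by
      ext w; constructor
      · rintro ⟨⟨w', hw'⟩, hmem, rfl⟩; exact hmem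
      · intro hw; exact ⟨⟨w, hsub hw⟩, hw, rfl⟩
    rw [himg, hcl]; exact hx
  have hf' : UniformContinuous ((ball (0:ℂ) 1).restrict f) :=
    uniformContinuousOn_iff_restrict.mp hUC
  set ψ := (hue.isUniformInducing.isDenseInducing hdr).extend ((ball (0:ℂ) 1).restrict f) with hψdef
  have hψ : Continuous ψ :=
    (uniformContinuous_uniformly_extend hue.isUniformInducing hdr hf').continuous
  refine ⟨fun z => if h : z ∈ closedBall (0:ℂ) 1 then ψ ⟨z, h⟩ else 0, ?_, ?_⟩
  · rw [continuousOn_iff_continuous_restrict]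
    have : (closedBall (0:ℂ) 1).restrict
        (fun z => if h : z ∈ closedBall (0:ℂ) 1 then ψ ⟨z, h⟩ else 0) = ψ := by
      funext x; exact dif_pos x.2
    convert hψ using 1
    exact this
  · intro z hz
    simp only [dif_pos (hsub hz)]
    exact (hue.isUniformInducing.isDenseInducing hdr).extend_eq hf'.continuous ⟨z, hz⟩

/-- A function in `𝓑(𝔻)` is uniformly continuous on `𝔻`, hence extends continuously
to the closed unit disc. -/
theorem besov_uniformly_continuous (f : ℂ → ℂ)
    (hf : ∀ z ∈ ball (0:ℂ) 1, DifferentiableAt ℂ f z)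
    (hB : besovNorm0 f < ⊤) :
    UniformContinuousOn f (ball (0:ℂ) 1) ∧
      ∃ g : ℂ → ℂ, ContinuousOn g (closedBall (0:ℂ) 1) ∧
        ∀ z ∈ ball (0:ℂ) 1, g z = f z := by

  have hd := deriv_cont f hf
  have hB' : (∫⁻ r in Set.Ioo (0:ℝ) 1, Sf f r) < ⊤ := hB
  have hUC : UniformContinuousOn f (ball (0:ℂ) 1) := by
    rw [Metric.uniformContinuousOn_iff]
    intro ε hε
    have hε4 : (0:ℝ) < ε/4 := by linarith
    obtain ⟨ρ, hρhalf, hρ1, hρtail⟩ :=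
      tail_small f hB' (ε := ENNReal.ofReal (ε/4)) (ENNReal.ofReal_pos.mpr hε4)
    have hρ0 : (0:ℝ) < ρ := lt_of_lt_of_le (by norm_num) hρhalf
    set ρ' : ℝ := (1+ρ)/2 with hρ'def
    have hρ'1 : ρ' < 1 := by rw [hρ'def]; linarith
    have hρρ' : ρ < ρ' := by rw [hρ'def]; linarith
    have hρ'0 : (0:ℝ) < ρ' := by rw [hρ'def]; linarith
    have hcb : closedBall (0:ℂ) ρ' ⊆ ball (0:ℂ) 1 := by
      intro w hw
      rw [mem_closedBall, dist_zero_right] at hw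
      rw [mem_ball, dist_zero_right]
      linarith
    have hfc : ContinuousOn f (closedBall (0:ℂ) ρ') :=
      fun z hz => (hf z (hcb hz)).continuousAt.continuousWithinAt
    have hucc := (isCompact_closedBall (0:ℂ) ρ').uniformContinuousOn_of_continuous hfc
    rw [Metric.uniformContinuousOn_iff] at hucc
    obtain ⟨δ₁, hδ₁0, hδ₁⟩ := hucc (ε/4) hε4
    refine ⟨min (δ₁/3) ((1-ρ')/2), lt_min (by linarith) (by linarith), ?_⟩
    intro x hx y hy hxy
    rw [mem_ball, dist_zero_right] at hx hy
    have hxyn : dist x y = ‖x - y‖ := dist_eq_norm x y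
    rcases le_or_gt (max ‖x‖ ‖y‖) ρ' with hcase|hcase
    · have hx' : x ∈ closedBall (0:ℂ) ρ' := by
        rw [mem_closedBall, dist_zero_right]; exact le_trans (le_max_left _ _) hcase
      have hy' : y ∈ closedBall (0:ℂ) ρ' := by
        rw [mem_closedBall, dist_zero_right]; exact le_trans (le_max_right _ _) hcase
      have := hδ₁ x hx' y hy'
        (lt_of_lt_of_le hxy (le_trans (min_le_left _ _) (by linarith)))
      linarith
    · have hdist : ‖x - y‖ < (1-ρ')/2 := by
        rw [← hxyn]; exact lt_of_lt_of_le hxy (min_le_right _ _)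
      have hnsx : ‖y‖ - ‖x‖ ≤ ‖x - y‖ := by
        calc ‖y‖ - ‖x‖ ≤ ‖y - x‖ := norm_sub_norm_le y x
          _ = ‖x - y‖ := norm_sub_rev y x
      have hnsy : ‖x‖ - ‖y‖ ≤ ‖x - y‖ := norm_sub_norm_le x y
      have hbx : ρ ≤ ‖x‖ := by
        rcases le_total ‖x‖ ‖y‖ with h|h
        · rw [max_eq_right h] at hcase; linarith
        · rw [max_eq_left h] at hcase; linarith
      have hby : ρ ≤ ‖y‖ := by
        rcases le_total ‖x‖ ‖y‖ with h|h
        · rw [max_eq_right h] at hcase; linarith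
        · rw [max_eq_left h] at hcase; linarith
      have hx0 : (0:ℝ) < ‖x‖ := lt_of_lt_of_le hρ0 hbx
      have hy0 : (0:ℝ) < ‖y‖ := lt_of_lt_of_le hρ0 hby
      set x' : ℂ := (ρ:ℂ) * ((‖x‖:ℂ)⁻¹ * x) with hx'def
      set y' : ℂ := (ρ:ℂ) * ((‖y‖:ℂ)⁻¹ * y) with hy'def
      have hnx' : ‖x'‖ = ρ := by
        rw [hx'def, norm_mul, norm_mul, norm_inv, Complex.norm_real, Complex.norm_real,
          Real.norm_eq_abs, Real.norm_eq_abs, abs_of_pos hρ0, abs_of_pos hx0,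
          inv_mul_cancel₀ hx0.ne', mul_one]
      have hny' : ‖y'‖ = ρ := by
        rw [hy'def, norm_mul, norm_mul, norm_inv, Complex.norm_real, Complex.norm_real,
          Real.norm_eq_abs, Real.norm_eq_abs, abs_of_pos hρ0, abs_of_pos hy0,
          inv_mul_cancel₀ hy0.ne', mul_one]
      have hx'cb : x' ∈ closedBall (0:ℂ) ρ' := by
        rw [mem_closedBall, dist_zero_right, hnx']; linarith
      have hy'cb : y' ∈ closedBall (0:ℂ) ρ' := by
        rw [mem_closedBall, dist_zero_right, hny']; linarith
      have hlip : ‖x' - y'‖ ≤ 2 * ‖x - y‖ := proj_lip hρ0 hbx hby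
      have hmid : dist (f x') (f y') < ε/4 := by
        refine hδ₁ x' hx'cb y' hy'cb ?_
        rw [dist_eq_norm]
        have h2 : ‖x - y‖ < δ₁/3 := by
          rw [← hxyn]; exact lt_of_lt_of_le hxy (min_le_left _ _)
        calc ‖x' - y'‖ ≤ 2 * ‖x - y‖ := hlip
          _ < δ₁ := by linarith
      have htx : ‖f x - f x'‖ < ε/4 := by
        have h := lt_of_le_of_lt (radial_tail f hf hd hρ0 hbx hx) hρtail
        rw [hx'def]
        exact (ENNReal.ofReal_lt_ofReal_iff hε4).mp h
      have hty : ‖f y - f y'‖ < ε/4 := by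
        have h := lt_of_le_of_lt (radial_tail f hf hd hρ0 hby hy) hρtail
        rw [hy'def]
        exact (ENNReal.ofReal_lt_ofReal_iff hε4).mp h
      calc dist (f x) (f y)
          ≤ dist (f x) (f x') + dist (f x') (f y') + dist (f y') (f y) :=
            dist_triangle4 _ _ _ _
        _ < ε := by
            rw [dist_eq_norm, dist_eq_norm (f y')]
            have hrev : ‖f y' - f y‖ = ‖f y - f y'‖ := norm_sub_rev _ _
            linarith
  exact ⟨hUC, extend_lemma f hUC⟩
end

section
/- Let f ∈ 𝓑(𝔻) and, for 0 < r < 1, define f_r(z) := f(rz) for z ∈ 𝔻. Then f_r ∈ 𝓑(𝔻) and lim_{r→1−} ‖f_r − f‖_𝓑 = 0, i.e. sup_{z∈𝔻} |f(rz) − f(z)| + ∫₀¹ sup_{|θ|≤π} |r f'(r s e^{iθ}) − f'(s e^{iθ})| ds → 0 as r → 1−. -/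
open MeasureTheory Metric Filter
open scoped ENNReal Topology

section BesovAux

open Set

/-- The integrand appearing in the Besov-norm difference of the dilation. -/
noncomputable def besovF (f : ℂ → ℂ) (r s : ℝ) : ℝ≥0∞ :=
  ⨆ θ ∈ Set.Icc (-Real.pi) Real.pi,
    (‖(r : ℂ) * deriv f ((r : ℂ) * ((s : ℂ) * Complex.exp ((θ : ℂ) * Complex.I)))
      - deriv f ((s : ℂ) * Complex.exp ((θ : ℂ) * Complex.I))‖₊ : ℝ≥0∞)

/-- Variant of `besovF` where the supremum is over an arbitrary set of angles. -/
noncomputable def besovFD (f : ℂ → ℂ) (D : Set ℝ) (r s : ℝ) : ℝ≥0∞ :=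
  ⨆ θ ∈ D,
    (‖(r : ℂ) * deriv f ((r : ℂ) * ((s : ℂ) * Complex.exp ((θ : ℂ) * Complex.I)))
      - deriv f ((s : ℂ) * Complex.exp ((θ : ℂ) * Complex.I))‖₊ : ℝ≥0∞)

lemma exists_angle_dense :
    ∃ D : Set ℝ, D.Countable ∧ D ⊆ Icc (-Real.pi) Real.pi ∧
      ∀ v : ℝ → ℝ≥0∞, ContinuousOn v (Icc (-Real.pi) Real.pi) →
        (⨆ θ ∈ Icc (-Real.pi) Real.pi, v θ) = ⨆ θ ∈ D, v θ := by
  obtain ⟨D, hsub, hcnt, hdense⟩ :=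
    (TopologicalSpace.IsSeparable.of_separableSpace
      (Icc (-Real.pi) Real.pi)).exists_countable_dense_subset
  refine ⟨D, hcnt, hsub, fun v hv => le_antisymm (iSup₂_le fun θ hθ => ?_)
    (iSup₂_le fun θ hθ => le_iSup₂_of_le θ (hsub hθ) le_rfl)⟩
  have h1 : v θ ∈ closure (v '' D) :=
    ContinuousWithinAt.mem_closure_image ((hv θ hθ).mono hsub) (hdense hθ)
  have h2 : closure (v '' D) ⊆ Iic (⨆ θ ∈ D, v θ) := by
    apply closure_minimal _ isClosed_Iic
    rintro y ⟨θ', hθ', rfl⟩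
    exact mem_Iic.mpr (le_iSup₂_of_le θ' hθ' le_rfl)
  exact h2 h1

variable {f : ℂ → ℂ}

lemma besov_analytic (hf : ∀ z ∈ ball (0:ℂ) 1, DifferentiableAt ℂ f z) :
    AnalyticOnNhd ℂ f (ball (0:ℂ) 1) :=
  DifferentiableOn.analyticOnNhd (fun z hz => (hf z hz).differentiableWithinAt) isOpen_ball

lemma besov_deriv_cont (hf : ∀ z ∈ ball (0:ℂ) 1, DifferentiableAt ℂ f z) :
    ContinuousOn (deriv f) (ball (0:ℂ) 1) :=
  (besov_analytic hf).deriv.continuousOn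

lemma besov_deriv_diff (hf : ∀ z ∈ ball (0:ℂ) 1, DifferentiableAt ℂ f z) :
    DifferentiableOn ℂ (deriv f) (ball (0:ℂ) 1) :=
  (besov_analytic hf).deriv.differentiableOn

lemma circle_norm (s θ : ℝ) : ‖(s:ℂ) * Complex.exp ((θ:ℂ) * Complex.I)‖ = |s| := by
  rw [norm_mul, Complex.norm_real, Real.norm_eq_abs,
    Complex.norm_exp_ofReal_mul_I, mul_one]

/-- Maximum-modulus estimate: values of `deriv f` inside the disc of radius `s` are
bounded by the supremum over the circle of radius `s`. -/
lemma besov_maxmod (hf : ∀ z ∈ ball (0:ℂ) 1, DifferentiableAt ℂ f z)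
    {s : ℝ} (h0 : 0 < s) (h1 : s < 1) {w : ℂ} (hw : ‖w‖ ≤ s) :
    (‖deriv f w‖₊ : ℝ≥0∞) ≤
      ⨆ θ ∈ Icc (-Real.pi) Real.pi,
        (‖deriv f ((s:ℂ) * Complex.exp ((θ:ℂ) * Complex.I))‖₊ : ℝ≥0∞) := by
  have hsub : sphere (0:ℂ) s ⊆ ball (0:ℂ) 1 := fun z hz => by
    rw [mem_sphere_zero_iff_norm] at hz
    rw [mem_ball_zero_iff, hz]; exact h1
  obtain ⟨x, hx, hmax⟩ := (isCompact_sphere (0:ℂ) s).exists_isMaxOn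
    (NormedSpace.sphere_nonempty.mpr h0.le)
    (((besov_deriv_cont hf).mono hsub).norm)
  have hwx : ‖deriv f w‖ ≤ ‖deriv f x‖ := by
    refine Complex.norm_le_of_forall_mem_frontier_norm_le (U := ball (0:ℂ) s)
      isBounded_ball ?_ ?_ ?_
    · apply DifferentiableOn.diffContOnCl
      rw [closure_ball (0:ℂ) h0.ne']
      exact (besov_deriv_diff hf).mono (closedBall_subset_ball h1)
    · intro z hz
      rw [frontier_ball (0:ℂ) h0.ne'] at hz
      exact hmax hz
    · rw [closure_ball (0:ℂ) h0.ne']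
      exact mem_closedBall_zero_iff.mpr hw
  have hxs : ‖x‖ = s := mem_sphere_zero_iff_norm.mp hx
  have hxe : (s:ℂ) * Complex.exp ((x.arg : ℂ) * Complex.I) = x := by
    have h := Complex.norm_mul_exp_arg_mul_I x
    rwa [hxs] at h
  calc (‖deriv f w‖₊ : ℝ≥0∞) ≤ (‖deriv f x‖₊ : ℝ≥0∞) := by exact_mod_cast hwx
    _ ≤ _ := le_iSup₂_of_le x.arg ⟨(Complex.neg_pi_lt_arg x).le, Complex.arg_le_pi x⟩
        (by rw [hxe])

lemma besov_part1 (hf : ∀ z ∈ ball (0:ℂ) 1, DifferentiableAt ℂ f z)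
    (hdc : ContinuousOn (deriv f) (ball (0:ℂ) 1))
    (r : ℝ) (hr0 : 0 < r) (hr1 : r < 1) :
    besovNorm0 (fun z => f ((r : ℂ) * z)) < ⊤ := by
  obtain ⟨C, hC⟩ := (isCompact_closedBall (0:ℂ) r).exists_bound_of_continuousOn
    (hdc.mono (closedBall_subset_ball hr1))
  have key : ∀ s ∈ Ioo (0:ℝ) 1,
      (⨆ θ ∈ Icc (-Real.pi) Real.pi,
        (‖deriv (fun z => f ((r:ℂ) * z)) ((s:ℂ) * Complex.exp ((θ:ℂ) * Complex.I))‖₊ : ℝ≥0∞))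
      ≤ ENNReal.ofReal C := by
    intro s hs
    refine iSup₂_le fun θ hθ => ?_
    set w := (s:ℂ) * Complex.exp ((θ:ℂ) * Complex.I) with hw
    have hwn : ‖w‖ = s := by rw [hw, circle_norm, abs_of_pos hs.1]
    have hrw : (r:ℂ) * w ∈ ball (0:ℂ) 1 := by
      rw [mem_ball_zero_iff, norm_mul, Complex.norm_real, Real.norm_eq_abs, hwn,
        abs_of_pos hr0]
      nlinarith [hs.1, hs.2]
    have hd : HasDerivAt (fun z => f ((r:ℂ) * z)) (deriv f ((r:ℂ) * w) * (r:ℂ)) w := by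
      have hinner : HasDerivAt (fun z : ℂ => (r:ℂ) * z) (r:ℂ) w := by
        simpa using (hasDerivAt_id w).const_mul (r:ℂ)
      exact HasDerivAt.comp w ((hf _ hrw).hasDerivAt) hinner
    rw [hd.deriv, ← enorm_eq_nnnorm, ← ofReal_norm]
    apply ENNReal.ofReal_le_ofReal
    have h1 : ‖deriv f ((r:ℂ) * w)‖ ≤ C := by
      apply hC
      rw [mem_closedBall_zero_iff, norm_mul, Complex.norm_real, Real.norm_eq_abs, hwn,
        abs_of_pos hr0]
      nlinarith [hs.1, hs.2]
    have h2 : ‖(r:ℂ)‖ ≤ 1 := by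
      rw [Complex.norm_real, Real.norm_eq_abs, abs_of_pos hr0]; exact hr1.le
    calc ‖deriv f ((r:ℂ) * w) * (r:ℂ)‖ = ‖deriv f ((r:ℂ) * w)‖ * ‖(r:ℂ)‖ := norm_mul _ _
      _ ≤ C * 1 := by
          apply mul_le_mul h1 h2 (norm_nonneg _)
          exact (norm_nonneg _).trans h1
      _ = C := mul_one C
  unfold besovNorm0
  calc (∫⁻ s in Ioo (0:ℝ) 1, ⨆ θ ∈ Icc (-Real.pi) Real.pi,
        (‖deriv (fun z => f ((r:ℂ) * z)) ((s:ℂ) * Complex.exp ((θ:ℂ) * Complex.I))‖₊ : ℝ≥0∞))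
      ≤ ∫⁻ _ in Ioo (0:ℝ) 1, ENNReal.ofReal C := setLIntegral_mono' measurableSet_Ioo key
    _ < ⊤ := by
        rw [setLIntegral_const]
        exact ENNReal.mul_lt_top ENNReal.ofReal_lt_top (by simp [Real.volume_Ioo])

lemma tail_tendsto (g : ℝ → ℝ≥0∞)
    (hfin : ∫⁻ s in Ioo (0:ℝ) 1, g s < ⊤) :
    Tendsto (fun r : ℝ => ∫⁻ s in Ioo r 1, g s) (𝓝[<] (1:ℝ)) (𝓝 0) := by
  set μ := (volume.restrict (Ioo (0:ℝ) 1)).withDensity g with hμ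
  have happly : ∀ r : ℝ, 0 ≤ r → μ (Ioi r) = ∫⁻ s in Ioo r 1, g s := by
    intro r hr
    rw [hμ, withDensity_apply _ measurableSet_Ioi, Measure.restrict_restrict measurableSet_Ioi]
    have hset : Ioi r ∩ Ioo 0 1 = Ioo r 1 := by
      ext x
      simp only [mem_inter_iff, mem_Ioi, mem_Ioo]
      constructor
      · rintro ⟨h1, _, h3⟩; exact ⟨h1, h3⟩
      · rintro ⟨h1, h2⟩; exact ⟨h1, lt_of_le_of_lt hr h1, h2⟩
    rw [hset]
  have hfin0 : μ (Ioi 0) ≠ ⊤ := by rw [happly 0 le_rfl]; exact hfin.ne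
  rw [ENNReal.tendsto_nhds_zero]
  intro ε hε
  have hseq : Tendsto (fun n : ℕ => μ (Ioi (1 - 1/(n+1 : ℝ)))) atTop
      (𝓝 (μ (⋂ n : ℕ, Ioi (1 - 1/(n+1 : ℝ))))) := by
    have := tendsto_measure_iInter_atTop (μ := μ) (s := fun n : ℕ => Ioi (1 - 1/(n+1 : ℝ)))
      (fun n => measurableSet_Ioi.nullMeasurableSet)
      (fun m n hmn => Ioi_subset_Ioi (by
        have h1 : (0:ℝ) < m + 1 := by positivity
        have h2 : (m:ℝ) + 1 ≤ n + 1 := by exact_mod_cast Nat.succ_le_succ hmn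
        have := one_div_le_one_div_of_le h1 h2
        linarith))
      ⟨0, by
        refine ne_top_of_le_ne_top hfin0 (measure_mono (Ioi_subset_Ioi ?_))
        norm_num⟩
    exact this
  have hiInter : (⋂ n : ℕ, Ioi (1 - 1/(n+1 : ℝ))) = Ici 1 := by
    ext x
    simp only [mem_iInter, mem_Ioi, mem_Ici]
    constructor
    · intro h
      by_contra hx
      push_neg at hx
      obtain ⟨n, hn⟩ := exists_nat_one_div_lt (sub_pos.2 hx)
      have := h n
      linarith
    · intro hx n
      have : (0:ℝ) < 1/(n+1 : ℝ) := by positivity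
      linarith
  have h0 : μ (Ici 1) = 0 := by
    rw [hμ, withDensity_apply _ measurableSet_Ici, Measure.restrict_restrict measurableSet_Ici]
    have he : Ici (1:ℝ) ∩ Ioo 0 1 = ∅ := by
      ext x
      simp only [mem_inter_iff, mem_Ici, mem_Ioo, mem_empty_iff_false, iff_false, not_and]
      intro h1 h2
      linarith [h2]
    rw [he]
    simp
  rw [hiInter, h0] at hseq
  obtain ⟨n, hn⟩ := (ENNReal.tendsto_nhds_zero.mp hseq ε hε).exists
  have hr₀ : (1 - 1/(n+1 : ℝ)) < 1 := by
    have : (0:ℝ) < 1/(n+1 : ℝ) := by positivity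
    linarith
  filter_upwards [Ioo_mem_nhdsLT_of_mem (show (1:ℝ) ∈ Ioc (max 0 (1 - 1/(n+1:ℝ))) 1 from
    ⟨max_lt one_pos hr₀, le_rfl⟩)] with r hr
  have hr0 : 0 ≤ r := le_of_lt (lt_of_le_of_lt (le_max_left _ _) hr.1)
  rw [← happly r hr0]
  refine le_trans (measure_mono (Ioi_subset_Ioi ?_)) hn
  exact le_of_lt (lt_of_le_of_lt (le_max_right _ _) hr.1)

lemma ftc_bound (hf : ∀ z ∈ ball (0:ℂ) 1, DifferentiableAt ℂ f z)
    (hdc : ContinuousOn (deriv f) (ball (0:ℂ) 1))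
    (g' : ℝ → ℝ≥0∞) (hg'm : Measurable g')
    (hmax : ∀ t : ℝ, 0 < t → t < 1 → ∀ w : ℂ, ‖w‖ ≤ t → (‖deriv f w‖₊ : ℝ≥0∞) ≤ g' t)
    {r : ℝ} (hr : r ∈ Ioo (0:ℝ) 1)
    (hfin : ∫⁻ s in Ioo r 1, g' s ≠ ⊤)
    {z : ℂ} (hz : z ∈ ball (0:ℂ) 1) :
    ‖f ((r:ℂ) * z) - f z‖ ≤ (∫⁻ s in Ioo r 1, g' s).toReal := by
  rw [mem_ball_zero_iff] at hz
  have hball : ∀ t : ℝ, |t| ≤ 1 → ((t:ℂ) * z) ∈ ball (0:ℂ) 1 := by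
    intro t ht
    rw [mem_ball_zero_iff, norm_mul, Complex.norm_real, Real.norm_eq_abs]
    calc |t| * ‖z‖ ≤ 1 * ‖z‖ := mul_le_mul_of_nonneg_right ht (norm_nonneg _)
      _ = ‖z‖ := one_mul _
      _ < 1 := hz
  have habs : ∀ t : ℝ, t ∈ uIcc r 1 → |t| ≤ 1 := by
    intro t ht
    rw [uIcc_of_le hr.2.le] at ht
    rw [abs_of_nonneg (le_trans hr.1.le ht.1)]
    exact ht.2
  have hderiv : ∀ t ∈ uIcc r 1,
      HasDerivAt (fun t : ℝ => f ((t:ℂ) * z)) (deriv f ((t:ℂ) * z) * z) t := by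
    intro t ht
    have hinner : HasDerivAt (fun t : ℝ => (t:ℂ) * z) z t := by
      simpa using (Complex.ofRealCLM.hasDerivAt (x := t)).mul_const z
    exact HasDerivAt.comp t ((hf _ (hball t (habs t ht))).hasDerivAt) hinner
  have hcont' : ContinuousOn (fun t : ℝ => deriv f ((t:ℂ) * z) * z) (uIcc r 1) := by
    apply ContinuousOn.mul _ continuousOn_const
    exact hdc.comp ((Complex.continuous_ofReal.mul continuous_const).continuousOn)
      (fun t ht => hball t (habs t ht))
  have hint : IntervalIntegrable (fun t : ℝ => deriv f ((t:ℂ) * z) * z) volume r 1 :=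
    hcont'.intervalIntegrable
  have hFTC : ∫ t in r..1, deriv f ((t:ℂ) * z) * z
      = f (((1:ℝ):ℂ) * z) - f (((r:ℝ):ℂ) * z) :=
    intervalIntegral.integral_eq_sub_of_hasDerivAt hderiv hint
  have h1 : ‖f ((r:ℂ) * z) - f z‖ = ‖∫ t in r..1, deriv f ((t:ℂ) * z) * z‖ := by
    rw [hFTC]
    simp [norm_sub_rev]
  rw [h1]
  have h2 : ‖∫ t in r..1, deriv f ((t:ℂ) * z) * z‖
      ≤ ∫ t in r..1, ‖deriv f ((t:ℂ) * z) * z‖ :=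
    intervalIntegral.norm_integral_le_integral_norm hr.2.le
  refine le_trans h2 ?_
  rw [intervalIntegral.integral_of_le hr.2.le]
  have hmeas : AEStronglyMeasurable (fun t : ℝ => deriv f ((t:ℂ) * z) * z)
      (volume.restrict (Ioc r 1)) :=
    (hcont'.mono (by rw [uIcc_of_le hr.2.le]; exact Ioc_subset_Icc_self)).aestronglyMeasurable
      measurableSet_Ioc
  rw [integral_eq_lintegral_of_nonneg_ae (Eventually.of_forall fun t => norm_nonneg _)
    hmeas.norm]
  apply ENNReal.toReal_mono hfin
  rw [← Measure.restrict_congr_set Ioo_ae_eq_Ioc]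
  apply setLIntegral_mono hg'm
  intro t ht
  rw [ofReal_norm, enorm_eq_nnnorm]
  calc (‖deriv f ((t:ℂ) * z) * z‖₊ : ℝ≥0∞)
      ≤ (‖deriv f ((t:ℂ) * z)‖₊ : ℝ≥0∞) := by
        rw [nnnorm_mul, ENNReal.coe_mul]
        apply mul_le_of_le_one_right zero_le
        rw [ENNReal.coe_le_one_iff]
        exact le_of_lt (by exact_mod_cast hz)
    _ ≤ g' t := hmax t (lt_trans hr.1 ht.1) ht.2 _ (by
        rw [norm_mul, Complex.norm_real, Real.norm_eq_abs, abs_of_pos (lt_trans hr.1 ht.1)]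
        calc t * ‖z‖ ≤ t * 1 := mul_le_mul_of_nonneg_left hz.le (le_of_lt (lt_trans hr.1 ht.1))
          _ = t := mul_one t)

lemma pointwise_sup_tendsto (f : ℂ → ℂ)
    (hdc : ContinuousOn (deriv f) (ball (0:ℂ) 1))
    {s : ℝ} (hs : s ∈ Ioo (0:ℝ) 1) :
    Tendsto (fun r : ℝ => besovF f r s) (𝓝[<] (1:ℝ)) (𝓝 0) := by
  set Φ : ℝ × ℝ → ℂ := fun p =>
    (p.1:ℂ) * deriv f ((p.1:ℂ) * ((s:ℂ) * Complex.exp ((p.2:ℂ) * Complex.I))) with hΦ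
  set K : Set (ℝ × ℝ) := Icc (0:ℝ) 1 ×ˢ Icc (-Real.pi) Real.pi with hK
  have hΦc : ContinuousOn Φ K := by
    apply ContinuousOn.mul
    · exact (Complex.continuous_ofReal.comp continuous_fst).continuousOn
    · apply hdc.comp
      · apply Continuous.continuousOn
        apply Continuous.mul (Complex.continuous_ofReal.comp continuous_fst)
        apply Continuous.mul continuous_const
        exact Complex.continuous_exp.comp
          ((Complex.continuous_ofReal.comp continuous_snd).mul continuous_const)
      · rintro ⟨a, θ⟩ ⟨ha, hθ⟩
        rw [mem_ball_zero_iff, norm_mul, Complex.norm_real, Real.norm_eq_abs,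
          circle_norm, abs_of_nonneg ha.1, abs_of_pos hs.1]
        nlinarith [hs.1, hs.2, ha.1, ha.2]
  have hKc : IsCompact K := isCompact_Icc.prod isCompact_Icc
  have hΦu := hKc.uniformContinuousOn_of_continuous hΦc
  rw [Metric.uniformContinuousOn_iff] at hΦu
  rw [ENNReal.tendsto_nhds_zero]
  intro ε hε
  obtain ⟨ε', hε'pos, hε'le⟩ : ∃ ε' : ℝ, 0 < ε' ∧ ENNReal.ofReal ε' ≤ ε := by
    rcases eq_or_ne ε ⊤ with h | h
    · exact ⟨1, one_pos, h ▸ le_top⟩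
    · exact ⟨ε.toReal, ENNReal.toReal_pos hε.ne' h, by rw [ENNReal.ofReal_toReal h]⟩
  obtain ⟨δ, hδ, hΦδ⟩ := hΦu ε' hε'pos
  filter_upwards [Ioo_mem_nhdsLT_of_mem (show (1:ℝ) ∈ Ioc (max 0 (1-δ)) 1 from
    ⟨max_lt one_pos (by linarith), le_rfl⟩)] with r hr
  refine le_trans (iSup₂_le fun θ hθ => ?_) hε'le
  have h1 : ((r, θ) : ℝ × ℝ) ∈ K :=
    ⟨⟨(le_max_left 0 (1-δ)).trans hr.1.le, hr.2.le⟩, hθ⟩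
  have h2 : ((1, θ) : ℝ × ℝ) ∈ K := ⟨⟨zero_le_one, le_rfl⟩, hθ⟩
  have hdist : dist ((r, θ) : ℝ × ℝ) ((1, θ) : ℝ × ℝ) < δ := by
    rw [Prod.dist_eq]
    simp only [dist_self, Real.dist_eq]
    rw [max_lt_iff]
    constructor
    · rw [abs_sub_lt_iff]
      constructor <;> [linarith [hr.2]; linarith [lt_of_le_of_lt (le_max_right 0 (1-δ)) hr.1]]
    · exact hδ
  have hlt := hΦδ _ h1 _ h2 hdist
  rw [← enorm_eq_nnnorm, ← ofReal_norm]
  apply ENNReal.ofReal_le_ofReal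
  have hΦ1 : Φ (1, θ) = deriv f ((s:ℂ) * Complex.exp ((θ:ℂ) * Complex.I)) := by
    simp [hΦ]
  have hd : dist (Φ (r, θ)) (Φ (1, θ)) < ε' := hlt
  rw [dist_eq_norm, hΦ1] at hd
  exact hd.le

end BesovAux

/-- For `f ∈ 𝓑(𝔻)`, the dilations `f_r(z) := f(rz)` belong to `𝓑(𝔻)` and
`‖f_r − f‖_𝓑 → 0` as `r → 1−`. -/
theorem besov_dilation_approx (f : ℂ → ℂ)
    (hf : ∀ z ∈ ball (0:ℂ) 1, DifferentiableAt ℂ f z)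
    (hB : besovNorm0 f < ⊤) :
    (∀ r : ℝ, 0 < r → r < 1 → besovNorm0 (fun z => f ((r : ℂ) * z)) < ⊤) ∧
    Tendsto (fun r : ℝ =>
        (⨆ z : ball (0:ℂ) 1, ‖f ((r : ℂ) * (z : ℂ)) - f (z : ℂ)‖) +
        (∫⁻ s in Set.Ioo (0:ℝ) 1,
          ⨆ θ ∈ Set.Icc (-Real.pi) Real.pi,
            (‖(r : ℂ) * deriv f ((r : ℂ) * ((s : ℂ) * Complex.exp ((θ : ℂ) * Complex.I)))
              - deriv f ((s : ℂ) * Complex.exp ((θ : ℂ) * Complex.I))‖₊ : ℝ≥0∞)).toReal)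
      (nhdsWithin 1 (Set.Iio 1)) (nhds 0) := by
  open Set in
  have hdc : ContinuousOn (deriv f) (ball (0:ℂ) 1) := besov_deriv_cont hf
  obtain ⟨D, hDc, hDsub, hDsup⟩ := exists_angle_dense
  -- continuity of `deriv f` along continuous paths in the disc
  have hdcc : ∀ c : ℝ → ℂ, Continuous c → (∀ θ, c θ ∈ ball (0:ℂ) 1) →
      Continuous fun θ => deriv f (c θ) := by
    intro c hc hcb
    refine continuous_iff_continuousAt.2 fun θ => ?_
    exact (hdc.continuousAt (isOpen_ball.mem_nhds (hcb θ))).comp hc.continuousAt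
  have hcircle : ∀ s : ℝ, 0 ≤ s → s < 1 → ∀ θ : ℝ,
      (s:ℂ) * Complex.exp ((θ:ℂ) * Complex.I) ∈ ball (0:ℂ) 1 := by
    intro s h0 h1 θ
    rw [mem_ball_zero_iff, circle_norm, abs_of_nonneg h0]
    exact h1
  set g : ℝ → ℝ≥0∞ := fun s => ⨆ θ ∈ Set.Icc (-Real.pi) Real.pi,
      (‖deriv f ((s:ℂ) * Complex.exp ((θ:ℂ) * Complex.I))‖₊ : ℝ≥0∞) with hgdef
  set g' : ℝ → ℝ≥0∞ := fun s => ⨆ θ ∈ D,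
      (‖deriv f ((s:ℂ) * Complex.exp ((θ:ℂ) * Complex.I))‖₊ : ℝ≥0∞) with hg'def
  have hgg' : ∀ s : ℝ, 0 ≤ s → s < 1 → g s = g' s := by
    intro s h0 h1
    apply hDsup
    apply Continuous.continuousOn
    exact ENNReal.continuous_coe.comp
      (Continuous.nnnorm (hdcc _ (continuous_const.mul (Complex.continuous_exp.comp
        (Complex.continuous_ofReal.mul continuous_const))) (hcircle s h0 h1)))
  have hg'm : Measurable g' := by
    apply Measurable.biSup D hDc
    intro θ hθ
    exact ((measurable_deriv f).comp
      ((Complex.continuous_ofReal.mul continuous_const).measurable)).nnnorm.coe_nnreal_ennreal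
  have hmaxg' : ∀ t : ℝ, 0 < t → t < 1 → ∀ w : ℂ, ‖w‖ ≤ t →
      (‖deriv f w‖₊ : ℝ≥0∞) ≤ g' t := by
    intro t h0 h1 w hw
    rw [← hgg' t h0.le h1]
    exact besov_maxmod hf h0 h1 hw
  have hBf : ∫⁻ s in Set.Ioo (0:ℝ) 1, g' s = besovNorm0 f := by
    unfold besovNorm0
    exact setLIntegral_congr_fun measurableSet_Ioo
      (fun s hs => (hgg' s hs.1.le hs.2).symm)
  have hfin' : ∫⁻ s in Set.Ioo (0:ℝ) 1, g' s < ⊤ := by rw [hBf]; exact hB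
  constructor
  · exact fun r hr0 hr1 => besov_part1 hf hdc r hr0 hr1
  haveI : Nonempty ↥(ball (0:ℂ) 1) := ⟨⟨0, mem_ball_self one_pos⟩⟩
  have htail := tail_tendsto g' hfin'
  -- the sup term tends to zero
  have hS : Tendsto (fun r : ℝ => ⨆ z : ball (0:ℂ) 1, ‖f ((r:ℂ) * (z:ℂ)) - f (z:ℂ)‖)
      (𝓝[<] (1:ℝ)) (𝓝 0) := by
    have hE : Tendsto (fun r : ℝ => (∫⁻ s in Set.Ioo r 1, g' s).toReal)
        (𝓝[<] (1:ℝ)) (𝓝 0) := by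
      have h := (ENNReal.tendsto_toReal ENNReal.zero_ne_top).comp htail
      simpa [Function.comp_def] using h
    apply squeeze_zero'
      (Filter.Eventually.of_forall fun r => Real.iSup_nonneg fun z => norm_nonneg _) _ hE
    filter_upwards [Ioo_mem_nhdsLT_of_mem
      (show (1:ℝ) ∈ Set.Ioc (0:ℝ) 1 from ⟨one_pos, le_rfl⟩)] with r hr
    apply ciSup_le
    intro z
    have hfinr : ∫⁻ s in Set.Ioo r 1, g' s ≠ ⊤ :=
      ne_top_of_le_ne_top hfin'.ne (lintegral_mono_set (Set.Ioo_subset_Ioo hr.1.le le_rfl))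
    exact ftc_bound hf hdc g' hg'm hmaxg' hr hfinr z.2
  -- the integral term tends to zero
  have hFD_meas : ∀ r : ℝ, Measurable (besovFD f D r) := by
    intro r
    apply Measurable.biSup D hDc
    intro θ hθ
    apply Measurable.coe_nnreal_ennreal
    apply Measurable.nnnorm
    apply Measurable.sub
    · exact measurable_const.mul ((measurable_deriv f).comp
        ((continuous_const.mul (Complex.continuous_ofReal.mul continuous_const)).measurable))
    · exact (measurable_deriv f).comp
        ((Complex.continuous_ofReal.mul continuous_const).measurable)
  have hFle : ∀ r s : ℝ, besovFD f D r s ≤ besovF f r s := by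
    intro r s
    exact biSup_mono fun θ hθ => hDsub hθ
  have hdomF : ∀ r ∈ Set.Ioo (0:ℝ) 1, ∀ s ∈ Set.Ioo (0:ℝ) 1,
      besovF f r s ≤ g' s + g' s := by
    intro r hr s hs
    refine iSup₂_le fun θ hθ => ?_
    set a := (r:ℂ) * deriv f ((r:ℂ) * ((s:ℂ) * Complex.exp ((θ:ℂ) * Complex.I))) with ha
    set b := deriv f ((s:ℂ) * Complex.exp ((θ:ℂ) * Complex.I)) with hb
    calc (‖a - b‖₊ : ℝ≥0∞) ≤ (‖a‖₊ : ℝ≥0∞) + (‖b‖₊ : ℝ≥0∞) := by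
          rw [← ENNReal.coe_add]
          exact ENNReal.coe_le_coe.2 (nnnorm_sub_le a b)
      _ ≤ g' s + g' s := by
          apply add_le_add
          · have hale : (‖a‖₊ : ℝ≥0∞)
                ≤ (‖deriv f ((r:ℂ) * ((s:ℂ) * Complex.exp ((θ:ℂ) * Complex.I)))‖₊ : ℝ≥0∞) := by
              rw [ha, nnnorm_mul, ENNReal.coe_mul]
              apply mul_le_of_le_one_left zero_le
              rw [ENNReal.coe_le_one_iff]
              have : ‖(r:ℂ)‖ ≤ 1 := by
                rw [Complex.norm_real, Real.norm_eq_abs, abs_of_pos hr.1]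
                exact hr.2.le
              exact_mod_cast this
            refine hale.trans (hmaxg' s hs.1 hs.2 _ ?_)
            rw [norm_mul, Complex.norm_real, Real.norm_eq_abs, circle_norm,
              abs_of_pos hr.1, abs_of_pos hs.1]
            nlinarith [hr.1, hr.2, hs.1, hs.2]
          · exact hmaxg' s hs.1 hs.2 _ (by rw [circle_norm, abs_of_pos hs.1])
  have hFeq : ∀ r ∈ Set.Ioo (0:ℝ) 1, ∀ s ∈ Set.Ioo (0:ℝ) 1,
      besovF f r s = besovFD f D r s := by
    intro r hr s hs
    apply hDsup
    apply Continuous.continuousOn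
    apply ENNReal.continuous_coe.comp
    apply Continuous.nnnorm
    apply Continuous.sub
    · apply continuous_const.mul
      apply hdcc _ (continuous_const.mul (continuous_const.mul
        (Complex.continuous_exp.comp (Complex.continuous_ofReal.mul continuous_const))))
      intro θ
      simp only [Pi.mul_apply, Function.comp_apply]
      rw [mem_ball_zero_iff, norm_mul, Complex.norm_real, Real.norm_eq_abs, circle_norm,
        abs_of_pos hr.1, abs_of_pos hs.1]
      nlinarith [hr.1, hr.2, hs.1, hs.2]
    · exact hdcc _ (continuous_const.mul (Complex.continuous_exp.comp
        (Complex.continuous_ofReal.mul continuous_const))) (hcircle s hs.1.le hs.2)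
  have hFDlim : ∀ s ∈ Set.Ioo (0:ℝ) 1,
      Tendsto (fun r : ℝ => besovFD f D r s) (𝓝[<] (1:ℝ)) (𝓝 0) := by
    intro s hs
    exact tendsto_of_tendsto_of_tendsto_of_le_of_le tendsto_const_nhds
      (pointwise_sup_tendsto f hdc hs) (fun r => zero_le) (fun r => hFle r s)
  have hDCT : Tendsto (fun r : ℝ => ∫⁻ s in Set.Ioo (0:ℝ) 1, besovFD f D r s)
      (𝓝[<] (1:ℝ)) (𝓝 0) := by
    have h := tendsto_lintegral_filter_of_dominated_convergence
      (μ := volume.restrict (Set.Ioo (0:ℝ) 1)) (f := fun _ : ℝ => (0:ℝ≥0∞))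
      (F := fun r : ℝ => besovFD f D r) (l := 𝓝[<] (1:ℝ)) (fun s => g' s + g' s)
      (Filter.Eventually.of_forall hFD_meas)
      (by
        filter_upwards [Ioo_mem_nhdsLT_of_mem
          (show (1:ℝ) ∈ Set.Ioc (0:ℝ) 1 from ⟨one_pos, le_rfl⟩)] with r hr
        filter_upwards [ae_restrict_mem measurableSet_Ioo] with s hs
        exact (hFle r s).trans (hdomF r hr s hs))
      (by
        rw [lintegral_add_left hg'm]
        exact (ENNReal.add_lt_top.2 ⟨hfin', hfin'⟩).ne)
      (by
        filter_upwards [ae_restrict_mem measurableSet_Ioo] with s hs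
        exact hFDlim s hs)
    simpa using h
  have hT : Tendsto (fun r : ℝ => (∫⁻ s in Set.Ioo (0:ℝ) 1, besovF f r s).toReal)
      (𝓝[<] (1:ℝ)) (𝓝 0) := by
    have h2 := (ENNReal.tendsto_toReal ENNReal.zero_ne_top).comp hDCT
    simp only [Function.comp_def, ENNReal.toReal_zero] at h2
    apply h2.congr'
    filter_upwards [Ioo_mem_nhdsLT_of_mem
      (show (1:ℝ) ∈ Set.Ioc (0:ℝ) 1 from ⟨one_pos, le_rfl⟩)] with r hr
    congr 1
    exact setLIntegral_congr_fun measurableSet_Ioo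
      (fun s hs => (hFeq r hr s hs).symm)
  have hfinal := hS.add hT
  rw [add_zero] at hfinal
  exact hfinal
end

section
/- Let f and g be holomorphic on 𝔻, with ‖f‖_{𝓑₀} := ∫₀¹ sup_{|θ|≤π} |f'(r e^{iθ})| dr < ∞ and ‖g‖_{𝓔₀} := sup_{0<r<1} (1−r) ∫_{−π}^{π} |g'(r e^{iθ})| dθ < ∞. Then ∫_𝔻 log(1/|z|) |f'(z)| |g'(conj(z))| dA(z) ≤ ‖g‖_{𝓔₀} ‖f‖_{𝓑₀}; in particular the pairing ⟨g,f⟩_𝓑 := ∫_𝔻 log(1/|z|) f'(z) g'(conj(z)) dA(z) is absolutely convergent. -/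
open MeasureTheory Metric
open scoped ENNReal

/-- The seminorm `‖g‖_{𝓔₀} = sup_{0<r<1} (1−r) ∫_{−π}^{π} |g'(r e^{iθ})| dθ`. -/
noncomputable def eNorm0 (g : ℂ → ℂ) : ℝ≥0∞ :=
  ⨆ r ∈ Set.Ioo (0:ℝ) 1, ENNReal.ofReal (1 - r) *
    ∫⁻ θ in Set.Ioo (-Real.pi) Real.pi,
      (‖deriv g ((r : ℂ) * Complex.exp ((θ : ℂ) * Complex.I))‖₊ : ℝ≥0∞)

open Set Real

private lemma polar_det_aux (p : ℝ × ℝ) :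
    ((LinearMap.toContinuousLinearMap (Matrix.toLin (Module.Basis.finTwoProd ℝ) (Module.Basis.finTwoProd ℝ)
      !![Real.cos p.2, -p.1 * Real.sin p.2;
         Real.sin p.2, p.1 * Real.cos p.2])) : (ℝ × ℝ) →L[ℝ] (ℝ × ℝ)).det = p.1 := by
  conv_rhs => rw [← one_mul p.1, ← Real.cos_sq_add_sin_sq p.2]
  simp only [neg_mul, LinearMap.det_toContinuousLinearMap, LinearMap.det_toLin,
    Matrix.det_fin_two_of, sub_neg_eq_add]
  ring

/-- Polar-coordinates change of variables for the lower Lebesgue integral over the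
unit disc in `ℝ × ℝ`. -/
private lemma lintegral_polar_aux (F : ℝ × ℝ → ℝ≥0∞) :
    ∫⁻ p in {q : ℝ × ℝ | Real.sqrt (q.1 ^ 2 + q.2 ^ 2) < 1}, F p
      = ∫⁻ p in Ioo (0:ℝ) 1 ×ˢ Ioo (-π) π,
          ENNReal.ofReal p.1 * F (polarCoord.symm p) := by
  set s : Set (ℝ × ℝ) := Ioo (0:ℝ) 1 ×ˢ Ioo (-π) π with hs
  set D : Set (ℝ × ℝ) := {q : ℝ × ℝ | Real.sqrt (q.1 ^ 2 + q.2 ^ 2) < 1} with hD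
  have hsub : s ⊆ polarCoord.target := by
    rintro ⟨r, θ⟩ ⟨hr, hθ⟩
    exact ⟨hr.1, hθ⟩
  have himg : polarCoord.symm '' s = polarCoord.source ∩ D := by
    ext q
    constructor
    · rintro ⟨⟨r, θ⟩, ⟨hr, hθ⟩, rfl⟩
      refine ⟨polarCoord.map_target (hsub ⟨hr, hθ⟩), ?_⟩
      have h1 : (r * Real.cos θ) ^ 2 + (r * Real.sin θ) ^ 2 = r ^ 2 := by
        have := Real.sin_sq_add_cos_sq θ; nlinarith
      show Real.sqrt ((r * Real.cos θ) ^ 2 + (r * Real.sin θ) ^ 2) < 1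
      rw [h1, Real.sqrt_sq hr.1.le]
      exact hr.2
    · rintro ⟨hq, hqD⟩
      refine ⟨polarCoord q, ?_, polarCoord.left_inv hq⟩
      have ht := polarCoord.map_source hq
      rw [polarCoord_target] at ht
      exact ⟨⟨ht.1, hqD⟩, ht.2⟩
  have hnull : volume (polarCoord.sourceᶜ) = 0 :=
    MeasureTheory.ae_eq_univ.mp polarCoord_source_ae_eq_univ
  have haeeq : D =ᵐ[volume] (polarCoord.source ∩ D : Set (ℝ × ℝ)) := by
    rw [MeasureTheory.ae_eq_set]
    constructor
    · apply measure_mono_null _ hnull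
      intro x hx
      simp only [Set.mem_diff, Set.mem_inter_iff, Set.mem_compl_iff] at hx ⊢
      tauto
    · apply measure_mono_null _ hnull
      intro x hx
      simp only [Set.mem_diff, Set.mem_inter_iff, Set.mem_compl_iff] at hx ⊢
      tauto
  have hsmeas : MeasurableSet s := measurableSet_Ioo.prod measurableSet_Ioo
  calc ∫⁻ p in D, F p = ∫⁻ p in polarCoord.symm '' s, F p := by
        rw [himg]; exact setLIntegral_congr haeeq
    _ = ∫⁻ p in s, ENNReal.ofReal
          |((LinearMap.toContinuousLinearMap (Matrix.toLin (Module.Basis.finTwoProd ℝ)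
              (Module.Basis.finTwoProd ℝ)
              !![Real.cos p.2, -p.1 * Real.sin p.2;
                 Real.sin p.2, p.1 * Real.cos p.2])) : (ℝ × ℝ) →L[ℝ] (ℝ × ℝ)).det|
          * F (polarCoord.symm p) := by
        apply lintegral_image_eq_lintegral_abs_det_fderiv_mul volume hsmeas
          (fun p _ => (hasFDerivAt_polarCoord_symm p).hasFDerivWithinAt)
          (polarCoord.symm.injOn.mono hsub) F
    _ = ∫⁻ p in s, ENNReal.ofReal p.1 * F (polarCoord.symm p) := by
        apply setLIntegral_congr_fun hsmeas
        intro p hp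
        dsimp only
        rw [polar_det_aux, abs_of_pos hp.1.1]

set_option maxHeartbeats 2000000 in
/-- Polar-coordinates change of variables for the lower Lebesgue integral over the
unit disc in `ℂ`. -/
private lemma lintegral_polar_ball (F : ℂ → ℝ≥0∞) :
    ∫⁻ z in ball (0:ℂ) 1, F z
      = ∫⁻ p in Ioo (0:ℝ) 1 ×ˢ Ioo (-π) π,
          ENNReal.ofReal p.1 * F ((p.1 : ℂ) * Complex.exp ((p.2 : ℂ) * Complex.I)) := by
  have h1 := (Complex.volume_preserving_equiv_real_prod.symm).setLIntegral_comp_preimage_emb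
      Complex.measurableEquivRealProd.symm.measurableEmbedding F (ball (0:ℂ) 1)
  rw [← h1]
  have hpre : Complex.measurableEquivRealProd.symm ⁻¹' ball (0:ℂ) 1
      = {q : ℝ × ℝ | Real.sqrt (q.1 ^ 2 + q.2 ^ 2) < 1} := by
    ext ⟨x, y⟩
    simp only [Set.mem_preimage, mem_ball_zero_iff, Complex.measurableEquivRealProd_symm_apply,
      Set.mem_setOf_eq, Complex.norm_def, Complex.normSq_mk]
    ring_nf
  rw [hpre, lintegral_polar_aux (fun q => F (Complex.measurableEquivRealProd.symm q))]
  apply setLIntegral_congr_fun (measurableSet_Ioo.prod measurableSet_Ioo)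
  intro p _
  dsimp only
  congr 1
  congr 1
  show Complex.measurableEquivRealProd.symm (p.1 * Real.cos p.2, p.1 * Real.sin p.2)
      = (p.1 : ℂ) * Complex.exp ((p.2 : ℂ) * Complex.I)
  rw [Complex.measurableEquivRealProd_symm_apply, Complex.exp_mul_I]
  apply Complex.ext <;>
    simp [Complex.cos_ofReal_re, Complex.sin_ofReal_re, Complex.add_re, Complex.add_im,
      Complex.mul_re, Complex.mul_im, Complex.ofReal_re, Complex.ofReal_im,
      Complex.cos_ofReal_im, Complex.sin_ofReal_im, Complex.I_re, Complex.I_im]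

set_option maxHeartbeats 2000000 in
/-- The partial duality between `𝓑(𝔻)` and `𝓔(𝔻)`:
`∫_𝔻 log(1/|z|) |f'(z)| |g'(z̄)| dA(z) ≤ ‖g‖_{𝓔₀} ‖f‖_{𝓑₀}`; in particular the pairing
`⟨g,f⟩_𝓑 = ∫_𝔻 log(1/|z|) f'(z) g'(z̄) dA(z)` is absolutely convergent. -/
theorem besov_duality_estimate (f g : ℂ → ℂ)
    (hf : ∀ z ∈ ball (0:ℂ) 1, DifferentiableAt ℂ f z)
    (hg : ∀ z ∈ ball (0:ℂ) 1, DifferentiableAt ℂ g z)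
    (hfB : besovNorm0 f < ⊤) (hgE : eNorm0 g < ⊤) :
    (∫⁻ z in ball (0:ℂ) 1,
        ENNReal.ofReal (Real.log (1 / ‖z‖)) * ‖deriv f z‖₊ * ‖deriv g ((starRingEnd ℂ) z)‖₊)
      ≤ eNorm0 g * besovNorm0 f ∧
    IntegrableOn
      (fun z : ℂ => Real.log (1 / ‖z‖) • (deriv f z * deriv g ((starRingEnd ℂ) z)))
      (ball (0:ℂ) 1) := by
  have hdf : Measurable (deriv f) := measurable_deriv f
  have hdg : Measurable (deriv g) := measurable_deriv g
  have hdgc : Measurable (fun z : ℂ => deriv g ((starRingEnd ℂ) z)) :=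
    hdg.comp continuous_star.measurable
  set F : ℂ → ℝ≥0∞ := fun z =>
    ENNReal.ofReal (Real.log (1 / ‖z‖)) * ‖deriv f z‖₊ * ‖deriv g ((starRingEnd ℂ) z)‖₊ with hFdef
  have hFmeas : Measurable F := by
    apply Measurable.fun_mul
    apply Measurable.fun_mul
    · exact ENNReal.measurable_ofReal.comp
        (Real.measurable_log.comp (measurable_const.div continuous_norm.measurable))
    · exact hdf.nnnorm.coe_nnreal_ennreal
    · exact hdgc.nnnorm.coe_nnreal_ennreal
  set Mf : ℝ → ℝ≥0∞ := fun r =>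
    ⨆ θ ∈ Set.Icc (-π) π,
      (‖deriv f ((r : ℂ) * Complex.exp ((θ : ℂ) * Complex.I))‖₊ : ℝ≥0∞) with hMf
  have key : (∫⁻ z in ball (0:ℂ) 1, F z) ≤ eNorm0 g * besovNorm0 f := by
    rw [lintegral_polar_ball F]
    have hGmeas : Measurable (fun p : ℝ × ℝ =>
        ENNReal.ofReal p.1 * F ((p.1 : ℂ) * Complex.exp ((p.2 : ℂ) * Complex.I))) := by
      apply Measurable.fun_mul
      · exact ENNReal.measurable_ofReal.comp measurable_fst
      · apply hFmeas.comp
        apply Measurable.fun_mul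
        · exact Complex.measurable_ofReal.comp measurable_fst
        · exact (Complex.continuous_exp.comp
            ((Complex.continuous_ofReal.comp continuous_snd).mul continuous_const)).measurable
    rw [show (volume : Measure (ℝ × ℝ)) = (volume : Measure ℝ).prod volume from
      Measure.volume_eq_prod ℝ ℝ, ← Measure.prod_restrict,
      lintegral_prod _ hGmeas.aemeasurable]
    have inner_bound : ∀ r ∈ Ioo (0:ℝ) 1,
        (∫⁻ θ in Ioo (-π) π,
          ENNReal.ofReal r * F ((r : ℂ) * Complex.exp ((θ : ℂ) * Complex.I)))
          ≤ eNorm0 g * Mf r := by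
      intro r hr
      have hnorm : ∀ θ : ℝ, ‖(r : ℂ) * Complex.exp ((θ : ℂ) * Complex.I)‖ = r := by
        intro θ
        rw [norm_mul, Complex.norm_exp_ofReal_mul_I, Complex.norm_real, Real.norm_eq_abs,
          abs_of_pos hr.1, mul_one]
      have hconj : ∀ θ : ℝ, (starRingEnd ℂ) ((r : ℂ) * Complex.exp ((θ : ℂ) * Complex.I))
          = (r : ℂ) * Complex.exp (((-θ : ℝ) : ℂ) * Complex.I) := by
        intro θ
        rw [map_mul, Complex.conj_ofReal, ← Complex.exp_conj, map_mul, Complex.conj_ofReal,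
          Complex.conj_I]
        push_cast
        ring_nf
      have hlog : ENNReal.ofReal r * ENNReal.ofReal (Real.log (1 / r))
          ≤ ENNReal.ofReal (1 - r) := by
        rw [← ENNReal.ofReal_mul hr.1.le]
        apply ENNReal.ofReal_le_ofReal
        have h1 : Real.log (1 / r) ≤ 1 / r - 1 :=
          Real.log_le_sub_one_of_pos (one_div_pos.mpr hr.1)
        have hr0 : 0 < r := hr.1
        have h2 : r * Real.log (1 / r) ≤ r * (1 / r - 1) :=
          mul_le_mul_of_nonneg_left h1 hr0.le
        calc r * Real.log (1 / r) ≤ r * (1 / r - 1) := h2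
          _ = 1 - r := by field_simp
      have hMfle : ∀ θ ∈ Ioo (-π) π,
          (‖deriv f ((r : ℂ) * Complex.exp ((θ : ℂ) * Complex.I))‖₊ : ℝ≥0∞) ≤ Mf r := by
        intro θ hθ
        simp only [hMf]
        exact le_biSup
          (fun θ : ℝ => (‖deriv f ((r : ℂ) * Complex.exp ((θ : ℂ) * Complex.I))‖₊ : ℝ≥0∞))
          (Ioo_subset_Icc_self hθ)
      have hpt : ∀ θ ∈ Ioo (-π) π,
          ENNReal.ofReal r * F ((r : ℂ) * Complex.exp ((θ : ℂ) * Complex.I))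
            ≤ (ENNReal.ofReal (1 - r) * Mf r) *
              ‖deriv g ((r : ℂ) * Complex.exp (((-θ : ℝ) : ℂ) * Complex.I))‖₊ := by
        intro θ hθ
        rw [hFdef]
        simp only
        rw [hnorm θ, hconj θ]
        calc ENNReal.ofReal r * (ENNReal.ofReal (Real.log (1 / r)) *
              ‖deriv f ((r : ℂ) * Complex.exp ((θ : ℂ) * Complex.I))‖₊ *
              ‖deriv g ((r : ℂ) * Complex.exp (((-θ : ℝ) : ℂ) * Complex.I))‖₊)
            = ((ENNReal.ofReal r * ENNReal.ofReal (Real.log (1 / r))) *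
              ‖deriv f ((r : ℂ) * Complex.exp ((θ : ℂ) * Complex.I))‖₊) *
              ‖deriv g ((r : ℂ) * Complex.exp (((-θ : ℝ) : ℂ) * Complex.I))‖₊ := by
              ring
          _ ≤ _ := mul_le_mul' (mul_le_mul' hlog (hMfle θ hθ)) le_rfl
      have hneg : (∫⁻ θ in Ioo (-π) π,
          (‖deriv g ((r : ℂ) * Complex.exp (((-θ : ℝ) : ℂ) * Complex.I))‖₊ : ℝ≥0∞))
          = ∫⁻ θ in Ioo (-π) π,
            (‖deriv g ((r : ℂ) * Complex.exp ((θ : ℂ) * Complex.I))‖₊ : ℝ≥0∞) := by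
        have h := (Measure.measurePreserving_neg (volume : Measure ℝ)).setLIntegral_comp_preimage_emb
          (Homeomorph.neg ℝ).measurableEmbedding
          (fun θ : ℝ => (‖deriv g ((r : ℂ) * Complex.exp ((θ : ℂ) * Complex.I))‖₊ : ℝ≥0∞))
          (Ioo (-π) π)
        have hps : (Neg.neg : ℝ → ℝ) ⁻¹' Ioo (-π) π = Ioo (-π) π := by
          ext x
          simp only [Set.mem_preimage, Set.mem_Ioo]
          constructor <;> rintro ⟨h1, h2⟩ <;> constructor <;> linarith
        rw [hps] at h
        exact h
      calc (∫⁻ θ in Ioo (-π) π,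
              ENNReal.ofReal r * F ((r : ℂ) * Complex.exp ((θ : ℂ) * Complex.I)))
          ≤ ∫⁻ θ in Ioo (-π) π, (ENNReal.ofReal (1 - r) * Mf r) *
              ‖deriv g ((r : ℂ) * Complex.exp (((-θ : ℝ) : ℂ) * Complex.I))‖₊ := by
            apply lintegral_mono_ae
            filter_upwards [ae_restrict_mem measurableSet_Ioo] with θ hθ
            exact hpt θ hθ
        _ = (ENNReal.ofReal (1 - r) * Mf r) * ∫⁻ θ in Ioo (-π) π,
              (‖deriv g ((r : ℂ) * Complex.exp (((-θ : ℝ) : ℂ) * Complex.I))‖₊ : ℝ≥0∞) := by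
            apply lintegral_const_mul
            exact (hdg.comp (continuous_const.mul (Complex.continuous_exp.comp
              ((Complex.continuous_ofReal.comp continuous_neg).mul
                continuous_const))).measurable).nnnorm.coe_nnreal_ennreal
        _ = (ENNReal.ofReal (1 - r) * Mf r) * ∫⁻ θ in Ioo (-π) π,
              (‖deriv g ((r : ℂ) * Complex.exp ((θ : ℂ) * Complex.I))‖₊ : ℝ≥0∞) := by
            rw [hneg]
        _ = Mf r * (ENNReal.ofReal (1 - r) * ∫⁻ θ in Ioo (-π) π,
              (‖deriv g ((r : ℂ) * Complex.exp ((θ : ℂ) * Complex.I))‖₊ : ℝ≥0∞)) := by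
            ring
        _ ≤ Mf r * eNorm0 g := by
            apply mul_le_mul' le_rfl
            exact le_biSup
              (fun r => ENNReal.ofReal (1 - r) * ∫⁻ θ in Ioo (-π) π,
                (‖deriv g ((r : ℂ) * Complex.exp ((θ : ℂ) * Complex.I))‖₊ : ℝ≥0∞)) hr
        _ = eNorm0 g * Mf r := mul_comm _ _
    calc (∫⁻ r in Ioo (0:ℝ) 1, ∫⁻ θ in Ioo (-π) π,
            ENNReal.ofReal r * F ((r : ℂ) * Complex.exp ((θ : ℂ) * Complex.I)))
        ≤ ∫⁻ r in Ioo (0:ℝ) 1, eNorm0 g * Mf r := by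
          apply lintegral_mono_ae
          filter_upwards [ae_restrict_mem measurableSet_Ioo] with r hr
          exact inner_bound r hr
      _ = eNorm0 g * besovNorm0 f := by
          rw [lintegral_const_mul' _ _ hgE.ne]
          rfl
  refine ⟨key, ?_⟩
  have hlognn : ∀ z ∈ ball (0:ℂ) 1, 0 ≤ Real.log (1 / ‖z‖) := by
    intro z hz
    rcases eq_or_lt_of_le (norm_nonneg z) with h0 | h0
    · rw [← h0]
      simp
    · exact Real.log_nonneg (one_le_one_div h0 (mem_ball_zero_iff.mp hz).le)
  constructor
  · apply Measurable.aestronglyMeasurable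
    apply Measurable.fun_smul
    · exact Real.measurable_log.comp (measurable_const.div continuous_norm.measurable)
    · exact hdf.mul hdgc
  · rw [HasFiniteIntegral]
    have heq : ∫⁻ z in ball (0:ℂ) 1,
        (‖Real.log (1 / ‖z‖) • (deriv f z * deriv g ((starRingEnd ℂ) z))‖₊ : ℝ≥0∞)
        = ∫⁻ z in ball (0:ℂ) 1, F z := by
      apply setLIntegral_congr_fun measurableSet_ball
      intro z hz
      rw [hFdef]
      simp only
      rw [nnnorm_smul, nnnorm_mul]
      push_cast
      rw [← Real.enorm_eq_ofReal (hlognn z hz)]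
      rw [enorm_eq_nnnorm]
      ring
    exact lt_of_le_of_lt (le_of_eq heq |>.trans key) (ENNReal.mul_lt_top hgE hfB)
end

section
/- Let 0 < r < 1 and let h : [−π,π] → ℂ be essentially bounded and measurable. Define G(w) := ∫_{−π}^{π} h(θ) (1 − w r e^{−iθ})^{−2} dθ for w ∈ 𝔻. Then G is holomorphic on 𝔻, G ∈ 𝓑(𝔻), and ‖G‖_𝓑 ≤ 6π (1−r)^{−1} ‖h‖_{L^∞}. -/
open MeasureTheory Metric
open scoped ENNReal

open Set


lemma poisson_denom_pos (ρ : ℝ) (h0 : 0 ≤ ρ) (h1 : ρ < 1) (θ : ℝ) :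
    0 < 1 + ρ^2 - 2*ρ*Real.cos θ := by
  nlinarith [Real.cos_le_one θ, Real.neg_one_le_cos θ, sq_nonneg (1 - ρ)]

lemma poisson_aux (ρ : ℝ) (h0 : 0 ≤ ρ) (h1 : ρ < 1) (θ : ℝ)
    (hθ : θ ∈ Set.Ioo (-Real.pi) Real.pi) :
    HasDerivAt (fun t => (2/(1-ρ^2)) * Real.arctan (((1+ρ)/(1-ρ)) * Real.tan (t/2)))
      ((1 + ρ^2 - 2*ρ*Real.cos θ)⁻¹) θ := by
  have hcpos : 0 < Real.cos (θ/2) := by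
    apply Real.cos_pos_of_mem_Ioo
    constructor <;> [linarith [hθ.1]; linarith [hθ.2]]
  have hc : Real.cos (θ/2) ≠ 0 := ne_of_gt hcpos
  have htan : HasDerivAt (fun t : ℝ => Real.tan (t/2)) (1/Real.cos (θ/2)^2 * (1/2)) θ := by
    have h2 : HasDerivAt (fun t : ℝ => t/2) (1/2) θ := (hasDerivAt_id θ).div_const 2
    exact (Real.hasDerivAt_tan hc).comp θ h2
  have hmul : HasDerivAt (fun t : ℝ => ((1+ρ)/(1-ρ)) * Real.tan (t/2))
      (((1+ρ)/(1-ρ)) * (1/Real.cos (θ/2)^2 * (1/2))) θ := htan.const_mul _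
  have harc := (Real.hasDerivAt_arctan (((1+ρ)/(1-ρ)) * Real.tan (θ/2))).comp θ hmul
  have hfull := harc.const_mul (2/(1-ρ^2))
  refine hfull.congr_deriv ?_
  symm
  have hρ1 : (1:ℝ) - ρ ≠ 0 := by linarith
  have hρ2 : (1:ℝ) - ρ^2 ≠ 0 := by nlinarith
  have hd : 1 + ρ^2 - 2*ρ*Real.cos θ ≠ 0 := ne_of_gt (poisson_denom_pos ρ h0 h1 θ)
  have hcosθ : Real.cos θ = 2 * Real.cos (θ/2)^2 - 1 := by
    have := Real.cos_two_mul (θ/2)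
    rw [show 2*(θ/2) = θ by ring] at this
    linarith
  have hsin : Real.sin (θ/2)^2 = 1 - Real.cos (θ/2)^2 := by
    nlinarith [Real.sin_sq_add_cos_sq (θ/2)]
  rw [Real.tan_eq_sin_div_cos]
  field_simp
  rw [div_eq_iff (by intro hh; apply hd; linarith), hcosθ]
  linear_combination ((1-ρ^2)*(1+ρ)^2) * hsin

lemma poisson_cont (ρ : ℝ) (h0 : 0 ≤ ρ) (h1 : ρ < 1) :
    Continuous (fun θ : ℝ => (1 + ρ^2 - 2*ρ*Real.cos θ)⁻¹) :=
  Continuous.inv₀ (by continuity) (fun θ => ne_of_gt (poisson_denom_pos ρ h0 h1 θ))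

lemma poisson_int (ρ : ℝ) (h0 : 0 ≤ ρ) (h1 : ρ < 1) :
    ∫ θ in Set.Ioo (-Real.pi) Real.pi, (1 + ρ^2 - 2*ρ*Real.cos θ)⁻¹
      ≤ 2*Real.pi/(1-ρ^2) := by
  have hπ := Real.pi_pos
  have hρ2 : (0:ℝ) < 1 - ρ^2 := by nlinarith
  set g : ℝ → ℝ := fun θ => (1 + ρ^2 - 2*ρ*Real.cos θ)⁻¹ with hg
  have hgc := poisson_cont ρ h0 h1
  have hInt : IntegrableOn g (Set.Ioo (-Real.pi) Real.pi) :=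
    (hgc.integrableOn_Icc).mono_set Set.Ioo_subset_Icc_self
  set s : ℕ → Set ℝ := fun n => Set.Icc (-Real.pi + Real.pi/(n+1)) (Real.pi - Real.pi/(n+1)) with hs
  have hmono : Monotone s := by
    intro n m hnm
    apply Set.Icc_subset_Icc
    · have : Real.pi/(m+1) ≤ Real.pi/(n+1) := by
        apply div_le_div_of_nonneg_left hπ.le (by positivity) (by exact_mod_cast by omega)
      linarith
    · have : Real.pi/(m+1) ≤ Real.pi/(n+1) := by
        apply div_le_div_of_nonneg_left hπ.le (by positivity) (by exact_mod_cast by omega)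
      linarith
  have hUnion : (⋃ n, s n) = Set.Ioo (-Real.pi) Real.pi := by
    ext x
    simp only [Set.mem_iUnion, Set.mem_Icc, Set.mem_Ioo, hs]
    constructor
    · rintro ⟨n, h1', h2'⟩
      have hp : 0 < Real.pi/(n+1:ℝ) := by positivity
      constructor <;> linarith
    · rintro ⟨h1', h2'⟩
      have hδ : 0 < min (x + Real.pi) (Real.pi - x) := by
        simp only [lt_min_iff]; constructor <;> linarith
      obtain ⟨n, hn⟩ := exists_nat_one_div_lt (div_pos hδ hπ)
      refine ⟨n, ?_, ?_⟩ <;>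
      · have : Real.pi/(n+1) < min (x + Real.pi) (Real.pi - x) := by
          calc Real.pi/((n:ℝ)+1) = Real.pi * (1/((n:ℝ)+1)) := by ring
          _ < Real.pi * (min (x + Real.pi) (Real.pi - x) / Real.pi) :=
              mul_lt_mul_of_pos_left hn hπ
          _ = min (x + Real.pi) (Real.pi - x) := by field_simp
        have h1 := lt_min_iff.mp this
        push_cast at h1 ⊢
        first
        | linarith [h1.1]
        | linarith [h1.2]
  have htend := MeasureTheory.tendsto_setIntegral_of_monotone
    (fun n => measurableSet_Icc) hmono (by rw [hUnion]; exact hInt) (f := g)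
  rw [← hUnion] at *
  refine le_of_tendsto htend (Filter.Eventually.of_forall fun n => ?_)
  have hp : 0 < Real.pi/(n+1:ℝ) := by positivity
  have hplt : Real.pi/(n+1:ℝ) ≤ Real.pi := by
    rw [div_le_iff₀ (by positivity : (0:ℝ) < (n:ℝ)+1)]
    nlinarith
  set a := -Real.pi + Real.pi/(n+1:ℝ)
  set b := Real.pi - Real.pi/(n+1:ℝ)
  have hab : a ≤ b := by simp only [a, b]; linarith
  have hsub : Set.uIcc a b ⊆ Set.Ioo (-Real.pi) Real.pi := by
    rw [Set.uIcc_of_le hab]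
    intro x hx
    exact ⟨by simp only [a] at hx; linarith [hx.1], by simp only [b] at hx; linarith [hx.2]⟩
  have hderiv : ∀ x ∈ Set.uIcc a b,
      HasDerivAt (fun t => (2/(1-ρ^2)) * Real.arctan (((1+ρ)/(1-ρ)) * Real.tan (t/2))) (g x) x :=
    fun x hx => poisson_aux ρ h0 h1 x (hsub hx)
  have hii : IntervalIntegrable g MeasureTheory.volume a b := hgc.intervalIntegrable a b
  have hcalc : ∫ θ in Set.Icc a b, g θ = ∫ θ in a..b, g θ := by
    rw [intervalIntegral.integral_of_le hab, MeasureTheory.integral_Icc_eq_integral_Ioc]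
  rw [hcalc, intervalIntegral.integral_eq_sub_of_hasDerivAt hderiv hii]
  have harc1 := Real.arctan_lt_pi_div_two (((1+ρ)/(1-ρ)) * Real.tan (b/2))
  have harc2 := Real.neg_pi_div_two_lt_arctan (((1+ρ)/(1-ρ)) * Real.tan (a/2))
  have hcoef : (0:ℝ) ≤ 2/(1-ρ^2) := by positivity
  have e1 := mul_le_mul_of_nonneg_left harc1.le hcoef
  have e2 := mul_le_mul_of_nonneg_left harc2.le hcoef
  have heq : 2/(1-ρ^2)*(Real.pi/2) + 2/(1-ρ^2)*(Real.pi/2) = 2*Real.pi/(1-ρ^2) := by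
    field_simp; ring
  linarith [e1, e2]

lemma normSq_one_sub (s : ℂ) (θ : ℝ) :
    Complex.normSq (1 - s * Complex.exp (-(θ:ℂ) * Complex.I))
      = 1 + ‖s‖^2 - 2*‖s‖*Real.cos (θ - Complex.arg s) := by
  set ρ := ‖s‖
  set φ := Complex.arg s
  have hz : s * Complex.exp (-(θ:ℂ) * Complex.I)
      = (ρ:ℂ) * Complex.exp (((φ - θ : ℝ):ℂ) * Complex.I) := by
    conv_lhs => rw [← Complex.norm_mul_exp_arg_mul_I s]
    rw [mul_assoc, ← Complex.exp_add]
    push_cast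
    simp only [ρ, φ]
    ring_nf
  rw [hz, Complex.exp_mul_I]
  simp only [← Complex.ofReal_cos, ← Complex.ofReal_sin]
  rw [Complex.normSq_apply]
  simp only [Complex.sub_re, Complex.sub_im, Complex.one_re, Complex.one_im,
    Complex.mul_re, Complex.mul_im, Complex.add_re, Complex.add_im,
    Complex.ofReal_re, Complex.ofReal_im, Complex.mul_I_re, Complex.mul_I_im,
    Complex.I_re, Complex.I_im]
  have hcos : Real.cos (φ - θ) = Real.cos (θ - φ) := by
    rw [← Real.cos_neg]; ring_nf
  have h1 := Real.sin_sq_add_cos_sq (φ - θ)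
  linear_combination (ρ^2) * h1 - 2*ρ*hcos

lemma kernel_int (s : ℂ) (hs : ‖s‖ < 1) :
    ∫ θ in Set.Ioo (-Real.pi) Real.pi,
      (Complex.normSq (1 - s * Complex.exp (-(θ:ℂ) * Complex.I)))⁻¹
        ≤ 2*Real.pi/(1 - ‖s‖^2) := by
  have hπ := Real.pi_pos
  set ρ := ‖s‖
  set φ := Complex.arg s
  have h0 : 0 ≤ ρ := norm_nonneg s
  simp_rw [normSq_one_sub s]
  have hper : Function.Periodic (fun t => (1 + ρ^2 - 2*ρ*Real.cos t)⁻¹) (2*Real.pi) := by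
    intro t; simp [Real.cos_add_two_pi]
  have key : ∫ θ in Set.Ioo (-Real.pi) Real.pi, (1 + ρ^2 - 2*ρ*Real.cos (θ - φ))⁻¹
      = ∫ θ in Set.Ioo (-Real.pi) Real.pi, (1 + ρ^2 - 2*ρ*Real.cos θ)⁻¹ := by
    rw [← MeasureTheory.integral_Ioc_eq_integral_Ioo,
        ← intervalIntegral.integral_of_le (by linarith : -Real.pi ≤ Real.pi)]
    rw [intervalIntegral.integral_comp_sub_right (fun t => (1 + ρ^2 - 2*ρ*Real.cos t)⁻¹) φ]
    rw [← MeasureTheory.integral_Ioc_eq_integral_Ioo,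
        ← intervalIntegral.integral_of_le (by linarith : -Real.pi ≤ Real.pi)]
    have := hper.intervalIntegral_add_eq (-Real.pi - φ) (-Real.pi)
    rw [show -Real.pi - φ + 2*Real.pi = Real.pi - φ by ring,
        show -Real.pi + 2*Real.pi = Real.pi by ring] at this
    exact this
  rw [key]
  exact poisson_int ρ h0 hs

lemma kernel_hasDerivAt (r : ℝ) (θ : ℝ) (w : ℂ)
    (hne : (1:ℂ) - w*(r:ℂ)*Complex.exp (-(θ:ℂ)*Complex.I) ≠ 0) :
    HasDerivAt (fun z : ℂ => ((1 - z*(r:ℂ)*Complex.exp (-(θ:ℂ)*Complex.I))^2)⁻¹)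
      (2*(r:ℂ)*Complex.exp (-(θ:ℂ)*Complex.I) *
        (((1 - w*(r:ℂ)*Complex.exp (-(θ:ℂ)*Complex.I))^3)⁻¹)) w := by
  set c : ℂ := (r:ℂ)*Complex.exp (-(θ:ℂ)*Complex.I) with hc
  have hne' : (1:ℂ) - w*c ≠ 0 := by rw [hc, ← mul_assoc]; exact hne
  have h1 : HasDerivAt (fun z : ℂ => 1 - z*c) (-c) w := by
    simpa using ((hasDerivAt_id w).mul_const c).const_sub (1:ℂ)
  have h2 := (h1.pow 2).inv (pow_ne_zero 2 hne')
  have h3 : HasDerivAt (fun z : ℂ => ((1 - z*c)^2)⁻¹)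
      (2*c*(((1 - w*c)^3)⁻¹)) w := by
    refine h2.congr_deriv ?_
    simp only [Pi.pow_apply]
    field_simp
    ring
  simpa [hc, mul_assoc] using h3

set_option maxHeartbeats 1600000 in
/-- For `0 < r < 1` and essentially bounded `h` on `[−π,π]`, the function
`G(w) = ∫_{−π}^{π} h(θ) (1 − w r e^{−iθ})^{−2} dθ` is holomorphic on `𝔻`, belongs to
`𝓑(𝔻)`, and `‖G‖_𝓑 ≤ 6π (1−r)^{−1} ‖h‖_{L^∞}`. -/
theorem G_mem_besov (r : ℝ) (hr0 : 0 < r) (hr1 : r < 1) (h : ℝ → ℂ)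
    (hmeas : AEStronglyMeasurable h (volume.restrict (Set.Ioo (-Real.pi) Real.pi)))
    (hbdd : eLpNorm h ⊤ (volume.restrict (Set.Ioo (-Real.pi) Real.pi)) < ⊤)
    (G : ℂ → ℂ)
    (hG : ∀ w : ℂ, G w = ∫ θ in (-Real.pi)..Real.pi,
      h θ * ((1 - w * (r : ℂ) * Complex.exp (-(θ : ℂ) * Complex.I)) ^ 2)⁻¹) :
    (∀ w ∈ ball (0:ℂ) 1, DifferentiableAt ℂ G w) ∧
    (⨆ w ∈ ball (0:ℂ) 1, (‖G w‖₊ : ℝ≥0∞)) + besovNorm0 G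
      ≤ ENNReal.ofReal (6 * Real.pi / (1 - r)) *
          eLpNorm h ⊤ (volume.restrict (Set.Ioo (-Real.pi) Real.pi)) := by
  have hπ := Real.pi_pos
  have h1r : (0:ℝ) < 1 - r := by linarith
  set μ := volume.restrict (Set.Ioo (-Real.pi) Real.pi) with hμdef
  -- essential bound
  set M := (eLpNorm h ⊤ μ).toReal with hMdef
  have hM0 : 0 ≤ M := ENNReal.toReal_nonneg
  have hMeq : ENNReal.ofReal M = eLpNorm h ⊤ μ := ENNReal.ofReal_toReal hbdd.ne
  have hexc : Continuous (fun θ:ℝ => Complex.exp (-(θ:ℂ)*Complex.I)) :=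
    Complex.continuous_exp.comp ((Complex.continuous_ofReal.neg).mul continuous_const)
  have hae : ∀ᵐ θ ∂μ, ‖h θ‖ ≤ M := by
    have h1 : ∀ᵐ θ ∂μ, (‖h θ‖₊ : ℝ≥0∞) ≤ eLpNormEssSup h μ := ae_le_eLpNormEssSup
    refine h1.mono fun θ hθ => ?_
    have h2 : eLpNormEssSup h μ ≠ ⊤ := by
      rw [← eLpNorm_exponent_top]; exact hbdd.ne
    have := ENNReal.toReal_mono h2 hθ
    simpa [hMdef, eLpNorm_exponent_top] using this
  have hfin : IsFiniteMeasure μ := by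
    constructor
    rw [hμdef, Measure.restrict_apply_univ, Real.volume_Ioo]
    exact ENNReal.ofReal_lt_top
  have hint_h : Integrable h μ := MemLp.integrable le_top ⟨hmeas, hbdd⟩
  -- basic pointwise facts
  have habse : ∀ θ:ℝ, ‖Complex.exp (-(θ:ℂ)*Complex.I)‖ = 1 := by
    intro θ; rw [Complex.norm_exp]; simp
  have habs : ∀ (w:ℂ) (θ:ℝ),
      ‖w * (r:ℂ) * Complex.exp (-(θ:ℂ)*Complex.I)‖ = ‖w‖ * r := by
    intro w θ
    rw [norm_mul, norm_mul, habse, Complex.norm_real, Real.norm_eq_abs, abs_of_pos hr0, mul_one]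
  have hlow : ∀ (w:ℂ) (ρ:ℝ), ‖w‖ ≤ ρ → ρ*r < 1 → ∀ θ:ℝ,
      1 - ρ*r ≤ ‖1 - w*(r:ℂ)*Complex.exp (-(θ:ℂ)*Complex.I)‖ := by
    intro w ρ hwρ hρr θ
    have := norm_sub_norm_le (1:ℂ) (w*(r:ℂ)*Complex.exp (-(θ:ℂ)*Complex.I))
    rw [norm_one, habs] at this
    have : 1 - ‖w‖*r ≤ ‖1 - w*(r:ℂ)*Complex.exp (-(θ:ℂ)*Complex.I)‖ := this
    have hh : ρ * r - ‖w‖ * r = (ρ - ‖w‖)*r := by ring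
    nlinarith [hwρ, hr0.le]
  have hne : ∀ (w:ℂ), ‖w‖ < 1 → ∀ θ:ℝ,
      (1:ℂ) - w*(r:ℂ)*Complex.exp (-(θ:ℂ)*Complex.I) ≠ 0 := by
    intro w hw θ
    have h1 := hlow w 1 hw.le (by linarith) θ
    intro hcontra
    rw [hcontra] at h1
    simp only [norm_zero] at h1
    linarith
  -- rewrite G as an integral over μ
  have hGμ : G = fun w => ∫ θ, h θ *
      ((1 - w * (r:ℂ) * Complex.exp (-(θ:ℂ) * Complex.I)) ^ 2)⁻¹ ∂μ := by
    funext w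
    rw [hG w, intervalIntegral.integral_of_le (by linarith : -Real.pi ≤ Real.pi),
      MeasureTheory.integral_Ioc_eq_integral_Ioo]
  -- continuity in θ
  have hK2cont : ∀ (w:ℂ), ‖w‖ < 1 → Continuous (fun θ:ℝ =>
      ((1 - w * (r:ℂ) * Complex.exp (-(θ:ℂ) * Complex.I)) ^ 2)⁻¹) := by
    intro w hw
    apply Continuous.inv₀
    · apply Continuous.pow
      apply Continuous.sub continuous_const
      exact (continuous_const.mul (hexc))
    · exact fun θ => pow_ne_zero 2 (hne w hw θ)
  have hK3cont : ∀ (w:ℂ), ‖w‖ < 1 → Continuous (fun θ:ℝ =>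
      2*(r:ℂ)*Complex.exp (-(θ:ℂ)*Complex.I) *
        (((1 - w*(r:ℂ)*Complex.exp (-(θ:ℂ)*Complex.I))^3)⁻¹)) := by
    intro w hw
    apply Continuous.mul
    · exact continuous_const.mul (hexc)
    · apply Continuous.inv₀
      · apply Continuous.pow
        apply Continuous.sub continuous_const
        exact (continuous_const.mul (hexc))
      · exact fun θ => pow_ne_zero 3 (hne w hw θ)
  -- norms of the kernels
  have hnormK2 : ∀ (w:ℂ) (θ:ℝ),
      ‖((1 - w * (r:ℂ) * Complex.exp (-(θ:ℂ) * Complex.I)) ^ 2)⁻¹‖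
        = (Complex.normSq (1 - w * (r:ℂ) * Complex.exp (-(θ:ℂ) * Complex.I)))⁻¹ := by
    intro w θ
    rw [norm_inv, norm_pow, Complex.sq_norm]
  -- integrability of the normSq inverse kernel
  have hK2normInt : ∀ (w:ℂ), ‖w‖ < 1 → IntegrableOn (fun θ:ℝ =>
      (Complex.normSq (1 - w * (r:ℂ) * Complex.exp (-(θ:ℂ) * Complex.I)))⁻¹)
      (Set.Ioo (-Real.pi) Real.pi) volume := by
    intro w hw
    have hcont : Continuous (fun θ:ℝ =>
        (Complex.normSq (1 - w * (r:ℂ) * Complex.exp (-(θ:ℂ) * Complex.I)))⁻¹) := by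
      apply Continuous.inv₀
      · apply Complex.continuous_normSq.comp
        apply Continuous.sub continuous_const
        exact (continuous_const.mul (hexc))
      · intro θ
        rw [← Complex.sq_norm]
        exact pow_ne_zero 2 (fun hh => (hne w hw θ) (norm_eq_zero.mp hh))
    exact (hcont.integrableOn_Icc).mono_set Set.Ioo_subset_Icc_self
  -- bound for ∫ normSq⁻¹
  have hK2intbound : ∀ (w:ℂ) (ρ:ℝ), ‖w‖ ≤ ρ → ρ*r < 1 → 0 ≤ ρ →
      ∫ θ, (Complex.normSq (1 - w * (r:ℂ) * Complex.exp (-(θ:ℂ) * Complex.I)))⁻¹ ∂μ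
        ≤ 2*Real.pi/(1 - (ρ*r)^2) := by
    intro w ρ hwρ hρr hρ0
    have habsw : ‖w * (r:ℂ)‖ = ‖w‖ * r := by
      rw [norm_mul, Complex.norm_real, Real.norm_eq_abs, abs_of_pos hr0]
    have hlt : ‖w * (r:ℂ)‖ < 1 := by
      rw [habsw]; nlinarith [hwρ, hr0.le]
    have hki := kernel_int (w * (r:ℂ)) hlt
    have hmulassoc : ∀ θ:ℝ, 1 - w * (r:ℂ) * Complex.exp (-(θ:ℂ) * Complex.I)
        = 1 - (w * (r:ℂ)) * Complex.exp (-(θ:ℂ) * Complex.I) := by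
      intro θ; rw [mul_assoc]
    have hq1 : (0:ℝ) < 1 - (ρ*r)^2 := by nlinarith [mul_nonneg hρ0 hr0.le]
    calc ∫ θ, (Complex.normSq (1 - w * (r:ℂ) * Complex.exp (-(θ:ℂ) * Complex.I)))⁻¹ ∂μ
        ≤ 2*Real.pi/(1 - ‖w * (r:ℂ)‖^2) := by
          exact hki
      _ ≤ 2*Real.pi/(1 - (ρ*r)^2) := by
          apply div_le_div_of_nonneg_left (by linarith) hq1 ?_
          rw [habsw]
          nlinarith [hwρ, hr0.le, norm_nonneg w, mul_nonneg hρ0 hr0.le,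
            mul_le_mul_of_nonneg_right hwρ hr0.le, sq_nonneg (ρ*r - ‖w‖*r),
            mul_nonneg (norm_nonneg w) hr0.le]
  -- the sup bound
  have hGbound : ∀ (w:ℂ), ‖w‖ < 1 →
      ‖∫ θ, h θ * ((1 - w * (r:ℂ) * Complex.exp (-(θ:ℂ) * Complex.I)) ^ 2)⁻¹ ∂μ‖
        ≤ 2*Real.pi*M/(1-r) := by
    intro w hw
    have hgint : Integrable (fun θ : ℝ => M *
        (Complex.normSq (1 - w * (r:ℂ) * Complex.exp (-(θ:ℂ) * Complex.I)))⁻¹) μ :=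
      (hK2normInt w hw).const_mul M
    refine (norm_integral_le_of_norm_le hgint ?_).trans ?_
    · filter_upwards [hae] with θ hθ
      rw [norm_mul, hnormK2]
      apply mul_le_mul_of_nonneg_right hθ
      exact inv_nonneg.mpr (Complex.normSq_nonneg _)
    · rw [integral_const_mul]
      have h2 := hK2intbound w 1 hw.le (by linarith) zero_le_one
      have h3 : 2*Real.pi/(1 - (1*r)^2) ≤ 2*Real.pi/(1-r) := by
        apply div_le_div_of_nonneg_left (by linarith) h1r (by nlinarith)
      calc M * ∫ θ, (Complex.normSq (1 - w * (r:ℂ) * Complex.exp (-(θ:ℂ) * Complex.I)))⁻¹ ∂μ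
          ≤ M * (2*Real.pi/(1-r)) := by
            apply mul_le_mul_of_nonneg_left (h2.trans h3) hM0
        _ = 2*Real.pi*M/(1-r) := by ring
  -- the derivative bound
  have hDbound : ∀ (w:ℂ) (ρ:ℝ), ‖w‖ ≤ ρ → 0 ≤ ρ → ρ < 1 → ‖w‖ < 1 →
      ‖∫ θ, h θ * (2*(r:ℂ)*Complex.exp (-(θ:ℂ)*Complex.I) *
        (((1 - w*(r:ℂ)*Complex.exp (-(θ:ℂ)*Complex.I))^3)⁻¹)) ∂μ‖
        ≤ 4*Real.pi*M*(r * ((1-ρ*r)^2)⁻¹) := by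
    intro w ρ hwρ hρ0 hρ1 hw
    have hρr : ρ*r < 1 := by nlinarith
    have h1ρr : (0:ℝ) < 1 - ρ*r := by linarith
    set C := M * (2*r*(1-ρ*r)⁻¹) with hC
    have hC0 : 0 ≤ C := by positivity
    have hgint : Integrable (fun θ : ℝ => C *
        (Complex.normSq (1 - w * (r:ℂ) * Complex.exp (-(θ:ℂ) * Complex.I)))⁻¹) μ :=
      (hK2normInt w hw).const_mul C
    refine (norm_integral_le_of_norm_le hgint ?_).trans ?_
    case _ =>
      filter_upwards [hae] with θ hθ
      have habs3 : ‖(2*(r:ℂ)*Complex.exp (-(θ:ℂ)*Complex.I) *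
          (((1 - w*(r:ℂ)*Complex.exp (-(θ:ℂ)*Complex.I))^3)⁻¹))‖
          = 2*r*(‖1 - w*(r:ℂ)*Complex.exp (-(θ:ℂ)*Complex.I)‖)⁻¹ *
            (Complex.normSq (1 - w*(r:ℂ)*Complex.exp (-(θ:ℂ)*Complex.I)))⁻¹ := by
        rw [norm_mul, norm_inv, norm_pow,
          norm_mul, norm_mul, habse, Complex.norm_real, Real.norm_eq_abs, abs_of_pos hr0,
          ← Complex.sq_norm]
        have : ‖(2:ℂ)‖ = 2 := by norm_num
        rw [this]
        have hapos : 0 < ‖1 - w*(r:ℂ)*Complex.exp (-(θ:ℂ)*Complex.I)‖ := by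
          have := hlow w ρ hwρ hρr θ
          linarith
        rw [pow_succ, mul_inv]
        ring
      rw [norm_mul, habs3]
      have hapos : 0 < ‖1 - w*(r:ℂ)*Complex.exp (-(θ:ℂ)*Complex.I)‖ := by
        have := hlow w ρ hwρ hρr θ
        linarith
      have hinvle : (‖1 - w*(r:ℂ)*Complex.exp (-(θ:ℂ)*Complex.I)‖)⁻¹
          ≤ (1-ρ*r)⁻¹ := by
        apply inv_anti₀ h1ρr (hlow w ρ hwρ hρr θ)
      have hnn : (0:ℝ) ≤ (Complex.normSq (1 - w*(r:ℂ)*Complex.exp (-(θ:ℂ)*Complex.I)))⁻¹ :=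
        inv_nonneg.mpr (Complex.normSq_nonneg _)
      calc ‖h θ‖ * (2*r*(‖1 - w*(r:ℂ)*Complex.exp (-(θ:ℂ)*Complex.I)‖)⁻¹ *
            (Complex.normSq (1 - w*(r:ℂ)*Complex.exp (-(θ:ℂ)*Complex.I)))⁻¹)
          ≤ M * (2*r*(1-ρ*r)⁻¹ *
            (Complex.normSq (1 - w*(r:ℂ)*Complex.exp (-(θ:ℂ)*Complex.I)))⁻¹) := by
            apply mul_le_mul hθ ?_ ?_ hM0
            · apply mul_le_mul_of_nonneg_right ?_ hnn
              apply mul_le_mul_of_nonneg_left hinvle (by positivity)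
            · exact mul_nonneg (mul_nonneg (by positivity)
                (inv_nonneg.mpr (norm_nonneg _))) hnn
        _ = C * (Complex.normSq (1 - w*(r:ℂ)*Complex.exp (-(θ:ℂ)*Complex.I)))⁻¹ := by
            rw [hC]; ring
    case _ =>
      rw [integral_const_mul]
      have h2 := hK2intbound w ρ hwρ hρr hρ0
      have h3 : 2*Real.pi/(1 - (ρ*r)^2) ≤ 2*Real.pi/(1-ρ*r) := by
        apply div_le_div_of_nonneg_left (by linarith) h1ρr
          (by nlinarith [mul_nonneg (mul_nonneg hρ0 hr0.le) h1ρr.le])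
      calc C * ∫ θ, (Complex.normSq (1 - w * (r:ℂ) * Complex.exp (-(θ:ℂ) * Complex.I)))⁻¹ ∂μ
          ≤ C * (2*Real.pi/(1-ρ*r)) := by
            apply mul_le_mul_of_nonneg_left (h2.trans h3) hC0
        _ = 4*Real.pi*M*(r * ((1-ρ*r)^2)⁻¹) := by
            rw [hC]; field_simp; ring
  -- differentiability with explicit derivative
  have hkey : ∀ w ∈ ball (0:ℂ) 1, HasDerivAt G
      (∫ θ, h θ * (2*(r:ℂ)*Complex.exp (-(θ:ℂ)*Complex.I) *
        (((1 - w*(r:ℂ)*Complex.exp (-(θ:ℂ)*Complex.I))^3)⁻¹)) ∂μ) w := by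
    intro w hw
    rw [mem_ball_zero_iff] at hw
    have hε : 0 < 1 - ‖w‖ := by linarith
    have hball : ∀ x ∈ ball w (1 - ‖w‖), ‖x‖ < 1 := by
      intro x hx
      rw [mem_ball] at hx
      calc ‖x‖ ≤ ‖w‖ + ‖x - w‖ := norm_le_insert' x w
        _ < ‖w‖ + (1 - ‖w‖) := by
            rw [dist_eq_norm] at hx; linarith
        _ = 1 := by ring
    have hres := hasDerivAt_integral_of_dominated_loc_of_deriv_le (μ := μ) (x₀ := w) (ball_mem_nhds w hε)
      (F := fun (x:ℂ) (θ:ℝ) => h θ * ((1 - x * (r:ℂ) * Complex.exp (-(θ:ℂ) * Complex.I)) ^ 2)⁻¹)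
      (F' := fun (x:ℂ) (θ:ℝ) => h θ * (2*(r:ℂ)*Complex.exp (-(θ:ℂ)*Complex.I) *
        (((1 - x*(r:ℂ)*Complex.exp (-(θ:ℂ)*Complex.I))^3)⁻¹)))
      (bound := fun θ => ‖h θ‖ * (2*r*((1-r)^3)⁻¹))
      ?_ ?_ ?_ ?_ ?_ ?_
    · rw [hGμ]
      exact hres.2
    · filter_upwards [ball_mem_nhds w hε] with x hx
      exact hmeas.mul ((hK2cont x (hball x hx)).aestronglyMeasurable)
    · have : Integrable (fun θ : ℝ =>
          ((1 - w * (r:ℂ) * Complex.exp (-(θ:ℂ) * Complex.I)) ^ 2)⁻¹ * h θ) μ := by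
        apply hint_h.bdd_mul (c := ((1-r)^2)⁻¹) ((hK2cont w hw).aestronglyMeasurable)
        refine Filter.Eventually.of_forall fun θ => ?_
        rw [hnormK2]
        rw [← Complex.sq_norm]
        apply inv_anti₀ (by positivity)
        have := hlow w 1 hw.le (by linarith) θ
        nlinarith [this, h1r]
      simpa [mul_comm] using this
    · exact hmeas.mul ((hK3cont w hw).aestronglyMeasurable)
    · filter_upwards [hae] with θ hθ
      intro x hx
      have hx1 := hball x hx
      rw [norm_mul]
      have habs3 : ‖(2*(r:ℂ)*Complex.exp (-(θ:ℂ)*Complex.I) *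
          (((1 - x*(r:ℂ)*Complex.exp (-(θ:ℂ)*Complex.I))^3)⁻¹))‖
          ≤ 2*r*((1-r)^3)⁻¹ := by
        rw [norm_mul, norm_inv, norm_pow,
          norm_mul, norm_mul, habse, Complex.norm_real, Real.norm_eq_abs, abs_of_pos hr0]
        have h2 : ‖(2:ℂ)‖ = 2 := by norm_num
        rw [h2, mul_one]
        apply mul_le_mul_of_nonneg_left ?_ (by positivity)
        apply inv_anti₀ (by positivity)
        have := hlow x 1 hx1.le (by linarith) θ
        have h1 : 0 < 1 - r := h1r
        calc (1-r)^3 ≤ (‖1 - x*(r:ℂ)*Complex.exp (-(θ:ℂ)*Complex.I)‖)^3 := by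
              apply pow_le_pow_left₀ h1.le ?_ 3
              nlinarith [this]
          _ = _ := rfl
      exact mul_le_mul_of_nonneg_left habs3 (norm_nonneg _)
    · exact (hint_h.norm.mul_const _)
    · filter_upwards with θ
      intro x hx
      exact (kernel_hasDerivAt r θ x (hne x (hball x hx) θ)).const_mul (h θ)
  constructor
  · exact fun w hw => (hkey w hw).differentiableAt
  -- the quantitative bound
  have hsup_le : (⨆ w ∈ ball (0:ℂ) 1, (‖G w‖₊ : ℝ≥0∞))
      ≤ ENNReal.ofReal (2*Real.pi*M/(1-r)) := by
    refine iSup₂_le fun w hw => ?_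
    rw [← enorm_eq_nnnorm, ← ofReal_norm]
    apply ENNReal.ofReal_le_ofReal
    rw [hGμ]
    exact hGbound w (mem_ball_zero_iff.mp hw)
  -- besov part
  have hbesov_le : besovNorm0 G ≤ ENNReal.ofReal (4*Real.pi*M*((1-r)⁻¹ - 1)) := by
    have hmono : besovNorm0 G ≤ ∫⁻ ρ in Set.Ioo (0:ℝ) 1,
        ENNReal.ofReal (4*Real.pi*M*(r * ((1-ρ*r)^2)⁻¹)) := by
      unfold besovNorm0
      apply lintegral_mono_ae
      rw [ae_restrict_iff' measurableSet_Ioo]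
      filter_upwards with ρ hρ
      obtain ⟨hρ0, hρ1⟩ := hρ
      refine iSup₂_le fun θ _ => ?_
      have hwnorm : ‖(ρ:ℂ) * Complex.exp ((θ:ℂ) * Complex.I)‖ = ρ := by
        rw [norm_mul, Complex.norm_exp]
        simp [abs_of_pos hρ0]
      have hwmem : (ρ:ℂ) * Complex.exp ((θ:ℂ) * Complex.I) ∈ ball (0:ℂ) 1 := by
        rw [mem_ball_zero_iff, hwnorm]; exact hρ1
      have hd := (hkey _ hwmem).deriv
      rw [← enorm_eq_nnnorm, ← ofReal_norm, hd]
      apply ENNReal.ofReal_le_ofReal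
      exact hDbound _ ρ (le_of_eq hwnorm) hρ0.le hρ1 (by rw [hwnorm]; exact hρ1)
    refine hmono.trans ?_
    have hB : ∀ ρ:ℝ, ρ ∈ Set.uIcc (0:ℝ) 1 → (1:ℝ) - ρ*r ≠ 0 := by
      intro ρ hρ
      rw [Set.uIcc_of_le zero_le_one] at hρ
      nlinarith [hρ.1, hρ.2]
    have hBcont : ContinuousOn (fun ρ:ℝ => 4*Real.pi*M*(r * ((1-ρ*r)^2)⁻¹))
        (Set.uIcc (0:ℝ) 1) := by
      apply ContinuousOn.mul continuousOn_const
      apply ContinuousOn.mul continuousOn_const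
      apply ContinuousOn.inv₀ (by fun_prop)
      exact fun ρ hρ => pow_ne_zero 2 (hB ρ hρ)
    have hBii : IntervalIntegrable (fun ρ:ℝ => 4*Real.pi*M*(r * ((1-ρ*r)^2)⁻¹))
        volume 0 1 := hBcont.intervalIntegrable
    have hBint : IntegrableOn (fun ρ:ℝ => 4*Real.pi*M*(r * ((1-ρ*r)^2)⁻¹))
        (Set.Ioo (0:ℝ) 1) volume := by
      have := (intervalIntegrable_iff_integrableOn_Ioc_of_le zero_le_one).mp hBii
      exact this.mono_set Set.Ioo_subset_Ioc_self
    rw [← MeasureTheory.ofReal_integral_eq_lintegral_ofReal hBint]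
    · apply ENNReal.ofReal_le_ofReal
      have hio : ∫ ρ in Set.Ioo (0:ℝ) 1, 4*Real.pi*M*(r * ((1-ρ*r)^2)⁻¹)
          = ∫ ρ in (0:ℝ)..1, 4*Real.pi*M*(r * ((1-ρ*r)^2)⁻¹) := by
        rw [intervalIntegral.integral_of_le zero_le_one,
          MeasureTheory.integral_Ioc_eq_integral_Ioo]
      rw [hio]
      have hderivΦ : ∀ ρ ∈ Set.uIcc (0:ℝ) 1, HasDerivAt (fun ρ:ℝ => 4*Real.pi*M*(1-ρ*r)⁻¹)
          (4*Real.pi*M*(r * ((1-ρ*r)^2)⁻¹)) ρ := by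
        intro ρ hρ
        have hne2 : (1:ℝ) - ρ*r ≠ 0 := hB ρ hρ
        have h1 : HasDerivAt (fun ρ:ℝ => 1 - ρ*r) (-r) ρ := by
          simpa using ((hasDerivAt_id ρ).mul_const r).const_sub (1:ℝ)
        have h2 := (h1.inv hne2).const_mul (4*Real.pi*M)
        refine h2.congr_deriv ?_
        field_simp
      have hFTC := intervalIntegral.integral_eq_sub_of_hasDerivAt hderivΦ hBii
      rw [hFTC]
      simp only [one_mul, zero_mul, sub_zero, inv_one]
      nlinarith [hM0, hπ]
    · filter_upwards with ρ
      have : (0:ℝ) ≤ ((1-ρ*r)^2)⁻¹ := by positivity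
      positivity
  calc (⨆ w ∈ ball (0:ℂ) 1, (‖G w‖₊ : ℝ≥0∞)) + besovNorm0 G
      ≤ ENNReal.ofReal (2*Real.pi*M/(1-r)) + ENNReal.ofReal (4*Real.pi*M*((1-r)⁻¹ - 1)) :=
        add_le_add hsup_le hbesov_le
    _ ≤ ENNReal.ofReal (6 * Real.pi / (1 - r) * M) := by
        rw [← ENNReal.ofReal_add (by positivity) ?hnn]
        case hnn =>
          have hge1 : (1:ℝ) ≤ (1-r)⁻¹ := by
            rw [le_inv_comm₀]
            all_goals first | linarith | norm_num
          have : (0:ℝ) ≤ (1-r)⁻¹ - 1 := by linarith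
          positivity
        apply ENNReal.ofReal_le_ofReal
        rw [div_eq_mul_inv, div_eq_mul_inv]
        nlinarith [hM0, hπ, mul_nonneg (mul_nonneg (by norm_num : (0:ℝ) ≤ 4) hπ.le) hM0]
    _ = ENNReal.ofReal (6 * Real.pi / (1 - r)) * ENNReal.ofReal M := by
        rw [ENNReal.ofReal_mul (by positivity)]
    _ = _ := by rw [hMeq]
end

section
/- Let g : 𝔻 → ℂ be continuous with ‖g‖_𝒲 := ∫₀¹ sup_{|θ|≤π} |g(r e^{iθ})| dr < ∞, and define (Qg)(w) := (2/π) ∫_𝔻 log(1/|z|) · w g(z) (1 − w·conj(z))^{−2} dA(z) for w ∈ 𝔻 (the integral is absolutely convergent). Then Qg is holomorphic on 𝔻, Qg ∈ 𝓑(𝔻), and ‖Qg‖_𝓑 ≤ 16 ‖g‖_𝒲. -/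
open MeasureTheory Metric
open scoped ENNReal Real

/-- lintegral version of polar coordinates change of variables on `ℝ × ℝ`. -/
theorem lintegral_comp_polarCoord_symm' (f : ℝ × ℝ → ℝ≥0∞) :
    ∫⁻ p in polarCoord.target, ENNReal.ofReal p.1 * f (polarCoord.symm p) = ∫⁻ p, f p := by
  set B : ℝ × ℝ → ℝ × ℝ →L[ℝ] ℝ × ℝ := fun p =>
    LinearMap.toContinuousLinearMap (Matrix.toLin (Module.Basis.finTwoProd ℝ) (Module.Basis.finTwoProd ℝ)
      !![Real.cos p.2, -p.1 * Real.sin p.2; Real.sin p.2, p.1 * Real.cos p.2])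
  have A : ∀ p ∈ polarCoord.symm.source, HasFDerivAt polarCoord.symm (B p) p := fun p _ =>
    hasFDerivAt_polarCoord_symm p
  have B_det : ∀ p, (B p).det = p.1 := by
    intro p
    conv_rhs => rw [← one_mul p.1, ← Real.cos_sq_add_sin_sq p.2]
    simp only [B, neg_mul, LinearMap.det_toContinuousLinearMap, LinearMap.det_toLin,
      Matrix.det_fin_two_of, sub_neg_eq_add]
    ring
  symm
  calc
    ∫⁻ p, f p = ∫⁻ p in polarCoord.source, f p := by
      rw [← setLIntegral_univ]
      exact (setLIntegral_congr polarCoord_source_ae_eq_univ).symm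
    _ = ∫⁻ p in polarCoord.symm '' polarCoord.target, f p := by
      rw [polarCoord.symm_image_target_eq_source]
    _ = ∫⁻ p in polarCoord.target, ENNReal.ofReal |(B p).det| * f (polarCoord.symm p) := by
      apply lintegral_image_eq_lintegral_abs_det_fderiv_mul volume
        polarCoord.open_target.measurableSet
        (fun p hp => (hasFDerivAt_polarCoord_symm p).hasFDerivWithinAt)
        polarCoord.symm.injOn
    _ = ∫⁻ p in polarCoord.target, ENNReal.ofReal p.1 * f (polarCoord.symm p) := by
      refine setLIntegral_congr_fun polarCoord.open_target.measurableSet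
        (fun p hp => ?_)
      rw [B_det, abs_of_pos hp.1]

/-- lintegral version of polar coordinates change of variables on `ℂ`. -/
theorem Complex.lintegral_comp_polarCoord_symm' (f : ℂ → ℝ≥0∞) :
    ∫⁻ p in polarCoord.target, ENNReal.ofReal p.1 * f (Complex.polarCoord.symm p)
      = ∫⁻ z, f z := by
  rw [← (Complex.volume_preserving_equiv_real_prod.symm).lintegral_comp_emb
    Complex.measurableEquivRealProd.symm.measurableEmbedding, ← _root_.lintegral_comp_polarCoord_symm']
  rfl

theorem Q_test : True := trivial

theorem lintegral_ball_polar (f : ℂ → ℝ≥0∞) :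
    ∫⁻ z in ball (0:ℂ) 1, f z
      = ∫⁻ p in (Set.Ioo (0:ℝ) 1) ×ˢ (Set.Ioo (-π) π),
          ENNReal.ofReal p.1 * f ((p.1 : ℂ) * Complex.exp ((p.2 : ℂ) * Complex.I)) := by
  have hA : MeasurableSet ((Set.Ioo (0:ℝ) 1) ×ˢ (Set.Ioo (-π) π)) :=
    (measurableSet_Ioo.prod measurableSet_Ioo)
  have hsub : (Set.Ioo (0:ℝ) 1) ×ˢ (Set.Ioo (-π) π) ⊆ polarCoord.target := by
    intro p hp
    exact ⟨hp.1.1, hp.2⟩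
  calc
    ∫⁻ z in ball (0:ℂ) 1, f z = ∫⁻ z, (ball (0:ℂ) 1).indicator f z :=
      (lintegral_indicator measurableSet_ball f).symm
    _ = ∫⁻ p in polarCoord.target,
          ENNReal.ofReal p.1 * (ball (0:ℂ) 1).indicator f (Complex.polarCoord.symm p) :=
      (Complex.lintegral_comp_polarCoord_symm' _).symm
    _ = ∫⁻ p in polarCoord.target,
          ((Set.Ioo (0:ℝ) 1) ×ˢ (Set.Ioo (-π) π)).indicator
            (fun p => ENNReal.ofReal p.1 * f ((p.1 : ℂ) * Complex.exp ((p.2 : ℂ) * Complex.I))) p := by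
      refine setLIntegral_congr_fun polarCoord.open_target.measurableSet
        (fun p hp => ?_)
      have hp1 : 0 < p.1 := hp.1
      have hsymm : Complex.polarCoord.symm p = (p.1 : ℂ) * Complex.exp ((p.2 : ℂ) * Complex.I) := by
        simp [Complex.exp_mul_I, ← Complex.ofReal_cos, ← Complex.ofReal_sin]
      have habs : ‖Complex.polarCoord.symm p‖ = p.1 := by
        rw [Complex.norm_polarCoord_symm, abs_of_pos hp1]
      by_cases h1 : p.1 < 1
      · have hz : Complex.polarCoord.symm p ∈ ball (0:ℂ) 1 := by
          simp only [mem_ball, dist_eq_norm, sub_zero, habs]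
          first | exact h1 | simpa using h1
        have hpA : p ∈ (Set.Ioo (0:ℝ) 1) ×ˢ (Set.Ioo (-π) π) := ⟨⟨hp1, h1⟩, hp.2⟩
        rw [Set.indicator_of_mem hz, Set.indicator_of_mem hpA, hsymm]
      · have hz : Complex.polarCoord.symm p ∉ ball (0:ℂ) 1 := by
          simp only [mem_ball, dist_eq_norm, sub_zero, habs]
          first | exact h1 | simpa using h1
        have hpA : p ∉ (Set.Ioo (0:ℝ) 1) ×ˢ (Set.Ioo (-π) π) := by
          intro hpA; exact h1 hpA.1.2
        rw [Set.indicator_of_notMem hz, Set.indicator_of_notMem hpA, mul_zero]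
    _ = ∫⁻ p in (Set.Ioo (0:ℝ) 1) ×ˢ (Set.Ioo (-π) π),
          ENNReal.ofReal p.1 * f ((p.1 : ℂ) * Complex.exp ((p.2 : ℂ) * Complex.I)) := by
      rw [lintegral_indicator hA, Measure.restrict_restrict hA,
        Set.inter_eq_self_of_subset_left hsub]

theorem lintegral_prod_Ioo (h : ℝ × ℝ → ℝ≥0∞) (hm : Measurable h) :
    ∫⁻ p in (Set.Ioo (0:ℝ) 1) ×ˢ (Set.Ioo (-π) π), h p
      = ∫⁻ r in Set.Ioo (0:ℝ) 1, ∫⁻ θ in Set.Ioo (-π) π, h (r, θ) := by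
  rw [Measure.volume_eq_prod, ← Measure.prod_restrict, lintegral_prod _ hm.aemeasurable]

namespace QW

noncomputable section

/-- Norm of `c * exp(-θ i)` is `‖c‖`. -/
theorem norm_mul_exp (c : ℂ) (θ : ℝ) : ‖c * Complex.exp (-(θ:ℂ) * Complex.I)‖ = ‖c‖ := by
  have h : -(θ:ℂ) * Complex.I = ((-θ : ℝ) : ℂ) * Complex.I := by push_cast; ring
  have h2 : ‖Complex.exp (-(θ:ℂ) * Complex.I)‖ = 1 := by
    rw [h, Complex.norm_exp_ofReal_mul_I]
  rw [norm_mul, h2, mul_one]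

theorem one_sub_ne (c : ℂ) (hc : ‖c‖ < 1) (θ : ℝ) :
    (1 : ℂ) - c * Complex.exp (-(θ:ℂ) * Complex.I) ≠ 0 := by
  intro h
  have h' : c * Complex.exp (-(θ:ℂ) * Complex.I) = 1 := by
    have := sub_eq_zero.mp h; exact this.symm
  rw [← norm_mul_exp c θ, h', norm_one] at hc
  exact lt_irrefl _ hc

/-- `∫_{-π}^{π} (1+ce^{-iθ})/(1-ce^{-iθ}) dθ = 2π`. -/
theorem cayley_integral (c : ℂ) (hc : ‖c‖ < 1) :
    ∫ θ in Set.Ioo (-π) π,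
      (1 + c * Complex.exp (-(θ:ℂ) * Complex.I)) / (1 - c * Complex.exp (-(θ:ℂ) * Complex.I))
      = 2 * π := by
  set u : ℝ → ℂ := fun θ => c * Complex.exp (-(θ:ℂ) * Complex.I) with hu
  have hnu : ∀ θ, ‖u θ‖ = ‖c‖ := fun θ => norm_mul_exp c θ
  have hne : ∀ θ, (1:ℂ) - u θ ≠ 0 := fun θ => one_sub_ne c hc θ
  have hcont : Continuous u := by
    exact continuous_const.mul ((Complex.continuous_ofReal.neg.mul continuous_const).cexp)
  -- pointwise series identity
  have hpt : ∀ θ : ℝ, (1 + u θ) / (1 - u θ) = 1 + 2 * ∑' n : ℕ, (u θ) ^ (n+1) := by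
    intro θ
    have hgeo : ∑' n : ℕ, (u θ) ^ n = (1 - u θ)⁻¹ :=
      tsum_geometric_of_norm_lt_one (by rw [hnu]; exact hc)
    have h2 : ∑' n : ℕ, (u θ) ^ (n+1) = u θ * (1 - u θ)⁻¹ := by
      calc ∑' n : ℕ, (u θ) ^ (n+1) = ∑' n : ℕ, u θ * (u θ) ^ n := by
            congr 1; funext n; rw [pow_succ]; ring
        _ = u θ * ∑' n : ℕ, (u θ) ^ n := tsum_mul_left
        _ = u θ * (1 - u θ)⁻¹ := by rw [hgeo]
    rw [h2, ← div_eq_mul_inv]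
    have hn := hne θ
    field_simp
    ring
  -- integrability of the full function
  have hfi : IntegrableOn (fun θ : ℝ => (1 + u θ) / (1 - u θ)) (Set.Ioo (-π) π) := by
    have hcont2 : Continuous fun θ : ℝ => (1 + u θ) / (1 - u θ) :=
      (continuous_const.add hcont).div (continuous_const.sub hcont) hne
    exact (hcont2.continuousOn.integrableOn_compact isCompact_Icc).mono_set
      Set.Ioo_subset_Icc_self
  -- each term integrates to zero
  have hterm : ∀ n : ℕ, ∫ θ in Set.Ioo (-π) π, (u θ) ^ (n+1) = 0 := by
    intro n
    have hform : ∀ θ : ℝ, (u θ) ^ (n+1)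
        = c ^ (n+1) * Complex.exp ((-(n+1) * Complex.I) * (θ:ℂ)) := by
      intro θ
      rw [hu]
      simp only
      rw [mul_pow, ← Complex.exp_nat_mul]
      congr 1
      push_cast
      ring
    have h0 : ∫ θ in Set.Ioo (-π) π, Complex.exp ((-(n+1) * Complex.I) * (θ:ℂ)) = 0 := by
      have hle : (-π : ℝ) ≤ π := by linarith [Real.pi_pos]
      have hcne : (-(n+1 : ℂ) * Complex.I) ≠ 0 := by
        refine mul_ne_zero (neg_ne_zero.mpr ?_) Complex.I_ne_zero
        intro h
        exact Nat.cast_add_one_ne_zero (R := ℂ) n (by exact_mod_cast h)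
      have := integral_exp_mul_complex (a := -π) (b := π) hcne
      rw [← MeasureTheory.integral_Ioc_eq_integral_Ioo,
        ← intervalIntegral.integral_of_le hle, this]
      rw [div_eq_zero_iff]
      left
      rw [sub_eq_zero]
      rw [Complex.exp_eq_exp_iff_exists_int]
      refine ⟨-(n+1), ?_⟩
      push_cast
      ring
    calc ∫ θ in Set.Ioo (-π) π, (u θ) ^ (n+1)
        = ∫ θ in Set.Ioo (-π) π, c ^ (n+1) * Complex.exp ((-(n+1) * Complex.I) * (θ:ℂ)) := by
          congr 1; funext θ; exact hform θ
      _ = c ^ (n+1) * ∫ θ in Set.Ioo (-π) π, Complex.exp ((-(n+1) * Complex.I) * (θ:ℂ)) :=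
          integral_const_mul _ _
      _ = 0 := by rw [h0, mul_zero]
  -- swap sum and integral
  have hswap : ∫ θ in Set.Ioo (-π) π, (∑' n : ℕ, (u θ) ^ (n+1)) = 0 := by
    rw [MeasureTheory.integral_tsum]
    · simp only [hterm, tsum_zero]
    · intro n
      exact ((hcont.pow (n+1)).aestronglyMeasurable)
    · have hbound : ∀ n : ℕ, ∫⁻ θ in Set.Ioo (-π) π, ‖(u θ) ^ (n+1)‖₊ ∂volume
          = (‖c‖₊ : ℝ≥0∞) ^ (n+1) * ENNReal.ofReal (2*π) := by
        intro n
        have : ∀ θ : ℝ, (‖(u θ) ^ (n+1)‖₊ : ℝ≥0∞) = (‖c‖₊ : ℝ≥0∞) ^ (n+1) := by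
          intro θ
          rw [nnnorm_pow]
          congr 2
          ext
          rw [coe_nnnorm, coe_nnnorm, hnu]
        rw [lintegral_congr this, lintegral_const, Measure.restrict_apply MeasurableSet.univ,
          Set.univ_inter, Real.volume_Ioo]
        congr 1
        ring_nf
      have hsum : (∑' n : ℕ, ∫⁻ θ in Set.Ioo (-π) π, ‖(u θ) ^ (n+1)‖₊ ∂volume)
          = (‖c‖₊ : ℝ≥0∞) * (1 - (‖c‖₊ : ℝ≥0∞))⁻¹ * ENNReal.ofReal (2*π) := by
        simp_rw [hbound]
        rw [ENNReal.tsum_mul_right, ENNReal.tsum_geometric_add_one]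
      simp only [enorm_eq_nnnorm]
      rw [hsum]
      have h1 : (‖c‖₊ : ℝ≥0∞) < 1 := by
        rw [← ENNReal.coe_one, ENNReal.coe_lt_coe, ← NNReal.coe_lt_coe, coe_nnnorm,
          NNReal.coe_one]
        exact hc
      refine ENNReal.mul_ne_top (ENNReal.mul_ne_top ENNReal.coe_ne_top
        (ENNReal.inv_ne_top.mpr fun h => ?_)) ENNReal.ofReal_ne_top
      exact absurd (tsub_eq_zero_iff_le.mp h) (not_le.mpr h1)
  -- assemble
  have h2int : Integrable (fun θ : ℝ => (2:ℂ) * ∑' n : ℕ, (u θ) ^ (n+1))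
      (volume.restrict (Set.Ioo (-π) π)) := by
    have : (fun θ : ℝ => (2:ℂ) * ∑' n : ℕ, (u θ) ^ (n+1))
        = fun θ : ℝ => (1 + u θ) / (1 - u θ) - 1 := by
      funext θ; rw [hpt θ]; ring
    rw [this]
    exact hfi.sub (integrableOn_const (by simp [Real.volume_Ioo]))
  calc ∫ θ in Set.Ioo (-π) π, (1 + u θ) / (1 - u θ)
      = ∫ θ in Set.Ioo (-π) π, ((1:ℂ) + 2 * ∑' n : ℕ, (u θ) ^ (n+1)) := by
        congr 1; funext θ; exact hpt θ
    _ = (∫ _ in Set.Ioo (-π) π, (1:ℂ)) + ∫ θ in Set.Ioo (-π) π, (2:ℂ) * ∑' n : ℕ, (u θ) ^ (n+1) :=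
        integral_add (integrableOn_const (by simp [Real.volume_Ioo])) h2int
    _ = 2 * π := by
      rw [integral_const_mul, hswap, mul_zero, add_zero, setIntegral_const]
      rw [measureReal_def, Real.volume_Ioo]
      rw [ENNReal.toReal_ofReal (by linarith [Real.pi_pos])]
      push_cast
      ring_nf
      simp [Complex.real_smul]

/-- Poisson kernel pointwise identity. -/
theorem poisson_pointwise (c : ℂ) (hc : ‖c‖ < 1) (θ : ℝ) :
    (‖1 - c * Complex.exp (-(θ:ℂ) * Complex.I)‖^2)⁻¹
      = (1 - ‖c‖^2)⁻¹ *
        ((1 + c * Complex.exp (-(θ:ℂ) * Complex.I))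
          / (1 - c * Complex.exp (-(θ:ℂ) * Complex.I))).re := by
  set u : ℂ := c * Complex.exp (-(θ:ℂ) * Complex.I) with hu
  have hnu : ‖u‖ = ‖c‖ := norm_mul_exp c θ
  have hne : (1:ℂ) - u ≠ 0 := one_sub_ne c hc θ
  have hconj_ne : (starRingEnd ℂ) (1 - u) ≠ 0 := star_ne_zero.mpr hne
  have e1 : (1 + u) / (1 - u)
      = ((1 + u) * (starRingEnd ℂ) (1 - u)) / ((Complex.normSq (1-u) : ℝ) : ℂ) := by
    rw [← Complex.mul_conj]
    rw [mul_div_mul_right _ _ hconj_ne]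
  have e2 : ((1 + u) * (starRingEnd ℂ) (1 - u)).re = 1 - Complex.normSq u := by
    simp [Complex.mul_re, Complex.normSq_apply, Complex.sub_re, Complex.sub_im,
      Complex.add_re, Complex.add_im, Complex.conj_re, Complex.conj_im]
    ring
  have e3 : ((1 + u) / (1 - u)).re = (1 - Complex.normSq u) / Complex.normSq (1-u) := by
    rw [e1, Complex.div_ofReal_re, e2]
  rw [e3]
  have h1 : Complex.normSq u = ‖c‖^2 := by
    rw [← hnu, Complex.sq_norm]
  have h2 : ‖(1:ℂ) - u‖^2 = Complex.normSq (1-u) := by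
    rw [Complex.sq_norm]
  have hpos : (0:ℝ) < 1 - ‖c‖^2 := by
    have h3 : ‖c‖^2 < 1 := by nlinarith [norm_nonneg c]
    linarith
  have hnsq : Complex.normSq (1-u) ≠ 0 := by
    simpa [Complex.normSq_eq_zero] using hne
  rw [h2, h1]
  field_simp

/-- The circle integral bound: `∫⁻_{-π}^{π} |1-ce^{-iθ}|⁻² dθ ≤ 2π/(1-‖c‖²)`. -/
theorem circle_lintegral_le (c : ℂ) (hc : ‖c‖ < 1) :
    ∫⁻ θ in Set.Ioo (-π) π,
        ENNReal.ofReal ((‖1 - c * Complex.exp (-(θ:ℂ) * Complex.I)‖^2)⁻¹)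
      ≤ ENNReal.ofReal (2 * π / (1 - ‖c‖^2)) := by
  set h : ℝ → ℝ := fun θ => (‖1 - c * Complex.exp (-(θ:ℂ) * Complex.I)‖^2)⁻¹ with hh
  have hne : ∀ θ : ℝ, (1:ℂ) - c * Complex.exp (-(θ:ℂ) * Complex.I) ≠ 0 :=
    fun θ => one_sub_ne c hc θ
  have hcontu : Continuous fun θ : ℝ => (1:ℂ) - c * Complex.exp (-(θ:ℂ) * Complex.I) :=
    continuous_const.sub (continuous_const.mul
      ((Complex.continuous_ofReal.neg.mul continuous_const).cexp))
  have hcont : Continuous h := by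
    apply Continuous.inv₀ (hcontu.norm.pow 2)
    intro θ
    exact pow_ne_zero _ (norm_ne_zero_iff.mpr (hne θ))
  have hint : IntegrableOn h (Set.Ioo (-π) π) :=
    (hcont.continuousOn.integrableOn_compact isCompact_Icc).mono_set Set.Ioo_subset_Icc_self
  have hnonneg : 0 ≤ᵐ[volume.restrict (Set.Ioo (-π) π)] h := by
    refine Filter.Eventually.of_forall fun θ => ?_
    positivity
  rw [← ofReal_integral_eq_lintegral_ofReal hint hnonneg]
  apply ENNReal.ofReal_le_ofReal
  have hfi : IntegrableOn (fun θ : ℝ =>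
      (1 + c * Complex.exp (-(θ:ℂ) * Complex.I)) / (1 - c * Complex.exp (-(θ:ℂ) * Complex.I)))
      (Set.Ioo (-π) π) := by
    have hcont2 : Continuous fun θ : ℝ =>
        (1 + c * Complex.exp (-(θ:ℂ) * Complex.I)) / (1 - c * Complex.exp (-(θ:ℂ) * Complex.I)) :=
      (continuous_const.add (continuous_const.mul
        ((Complex.continuous_ofReal.neg.mul continuous_const).cexp))).div hcontu hne
    exact (hcont2.continuousOn.integrableOn_compact isCompact_Icc).mono_set
      Set.Ioo_subset_Icc_self
  have hpos : (0:ℝ) < 1 - ‖c‖^2 := by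
    have h3 : ‖c‖^2 < 1 := by nlinarith [norm_nonneg c]
    linarith
  calc ∫ θ in Set.Ioo (-π) π, h θ
      = ∫ θ in Set.Ioo (-π) π, (1 - ‖c‖^2)⁻¹ *
          ((1 + c * Complex.exp (-(θ:ℂ) * Complex.I))
            / (1 - c * Complex.exp (-(θ:ℂ) * Complex.I))).re := by
        congr 1; funext θ; exact poisson_pointwise c hc θ
    _ = (1 - ‖c‖^2)⁻¹ * ∫ θ in Set.Ioo (-π) π,
          ((1 + c * Complex.exp (-(θ:ℂ) * Complex.I))
            / (1 - c * Complex.exp (-(θ:ℂ) * Complex.I))).re := integral_const_mul _ _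
    _ = (1 - ‖c‖^2)⁻¹ * (2 * π) := by
        have hre := integral_re (𝕜 := ℂ) hfi
        simp only [RCLike.re_to_complex] at hre
        rw [hre, cayley_integral c hc]
        simp
    _ ≤ 2 * π / (1 - ‖c‖^2) := by
        rw [div_eq_inv_mul]

/-- Circle sup of `g`. -/
def Mfun (g : ℂ → ℂ) (r : ℝ) : ℝ≥0∞ :=
  ⨆ θ ∈ Set.Icc (-π) π, (‖g ((r : ℂ) * Complex.exp ((θ : ℂ) * Complex.I))‖₊ : ℝ≥0∞)

theorem norm_circle (r θ : ℝ) (hr : 0 ≤ r) :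
    ‖(r : ℂ) * Complex.exp ((θ : ℂ) * Complex.I)‖ = r := by
  rw [norm_mul, Complex.norm_exp_ofReal_mul_I,
    mul_one, Complex.norm_real, Real.norm_eq_abs, abs_of_nonneg hr]

theorem mem_ball_circle (r θ : ℝ) (hr : 0 ≤ r) (hr1 : r < 1) :
    (r : ℂ) * Complex.exp ((θ : ℂ) * Complex.I) ∈ ball (0:ℂ) 1 := by
  rw [mem_ball, dist_eq_norm, sub_zero, norm_circle r θ hr]
  exact hr1

theorem nnnorm_le_Mfun (g : ℂ → ℂ) (r : ℝ) {θ : ℝ} (hθ : θ ∈ Set.Icc (-π) π) :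
    (‖g ((r : ℂ) * Complex.exp ((θ : ℂ) * Complex.I))‖₊ : ℝ≥0∞) ≤ Mfun g r :=
  le_iSup₂ (f := fun θ (_ : θ ∈ Set.Icc (-π) π) =>
    (‖g ((r : ℂ) * Complex.exp ((θ : ℂ) * Complex.I))‖₊ : ℝ≥0∞)) θ hθ

theorem Mfun_eq_rat {g : ℂ → ℂ} (hgc : ContinuousOn g (ball (0:ℂ) 1)) {r : ℝ}
    (hr : r ∈ Set.Ioo (0:ℝ) 1) :
    Mfun g r = ⨆ (q : ℚ) (_ : (q : ℝ) ∈ Set.Icc (-π) π),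
      (‖g ((r : ℂ) * Complex.exp (((q : ℝ) : ℂ) * Complex.I))‖₊ : ℝ≥0∞) := by
  apply le_antisymm
  · apply iSup₂_le
    intro θ hθ
    have hcontg : Continuous fun t : ℝ => g ((r : ℂ) * Complex.exp ((t : ℂ) * Complex.I)) := by
      apply hgc.comp_continuous
      · exact continuous_const.mul ((Complex.continuous_ofReal.mul continuous_const).cexp)
      · exact fun t => mem_ball_circle r t hr.1.le hr.2
    apply ENNReal.le_of_forall_pos_le_add
    intro ε hε _
    have hδ := Metric.continuous_iff.mp hcontg θ (ε : ℝ) (by exact_mod_cast hε)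
    obtain ⟨δ, hδpos, hδ⟩ := hδ
    have hlt : max (θ - δ) (-π) < min (θ + δ) π := by
      rcases hθ with ⟨h1, h2⟩
      have := Real.pi_pos
      apply max_lt <;> apply lt_min <;> linarith
    obtain ⟨q, hq1, hq2⟩ := exists_rat_btwn hlt
    have hqIcc : (q : ℝ) ∈ Set.Icc (-π) π :=
      ⟨(le_max_right _ _).trans hq1.le, hq2.le.trans (min_le_right _ _)⟩
    have hqδ : dist (q : ℝ) θ < δ := by
      rw [Real.dist_eq, abs_sub_lt_iff]
      constructor
      · have := hq2.trans_le (min_le_left _ _); linarith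
      · have := (le_max_left (θ - δ) (-π)).trans_lt hq1; linarith
    have hdist := hδ (q : ℝ) hqδ
    set x := g ((r : ℂ) * Complex.exp ((θ : ℂ) * Complex.I))
    set y := g ((r : ℂ) * Complex.exp (((q : ℝ) : ℂ) * Complex.I))
    have hxy : ‖x‖₊ ≤ ‖y‖₊ + ε := by
      have h1 : ‖x‖ ≤ ‖y‖ + ‖y - x‖ := by
        have := norm_sub_norm_le y x
        have h2 := norm_sub_rev y x
        nlinarith [norm_nonneg (y - x), norm_nonneg x, norm_nonneg y,
          abs_norm_sub_norm_le y x, le_abs_self (‖y‖ - ‖x‖), neg_abs_le (‖y‖ - ‖x‖)]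
      have h3 : ‖y - x‖ ≤ (ε : ℝ) := by
        rw [dist_eq_norm] at hdist
        exact (norm_sub_rev y x ▸ hdist.le)
      rw [← NNReal.coe_le_coe]
      push_cast
      calc (‖x‖ : ℝ) ≤ ‖y‖ + ‖y - x‖ := h1
        _ ≤ ‖y‖ + ε := by linarith
    calc (‖x‖₊ : ℝ≥0∞) ≤ (‖y‖₊ : ℝ≥0∞) + (ε : ℝ≥0∞) := by
          exact_mod_cast hxy
      _ ≤ (⨆ (q : ℚ) (_ : (q : ℝ) ∈ Set.Icc (-π) π),
            (‖g ((r : ℂ) * Complex.exp (((q : ℝ) : ℂ) * Complex.I))‖₊ : ℝ≥0∞)) + ε := by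
          gcongr
          exact le_iSup₂ (f := fun (q : ℚ) (_ : (q : ℝ) ∈ Set.Icc (-π) π) =>
            (‖g ((r : ℂ) * Complex.exp (((q : ℝ) : ℂ) * Complex.I))‖₊ : ℝ≥0∞)) q hqIcc
  · apply iSup₂_le
    intro q hq
    exact nnnorm_le_Mfun g r hq

theorem exists_M0 {g : ℂ → ℂ} (hgc : ContinuousOn g (ball (0:ℂ) 1)) :
    ∃ M₀ : ℝ → ℝ≥0∞, Measurable M₀ ∧
      (fun r => Mfun g r) =ᵐ[volume.restrict (Set.Ioo (0:ℝ) 1)] M₀ := by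
  have haem : AEMeasurable (fun r : ℝ => ⨆ (q : ℚ) (_ : (q : ℝ) ∈ Set.Icc (-π) π),
      (‖g ((r : ℂ) * Complex.exp (((q : ℝ) : ℂ) * Complex.I))‖₊ : ℝ≥0∞))
      (volume.restrict (Set.Ioo (0:ℝ) 1)) := by
    apply AEMeasurable.iSup
    intro q
    apply AEMeasurable.iSup
    intro hq
    have hcont : ContinuousOn (fun r : ℝ =>
        (‖g ((r : ℂ) * Complex.exp (((q : ℝ) : ℂ) * Complex.I))‖₊ : ℝ≥0∞)) (Set.Ioo 0 1) := by
      apply Continuous.comp_continuousOn (ENNReal.continuous_coe.comp continuous_nnnorm)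
      apply hgc.comp
      · exact (Complex.continuous_ofReal.mul continuous_const).continuousOn
      · intro r hr
        exact mem_ball_circle r q hr.1.le hr.2
    exact hcont.aemeasurable measurableSet_Ioo
  have heq : (fun r => Mfun g r) =ᵐ[volume.restrict (Set.Ioo (0:ℝ) 1)]
      (fun r : ℝ => ⨆ (q : ℚ) (_ : (q : ℝ) ∈ Set.Icc (-π) π),
        (‖g ((r : ℂ) * Complex.exp (((q : ℝ) : ℂ) * Complex.I))‖₊ : ℝ≥0∞)) := by
    refine (ae_restrict_iff' measurableSet_Ioo).mpr (Filter.Eventually.of_forall fun r hr => ?_)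
    exact Mfun_eq_rat hgc hr
  have haem2 : AEMeasurable (fun r => Mfun g r) (volume.restrict (Set.Ioo (0:ℝ) 1)) :=
    haem.congr heq.symm
  exact ⟨haem2.mk _, haem2.measurable_mk, haem2.ae_eq_mk⟩

theorem master {g : ℂ → ℂ} (M₀ : ℝ → ℝ≥0∞) (hM₀ : Measurable M₀)
    (hae : (fun r => Mfun g r) =ᵐ[volume.restrict (Set.Ioo (0:ℝ) 1)] M₀)
    (u : ℂ → ℝ≥0∞) (k : ℝ → ℝ → ℝ≥0∞) (hk : Measurable (Function.uncurry k))
    (hu : ∀ r ∈ Set.Ioo (0:ℝ) 1, ∀ θ ∈ Set.Ioo (-π) π,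
      u ((r : ℂ) * Complex.exp ((θ : ℂ) * Complex.I))
        ≤ (‖g ((r : ℂ) * Complex.exp ((θ : ℂ) * Complex.I))‖₊ : ℝ≥0∞) * k r θ) :
    ∫⁻ z in ball (0:ℂ) 1, u z
      ≤ ∫⁻ r in Set.Ioo (0:ℝ) 1,
          M₀ r * (ENNReal.ofReal r * ∫⁻ θ in Set.Ioo (-π) π, k r θ) := by
  have hA : MeasurableSet ((Set.Ioo (0:ℝ) 1) ×ˢ (Set.Ioo (-π) π)) :=
    measurableSet_Ioo.prod measurableSet_Ioo
  rw [lintegral_ball_polar u]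
  have step1 : ∫⁻ p in (Set.Ioo (0:ℝ) 1) ×ˢ (Set.Ioo (-π) π),
      ENNReal.ofReal p.1 * u ((p.1 : ℂ) * Complex.exp ((p.2 : ℂ) * Complex.I))
      ≤ ∫⁻ p in (Set.Ioo (0:ℝ) 1) ×ˢ (Set.Ioo (-π) π),
        Mfun g p.1 * (ENNReal.ofReal p.1 * k p.1 p.2) := by
    refine setLIntegral_mono' hA fun p hp => ?_
    calc ENNReal.ofReal p.1 * u ((p.1 : ℂ) * Complex.exp ((p.2 : ℂ) * Complex.I))
        ≤ ENNReal.ofReal p.1 *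
            ((‖g ((p.1 : ℂ) * Complex.exp ((p.2 : ℂ) * Complex.I))‖₊ : ℝ≥0∞) * k p.1 p.2) :=
          mul_le_mul_right (hu p.1 hp.1 p.2 hp.2) _
      _ ≤ ENNReal.ofReal p.1 * (Mfun g p.1 * k p.1 p.2) := by
          gcongr
          exact nnnorm_le_Mfun g p.1 ⟨hp.2.1.le, hp.2.2.le⟩
      _ = Mfun g p.1 * (ENNReal.ofReal p.1 * k p.1 p.2) := by ring
  have step2 : ∫⁻ p in (Set.Ioo (0:ℝ) 1) ×ˢ (Set.Ioo (-π) π),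
      Mfun g p.1 * (ENNReal.ofReal p.1 * k p.1 p.2)
      = ∫⁻ p in (Set.Ioo (0:ℝ) 1) ×ˢ (Set.Ioo (-π) π),
        M₀ p.1 * (ENNReal.ofReal p.1 * k p.1 p.2) := by
    apply lintegral_congr_ae
    have hnull : (volume.restrict ((Set.Ioo (0:ℝ) 1) ×ˢ (Set.Ioo (-π) π)))
        {p : ℝ × ℝ | Mfun g p.1 ≠ M₀ p.1} = 0 := by
      have h1 : (volume.restrict (Set.Ioo (0:ℝ) 1)) {r | Mfun g r ≠ M₀ r} = 0 := hae
      rw [Measure.restrict_apply' measurableSet_Ioo] at h1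
      obtain ⟨G, hGsub, hGmeas, hGnull⟩ :=
        exists_measurable_superset_of_null h1
      rw [Measure.restrict_apply' hA]
      have hsub : {p : ℝ × ℝ | Mfun g p.1 ≠ M₀ p.1} ∩
          ((Set.Ioo (0:ℝ) 1) ×ˢ (Set.Ioo (-π) π)) ⊆ G ×ˢ (Set.Ioo (-π) π) := by
        rintro ⟨r, θ⟩ ⟨h1', h2'⟩
        exact ⟨hGsub ⟨h1', h2'.1⟩, h2'.2⟩
      refine measure_mono_null hsub ?_
      rw [Measure.volume_eq_prod, Measure.prod_prod, hGnull, zero_mul]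
    refine (Filter.eventuallyEq_iff_exists_mem.mpr ?_)
    refine ⟨{p : ℝ × ℝ | Mfun g p.1 = M₀ p.1}, ?_, fun p hp => by
      rw [Set.mem_setOf_eq] at hp; simp only [hp]⟩
    show _ ∈ ae _
    rw [mem_ae_iff]
    simpa [Set.compl_setOf] using hnull
  have hmeas : Measurable fun p : ℝ × ℝ => M₀ p.1 * (ENNReal.ofReal p.1 * k p.1 p.2) := by
    apply Measurable.mul (hM₀.comp measurable_fst)
    exact ((ENNReal.measurable_ofReal.comp measurable_fst).mul hk)
  rw [step2, lintegral_prod_Ioo _ hmeas] at step1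
  refine step1.trans (le_of_eq ?_)
  apply setLIntegral_congr_fun measurableSet_Ioo
  refine fun r _ => ?_
  have hkr : Measurable (k r) := hk.of_uncurry_left
  simp_rw [← mul_assoc]
  rw [lintegral_const_mul _ hkr, mul_assoc]

theorem log_nonneg' {r : ℝ} (hr : r ∈ Set.Ioo (0:ℝ) 1) : 0 ≤ Real.log (1/r) :=
  Real.log_nonneg (one_le_one_div hr.1 hr.2.le)

theorem rlog_le {r : ℝ} (hr : r ∈ Set.Ioo (0:ℝ) 1) : r * Real.log (1/r) ≤ 1 - r := by
  have hr0 := hr.1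
  have h := Real.log_le_sub_one_of_pos (show (0:ℝ) < 1/r by positivity)
  have h2 : r * Real.log (1/r) ≤ r * (1/r - 1) :=
    mul_le_mul_of_nonneg_left h hr.1.le
  have h3 : r * (1/r - 1) = 1 - r := by
    rw [mul_sub, mul_one_div, div_self hr.1.ne', mul_one]
  linarith

theorem conj_circle (r θ : ℝ) :
    (starRingEnd ℂ) ((r : ℂ) * Complex.exp ((θ : ℂ) * Complex.I))
      = (r : ℂ) * Complex.exp (-(θ:ℂ) * Complex.I) := by
  rw [map_mul, Complex.conj_ofReal, ← Complex.exp_conj]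
  congr 2
  rw [map_mul, Complex.conj_ofReal, Complex.conj_I]
  ring

theorem one_sub_wr_ne (w : ℂ) (hw : ‖w‖ < 1) {r : ℝ} (hr : r ∈ Set.Ioo (0:ℝ) 1) (θ : ℝ) :
    (1 : ℂ) - (w * (r:ℂ)) * Complex.exp (-(θ:ℂ) * Complex.I) ≠ 0 := by
  apply one_sub_ne
  rw [norm_mul, Complex.norm_real, Real.norm_eq_abs, abs_of_pos hr.1]
  nlinarith [norm_nonneg w, hr.1, hr.2]

theorem norm_wr_lt (w : ℂ) (hw : ‖w‖ < 1) {r : ℝ} (hr : r ∈ Set.Ioo (0:ℝ) 1) :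
    ‖w * (r:ℂ)‖ < 1 := by
  rw [norm_mul, Complex.norm_real, Real.norm_eq_abs, abs_of_pos hr.1]
  nlinarith [norm_nonneg w, hr.1, hr.2]

/-- Measurability of the circle kernel. -/
theorem meas_kernel (w : ℂ) : Measurable (Function.uncurry fun (r θ : ℝ) =>
    ENNReal.ofReal (Real.log (1/r)) *
      ENNReal.ofReal ((‖1 - (w * (r:ℂ)) * Complex.exp (-(θ:ℂ) * Complex.I)‖^2)⁻¹)) := by
  simp only [Function.uncurry_def]
  apply Measurable.fun_mul
  · exact ENNReal.measurable_ofReal.comp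
      (Real.measurable_log.comp (measurable_const.div measurable_fst))
  · apply ENNReal.measurable_ofReal.comp
    apply Measurable.inv
    apply Measurable.pow_const
    apply Measurable.norm
    apply Measurable.sub measurable_const
    apply Measurable.fun_mul
    · exact measurable_const.mul (Complex.measurable_ofReal.comp measurable_fst)
    · apply Continuous.measurable
      exact (((Complex.continuous_ofReal.comp continuous_snd).neg).mul continuous_const).cexp

/-- Scalar inequality for step 1. -/
theorem scalar1 {r s : ℝ} (hr : r ∈ Set.Ioo (0:ℝ) 1) (hs0 : 0 ≤ s) (hs : s < 1) :
    r * (Real.log (1/r) * (2 * π / (1 - (s*r)^2))) ≤ 2 * π := by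
  have hsr0 : 0 ≤ s * r := mul_nonneg hs0 hr.1.le
  have hsr1 : s * r < 1 := lt_of_le_of_lt (mul_le_of_le_one_right hs0 hr.2.le) hs
  have hc : 0 < 1 - (s*r)^2 := by nlinarith
  have h1 : r * Real.log (1/r) ≤ 1 - r := rlog_le hr
  have h4 : s * r ≤ r := mul_le_of_le_one_left hr.1.le hs.le
  have h5 : (s*r)^2 ≤ r^2 := pow_le_pow_left₀ hsr0 h4 2
  have h2 : (s*r)^2 ≤ r := by nlinarith [hr.1, hr.2]
  have hπ := Real.pi_pos
  calc r * (Real.log (1/r) * (2 * π / (1 - (s*r)^2)))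
      = (r * Real.log (1/r)) * (2 * π / (1 - (s*r)^2)) := by ring
    _ ≤ (1 - (s*r)^2) * (2 * π / (1 - (s*r)^2)) := by
        apply mul_le_mul_of_nonneg_right (by nlinarith) (by positivity)
    _ = 2 * π := by field_simp; exact div_self (ne_of_gt (by nlinarith))

/-- Application 1: the basic `log` integrability bound. -/
theorem lint_log {g : ℂ → ℂ} (M₀ : ℝ → ℝ≥0∞) (hM₀ : Measurable M₀)
    (hae : (fun r => Mfun g r) =ᵐ[volume.restrict (Set.Ioo (0:ℝ) 1)] M₀) :
    ∫⁻ z in ball (0:ℂ) 1, ENNReal.ofReal (Real.log (1/‖z‖)) * (‖g z‖₊ : ℝ≥0∞)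
      ≤ ENNReal.ofReal (2*π) * ∫⁻ r in Set.Ioo (0:ℝ) 1, M₀ r := by
  have h := master M₀ hM₀ hae
    (fun z => ENNReal.ofReal (Real.log (1/‖z‖)) * (‖g z‖₊ : ℝ≥0∞))
    (fun r _ => ENNReal.ofReal (Real.log (1/r)))
    (ENNReal.measurable_ofReal.comp
      (Real.measurable_log.comp (measurable_const.div measurable_fst)))
    (fun r hr θ hθ => by
      rw [norm_circle r θ hr.1.le]
      exact le_of_eq (mul_comm _ _))
  refine h.trans ?_
  have hmono : ∫⁻ r in Set.Ioo (0:ℝ) 1,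
      M₀ r * (ENNReal.ofReal r * ∫⁻ _ in Set.Ioo (-π) π, ENNReal.ofReal (Real.log (1/r)))
      ≤ ∫⁻ r in Set.Ioo (0:ℝ) 1, M₀ r * ENNReal.ofReal (2*π) := by
    refine setLIntegral_mono' measurableSet_Ioo fun r hr => ?_
    apply mul_le_mul_right
    rw [lintegral_const, Measure.restrict_apply MeasurableSet.univ, Set.univ_inter,
      Real.volume_Ioo]
    rw [← ENNReal.ofReal_mul (log_nonneg' hr), ← ENNReal.ofReal_mul hr.1.le]
    apply ENNReal.ofReal_le_ofReal
    have h1 : r * Real.log (1/r) ≤ 1 - r := rlog_le hr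
    have hπ := Real.pi_pos
    have hlog := log_nonneg' hr
    calc r * (Real.log (1/r) * (π - -π)) = (r * Real.log (1/r)) * (2*π) := by ring
      _ ≤ 1 * (2*π) := by nlinarith [hr.1, hr.2]
      _ = 2*π := by ring
  refine hmono.trans (le_of_eq ?_)
  simp_rw [mul_comm (M₀ _) (ENNReal.ofReal (2*π))]
  exact lintegral_const_mul _ hM₀

/-- Application 2: bound for the integrand of `Qg`. -/
theorem sup_bound {g : ℂ → ℂ} (M₀ : ℝ → ℝ≥0∞) (hM₀ : Measurable M₀)
    (hae : (fun r => Mfun g r) =ᵐ[volume.restrict (Set.Ioo (0:ℝ) 1)] M₀)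
    (w : ℂ) (hw : ‖w‖ < 1) :
    ∫⁻ z in ball (0:ℂ) 1,
        (‖((Real.log (1 / ‖z‖) : ℂ) * w * g z * ((1 - w * (starRingEnd ℂ) z) ^ 2)⁻¹ : ℂ)‖₊ : ℝ≥0∞)
      ≤ ENNReal.ofReal (2*π) * ∫⁻ r in Set.Ioo (0:ℝ) 1, M₀ r := by
  have h := master M₀ hM₀ hae
    (fun z => (‖((Real.log (1 / ‖z‖) : ℂ) * w * g z *
        ((1 - w * (starRingEnd ℂ) z) ^ 2)⁻¹ : ℂ)‖₊ : ℝ≥0∞))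
    (fun r θ => ENNReal.ofReal (Real.log (1/r)) *
      ENNReal.ofReal ((‖1 - (w * (r:ℂ)) * Complex.exp (-(θ:ℂ) * Complex.I)‖^2)⁻¹))
    (meas_kernel w)
    ?_
  · refine h.trans ?_
    have hmono : ∫⁻ r in Set.Ioo (0:ℝ) 1,
        M₀ r * (ENNReal.ofReal r * ∫⁻ θ in Set.Ioo (-π) π,
          ENNReal.ofReal (Real.log (1/r)) *
            ENNReal.ofReal ((‖1 - (w * (r:ℂ)) * Complex.exp (-(θ:ℂ) * Complex.I)‖^2)⁻¹))
        ≤ ∫⁻ r in Set.Ioo (0:ℝ) 1, M₀ r * ENNReal.ofReal (2*π) := by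
      refine setLIntegral_mono' measurableSet_Ioo fun r hr => ?_
      apply mul_le_mul_right
      have hmeasθ : Measurable fun θ : ℝ =>
          ENNReal.ofReal ((‖1 - (w * (r:ℂ)) * Complex.exp (-(θ:ℂ) * Complex.I)‖^2)⁻¹) := by
        apply ENNReal.measurable_ofReal.comp
        apply Measurable.inv
        apply Measurable.pow_const
        apply Measurable.norm
        apply Measurable.sub measurable_const
        apply Continuous.measurable
        exact continuous_const.mul
          (((Complex.continuous_ofReal.neg).mul continuous_const).cexp)
      rw [lintegral_const_mul _ hmeasθ]
      have hc := circle_lintegral_le (w * (r:ℂ)) (norm_wr_lt w hw hr)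
      have hnorm : ‖w * (r:ℂ)‖ = ‖w‖ * r := by
        rw [norm_mul, Complex.norm_real, Real.norm_eq_abs, abs_of_pos hr.1]
      calc ENNReal.ofReal r * (ENNReal.ofReal (Real.log (1/r)) *
            ∫⁻ θ in Set.Ioo (-π) π,
              ENNReal.ofReal ((‖1 - (w * (r:ℂ)) * Complex.exp (-(θ:ℂ) * Complex.I)‖^2)⁻¹))
          ≤ ENNReal.ofReal r * (ENNReal.ofReal (Real.log (1/r)) *
              ENNReal.ofReal (2 * π / (1 - ‖w * (r:ℂ)‖^2))) := by gcongr
        _ ≤ ENNReal.ofReal (2*π) := by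
            rw [← ENNReal.ofReal_mul (log_nonneg' hr), ← ENNReal.ofReal_mul hr.1.le]
            apply ENNReal.ofReal_le_ofReal
            rw [hnorm]
            exact scalar1 hr (norm_nonneg w) hw
    refine hmono.trans (le_of_eq ?_)
    simp_rw [mul_comm (M₀ _) (ENNReal.ofReal (2*π))]
    exact lintegral_const_mul _ hM₀
  · intro r hr θ hθ
    have hz : ‖(r:ℂ) * Complex.exp ((θ:ℂ) * Complex.I)‖ = r := norm_circle r θ hr.1.le
    have hzb : w * (starRingEnd ℂ) ((r:ℂ) * Complex.exp ((θ:ℂ) * Complex.I))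
        = (w * (r:ℂ)) * Complex.exp (-(θ:ℂ) * Complex.I) := by
      rw [conj_circle]; ring
    have hlog := log_nonneg' hr
    have hinvnn : (0:ℝ) ≤ (‖1 - (w * (r:ℂ)) * Complex.exp (-(θ:ℂ) * Complex.I)‖^2)⁻¹ := by
      positivity
    simp only [← enorm_eq_nnnorm, ← ofReal_norm]
    rw [← ENNReal.ofReal_mul hlog, ← ENNReal.ofReal_mul (norm_nonneg _)]
    apply ENNReal.ofReal_le_ofReal
    rw [hz, hzb, norm_mul, norm_mul, norm_mul, norm_inv, norm_pow, Complex.norm_real,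
      Real.norm_eq_abs, abs_of_nonneg hlog]
    have hw1 : ‖w‖ ≤ 1 := hw.le
    have hgnn : (0:ℝ) ≤ ‖g ((r:ℂ) * Complex.exp ((θ:ℂ) * Complex.I))‖ := norm_nonneg _
    nlinarith [mul_nonneg (mul_nonneg hlog hgnn) hinvnn, norm_nonneg w,
      mul_nonneg hlog hinvnn]

/-- Application 3: bound for the derivative integrand. -/
theorem deriv_bound {g : ℂ → ℂ} (M₀ : ℝ → ℝ≥0∞) (hM₀ : Measurable M₀)
    (hae : (fun r => Mfun g r) =ᵐ[volume.restrict (Set.Ioo (0:ℝ) 1)] M₀)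
    (w : ℂ) (hw : ‖w‖ < 1) :
    ∫⁻ z in ball (0:ℂ) 1,
        (‖((Real.log (1 / ‖z‖) : ℂ) * g z *
          ((1 + w * (starRingEnd ℂ) z) * (((1 - w * (starRingEnd ℂ) z) ^ 3)⁻¹)) : ℂ)‖₊ : ℝ≥0∞)
      ≤ ∫⁻ r in Set.Ioo (0:ℝ) 1,
          M₀ r * ENNReal.ofReal (2*π * (r * Real.log (1/r)) * ((1 - ‖w‖*r)^2)⁻¹) := by
  have h := master M₀ hM₀ hae
    (fun z => (‖((Real.log (1 / ‖z‖) : ℂ) * g z *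
        ((1 + w * (starRingEnd ℂ) z) * (((1 - w * (starRingEnd ℂ) z) ^ 3)⁻¹)) : ℂ)‖₊ : ℝ≥0∞))
    (fun r θ => ENNReal.ofReal (Real.log (1/r) * ((1 + ‖w‖*r) * (1 - ‖w‖*r)⁻¹)) *
      ENNReal.ofReal ((‖1 - (w * (r:ℂ)) * Complex.exp (-(θ:ℂ) * Complex.I)‖^2)⁻¹))
    ?_ ?_
  · refine h.trans ?_
    refine setLIntegral_mono' measurableSet_Ioo fun r hr => ?_
    apply mul_le_mul_right
    have hmeasθ : Measurable fun θ : ℝ =>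
        ENNReal.ofReal ((‖1 - (w * (r:ℂ)) * Complex.exp (-(θ:ℂ) * Complex.I)‖^2)⁻¹) := by
      apply ENNReal.measurable_ofReal.comp
      apply Measurable.inv
      apply Measurable.pow_const
      apply Measurable.norm
      apply Measurable.sub measurable_const
      apply Continuous.measurable
      exact continuous_const.mul
        (((Complex.continuous_ofReal.neg).mul continuous_const).cexp)
    rw [lintegral_const_mul _ hmeasθ]
    have hc := circle_lintegral_le (w * (r:ℂ)) (norm_wr_lt w hw hr)
    have hnorm : ‖w * (r:ℂ)‖ = ‖w‖ * r := by
      rw [norm_mul, Complex.norm_real, Real.norm_eq_abs, abs_of_pos hr.1]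
    have ht1 : ‖w‖ * r < 1 := by rw [← hnorm]; exact norm_wr_lt w hw hr
    have ht0 : 0 ≤ ‖w‖ * r := mul_nonneg (norm_nonneg w) hr.1.le
    have hCnn : 0 ≤ Real.log (1/r) * ((1 + ‖w‖*r) * (1 - ‖w‖*r)⁻¹) := by
      have := log_nonneg' hr
      have h2 : (0:ℝ) < 1 - ‖w‖*r := by linarith
      positivity
    calc ENNReal.ofReal r * (ENNReal.ofReal (Real.log (1/r) * ((1 + ‖w‖*r) * (1 - ‖w‖*r)⁻¹)) *
          ∫⁻ θ in Set.Ioo (-π) π,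
            ENNReal.ofReal ((‖1 - (w * (r:ℂ)) * Complex.exp (-(θ:ℂ) * Complex.I)‖^2)⁻¹))
        ≤ ENNReal.ofReal r * (ENNReal.ofReal (Real.log (1/r) * ((1 + ‖w‖*r) * (1 - ‖w‖*r)⁻¹)) *
            ENNReal.ofReal (2 * π / (1 - ‖w * (r:ℂ)‖^2))) := by gcongr
      _ = ENNReal.ofReal (2*π * (r * Real.log (1/r)) * ((1 - ‖w‖*r)^2)⁻¹) := by
          rw [← ENNReal.ofReal_mul hCnn, ← ENNReal.ofReal_mul hr.1.le, hnorm]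
          congr 1
          have h2 : (0:ℝ) < 1 - ‖w‖*r := by linarith
          have h3 : (0:ℝ) < 1 + ‖w‖*r := by linarith
          have h4 : 1 - (‖w‖*r)^2 = (1 - ‖w‖*r) * (1 + ‖w‖*r) := by ring
          rw [h4]
          have key : ((1:ℝ)+‖w‖*r) * (1-‖w‖*r)⁻¹ * (2*π/((1-‖w‖*r)*(1+‖w‖*r)))
              = 2*π*(((1-‖w‖*r))^2)⁻¹ := by
            rw [div_eq_mul_inv, mul_inv, sq, mul_inv]
            calc ((1:ℝ)+‖w‖*r) * (1-‖w‖*r)⁻¹ * (2*π*((1-‖w‖*r)⁻¹*(1+‖w‖*r)⁻¹))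
                = (((1:ℝ)+‖w‖*r) * (1+‖w‖*r)⁻¹) * (2*π) * ((1-‖w‖*r)⁻¹*(1-‖w‖*r)⁻¹) := by
                  ring
              _ = 2*π*((1-‖w‖*r)⁻¹*(1-‖w‖*r)⁻¹) := by
                  rw [mul_inv_cancel₀ h3.ne', one_mul]
          calc r * (Real.log (1/r) * ((1+‖w‖*r)*(1-‖w‖*r)⁻¹) *
                (2*π/((1-‖w‖*r)*(1+‖w‖*r))))
              = r * Real.log (1/r) *
                  (((1+‖w‖*r)*(1-‖w‖*r)⁻¹) * (2*π/((1-‖w‖*r)*(1+‖w‖*r)))) := by ring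
            _ = r * Real.log (1/r) * (2*π*(((1-‖w‖*r))^2)⁻¹) := by rw [key]
            _ = 2*π*(r*Real.log (1/r))*((1-‖w‖*r)^2)⁻¹ := by ring
  · -- measurability of the kernel
    simp only [Function.uncurry_def]
    apply Measurable.fun_mul
    · apply ENNReal.measurable_ofReal.comp
      apply Measurable.fun_mul
      · exact Real.measurable_log.comp (measurable_const.div measurable_fst)
      · apply Measurable.fun_mul
        · exact (measurable_const.mul measurable_fst).const_add 1
        · exact ((measurable_const.mul measurable_fst).const_sub 1).inv
    · apply ENNReal.measurable_ofReal.comp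
      apply Measurable.inv
      apply Measurable.pow_const
      apply Measurable.norm
      apply Measurable.sub measurable_const
      apply Measurable.fun_mul
      · exact measurable_const.mul (Complex.measurable_ofReal.comp measurable_fst)
      · apply Continuous.measurable
        exact (((Complex.continuous_ofReal.comp continuous_snd).neg).mul continuous_const).cexp
  · -- pointwise bound
    intro r hr θ hθ
    have hz : ‖(r:ℂ) * Complex.exp ((θ:ℂ) * Complex.I)‖ = r := norm_circle r θ hr.1.le
    have hzb : w * (starRingEnd ℂ) ((r:ℂ) * Complex.exp ((θ:ℂ) * Complex.I))
        = (w * (r:ℂ)) * Complex.exp (-(θ:ℂ) * Complex.I) := by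
      rw [conj_circle]; ring
    have hlog := log_nonneg' hr
    set u : ℂ := (w * (r:ℂ)) * Complex.exp (-(θ:ℂ) * Complex.I) with hu
    have hexp1 : ‖Complex.exp (-(θ:ℂ) * Complex.I)‖ = 1 := by
      have h : -(θ:ℂ) * Complex.I = ((-θ : ℝ) : ℂ) * Complex.I := by push_cast; ring
      rw [h, Complex.norm_exp_ofReal_mul_I]
    have hnu : ‖u‖ = ‖w‖ * r := by
      rw [hu, norm_mul, hexp1, mul_one, norm_mul, Complex.norm_real, Real.norm_eq_abs,
        abs_of_pos hr.1]
    have ht1 : ‖w‖ * r < 1 := by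
      nlinarith [norm_nonneg w, hr.1, hr.2]
    have ht0 : 0 ≤ ‖w‖ * r := mul_nonneg (norm_nonneg w) hr.1.le
    have hge : 1 - ‖w‖*r ≤ ‖1 - u‖ := by
      have := norm_sub_norm_le (1:ℂ) u
      rw [norm_one, hnu] at this
      linarith
    have hpos : (0:ℝ) < 1 - ‖w‖*r := by linarith
    have hle : ‖1 + u‖ ≤ 1 + ‖w‖*r := by
      have := norm_add_le (1:ℂ) u
      rw [norm_one, hnu] at this
      linarith
    simp only [← enorm_eq_nnnorm, ← ofReal_norm]
    rw [← ENNReal.ofReal_mul (by positivity), ← ENNReal.ofReal_mul (norm_nonneg _)]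
    apply ENNReal.ofReal_le_ofReal
    rw [hz, hzb, norm_mul, norm_mul, norm_mul, norm_inv, norm_pow, Complex.norm_real,
      Real.norm_eq_abs, abs_of_nonneg hlog]
    have hnormpos : (0:ℝ) < ‖1 - u‖ := by linarith
    have hcube : (‖1 - u‖^3)⁻¹ ≤ (1 - ‖w‖*r)⁻¹ * (‖1 - u‖^2)⁻¹ := by
      rw [← mul_inv]
      apply inv_anti₀ (by positivity)
      calc (1 - ‖w‖*r) * ‖1 - u‖^2 ≤ ‖1 - u‖ * ‖1 - u‖^2 := by
            apply mul_le_mul_of_nonneg_right hge (by positivity)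
        _ = ‖1 - u‖^3 := by ring
    have hgnn : (0:ℝ) ≤ ‖g ((r:ℂ) * Complex.exp ((θ:ℂ) * Complex.I))‖ := norm_nonneg _
    calc Real.log (1/r) * ‖g ((r:ℂ) * Complex.exp ((θ:ℂ) * Complex.I))‖ *
          (‖1 + u‖ * (‖1 - u‖^3)⁻¹)
        ≤ Real.log (1/r) * ‖g ((r:ℂ) * Complex.exp ((θ:ℂ) * Complex.I))‖ *
            ((1 + ‖w‖*r) * ((1 - ‖w‖*r)⁻¹ * (‖1 - u‖^2)⁻¹)) := by
          apply mul_le_mul_of_nonneg_left _ (by positivity)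
          apply mul_le_mul hle hcube (by positivity) (by positivity)
      _ = ‖g ((r:ℂ) * Complex.exp ((θ:ℂ) * Complex.I))‖ *
            (Real.log (1/r) * ((1 + ‖w‖*r) * (1 - ‖w‖*r)⁻¹) * (‖1 - u‖^2)⁻¹) := by ring

/-- FTC evaluation of the inner `s`-integral. -/
theorem s_integral {r : ℝ} (hr : r ∈ Set.Ioo (0:ℝ) 1) :
    ∫⁻ s in Set.Ioo (0:ℝ) 1, ENNReal.ofReal (((1 - s*r)^2)⁻¹)
      = ENNReal.ofReal ((1 - r)⁻¹) := by
  have hne : ∀ s ∈ Set.uIcc (0:ℝ) 1, 1 - s*r ≠ 0 := by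
    intro s hs
    rw [Set.uIcc_of_le (by norm_num)] at hs
    have h1 : s*r ≤ r := by nlinarith [hs.1, hs.2, hr.1, hr.2]
    have := hr.2
    intro h
    nlinarith
  have hcont : ContinuousOn (fun s : ℝ => ((1 - s*r)^2)⁻¹) (Set.uIcc (0:ℝ) 1) := by
    apply ContinuousOn.inv₀
    · exact ((continuous_const.sub (continuous_id.mul continuous_const)).pow 2).continuousOn
    · intro s hs
      exact pow_ne_zero 2 (hne s hs)
  have hint : IntervalIntegrable (fun s : ℝ => ((1 - s*r)^2)⁻¹) volume 0 1 :=
    hcont.intervalIntegrable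
  have hderiv : ∀ s ∈ Set.uIcc (0:ℝ) 1,
      HasDerivAt (fun s : ℝ => r⁻¹ * (1 - s*r)⁻¹) (((1 - s*r)^2)⁻¹) s := by
    intro s hs
    have h1 : HasDerivAt (fun s : ℝ => 1 - s*r) (-r) s := by
      simpa using ((hasDerivAt_id s).mul_const r).const_sub 1
    have h2 := (h1.inv (hne s hs))
    have h3 := h2.const_mul r⁻¹
    refine h3.congr_deriv ?_
    rw [neg_neg, mul_div_assoc', inv_mul_cancel₀ hr.1.ne', one_div]
  have hFTC := intervalIntegral.integral_eq_sub_of_hasDerivAt hderiv hint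
  have hval : ∫ s in (0:ℝ)..1, ((1 - s*r)^2)⁻¹ = (1-r)⁻¹ := by
    rw [hFTC]
    have h1 : (1:ℝ) - 1*r = 1 - r := by ring
    have h2 : (1:ℝ) - 0*r = 1 := by ring
    rw [h1, h2]
    have hr1 : (1:ℝ) - r ≠ 0 := by have := hr.2; intro h; linarith
    field_simp [hr.1.ne', hr1]
    ring
  have hIoo : IntegrableOn (fun s : ℝ => ((1 - s*r)^2)⁻¹) (Set.Ioo (0:ℝ) 1) := by
    have hcont' : ContinuousOn (fun s : ℝ => ((1 - s*r)^2)⁻¹) (Set.Icc (0:ℝ) 1) := by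
      rwa [Set.uIcc_of_le (by norm_num : (0:ℝ) ≤ 1)] at hcont
    exact (hcont'.integrableOn_compact isCompact_Icc).mono_set Set.Ioo_subset_Icc_self
  rw [← ofReal_integral_eq_lintegral_ofReal hIoo
    (Filter.Eventually.of_forall fun s => by positivity)]
  congr 1
  rw [← hval, intervalIntegral.integral_of_le (by norm_num : (0:ℝ) ≤ 1),
    MeasureTheory.integral_Ioc_eq_integral_Ioo]

/-- Step 3b: integrating the bound in `s`. -/
theorem besov_sum (M₀ : ℝ → ℝ≥0∞) (hM₀ : Measurable M₀) :
    ∫⁻ s in Set.Ioo (0:ℝ) 1, ∫⁻ r in Set.Ioo (0:ℝ) 1,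
        M₀ r * ENNReal.ofReal (2*π * (r * Real.log (1/r)) * ((1 - s*r)^2)⁻¹)
      ≤ ENNReal.ofReal (2*π) * ∫⁻ r in Set.Ioo (0:ℝ) 1, M₀ r := by
  have hmeas : Measurable fun p : ℝ × ℝ =>
      M₀ p.2 * ENNReal.ofReal (2*π * (p.2 * Real.log (1/p.2)) * ((1 - p.1*p.2)^2)⁻¹) := by
    apply Measurable.mul (hM₀.comp measurable_snd)
    apply ENNReal.measurable_ofReal.comp
    apply Measurable.mul
    · exact (measurable_snd.mul
        (Real.measurable_log.comp (measurable_const.div measurable_snd))).const_mul _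
    · exact (((measurable_fst.mul measurable_snd).const_sub 1).pow_const 2).inv
  rw [lintegral_lintegral_swap hmeas.aemeasurable]
  have hmono : ∫⁻ r in Set.Ioo (0:ℝ) 1, ∫⁻ s in Set.Ioo (0:ℝ) 1,
      M₀ r * ENNReal.ofReal (2*π * (r * Real.log (1/r)) * ((1 - s*r)^2)⁻¹)
      ≤ ∫⁻ r in Set.Ioo (0:ℝ) 1, M₀ r * ENNReal.ofReal (2*π) := by
    refine setLIntegral_mono' measurableSet_Ioo fun r hr => ?_
    have hlognn := log_nonneg' hr
    have hcnn : (0:ℝ) ≤ 2*π * (r * Real.log (1/r)) :=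
      mul_nonneg (by positivity) (mul_nonneg hr.1.le hlognn)
    have hsplit : ∀ s : ℝ, M₀ r * ENNReal.ofReal (2*π * (r * Real.log (1/r)) * ((1 - s*r)^2)⁻¹)
        = (M₀ r * ENNReal.ofReal (2*π * (r * Real.log (1/r)))) *
            ENNReal.ofReal (((1 - s*r)^2)⁻¹) := by
      intro s
      rw [ENNReal.ofReal_mul hcnn]
      exact (mul_assoc _ _ _).symm
    have hmeass : Measurable fun s : ℝ => ENNReal.ofReal (((1 - s*r)^2)⁻¹) :=
      ENNReal.measurable_ofReal.comp ((((measurable_id.mul_const r).const_sub 1).pow_const 2).inv)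
    calc ∫⁻ s in Set.Ioo (0:ℝ) 1,
          M₀ r * ENNReal.ofReal (2*π * (r * Real.log (1/r)) * ((1 - s*r)^2)⁻¹)
        = (M₀ r * ENNReal.ofReal (2*π * (r * Real.log (1/r)))) *
            ∫⁻ s in Set.Ioo (0:ℝ) 1, ENNReal.ofReal (((1 - s*r)^2)⁻¹) := by
          simp_rw [hsplit]
          exact lintegral_const_mul _ hmeass
      _ = (M₀ r * ENNReal.ofReal (2*π * (r * Real.log (1/r)))) * ENNReal.ofReal ((1 - r)⁻¹) := by
          rw [s_integral hr]
      _ ≤ M₀ r * ENNReal.ofReal (2*π) := by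
          rw [mul_assoc]
          apply mul_le_mul_right
          rw [← ENNReal.ofReal_mul hcnn]
          apply ENNReal.ofReal_le_ofReal
          have h1 : r * Real.log (1/r) ≤ 1 - r := rlog_le hr
          have h2 : (0:ℝ) < 1 - r := by have := hr.2; linarith
          have hπ := Real.pi_pos
          calc 2*π * (r * Real.log (1/r)) * (1-r)⁻¹ ≤ 2*π * (1-r) * (1-r)⁻¹ := by
                apply mul_le_mul_of_nonneg_right _ (by positivity)
                nlinarith
            _ = 2*π := by field_simp
  refine hmono.trans (le_of_eq ?_)
  simp_rw [mul_comm (M₀ _) (ENNReal.ofReal (2*π))]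
  exact lintegral_const_mul _ hM₀

theorem log_inv_norm_nonneg (z : ℂ) (hz : ‖z‖ < 1) : 0 ≤ Real.log (1/‖z‖) := by
  rcases eq_or_lt_of_le (norm_nonneg z) with h | h
  · rw [← h]
    simp
  · exact Real.log_nonneg (one_le_one_div h hz.le)

/-- Integrability of the basic majorant. -/
theorem integrableOn_log_norm {g : ℂ → ℂ} (hgc : ContinuousOn g (ball (0:ℂ) 1))
    (M₀ : ℝ → ℝ≥0∞) (hM₀ : Measurable M₀)
    (hae : (fun r => Mfun g r) =ᵐ[volume.restrict (Set.Ioo (0:ℝ) 1)] M₀)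
    (hfin : ∫⁻ r in Set.Ioo (0:ℝ) 1, M₀ r ≠ ⊤) :
    IntegrableOn (fun z => Real.log (1/‖z‖) * ‖g z‖) (ball (0:ℂ) 1) := by
  constructor
  · apply AEStronglyMeasurable.mul
    · exact (Real.measurable_log.comp
        (measurable_const.div measurable_norm)).aestronglyMeasurable
    · exact (hgc.norm.aestronglyMeasurable measurableSet_ball)
  · have hb : ∫⁻ z in ball (0:ℂ) 1, ‖Real.log (1/‖z‖) * ‖g z‖‖₊ ∂volume
        ≤ ENNReal.ofReal (2*π) * ∫⁻ r in Set.Ioo (0:ℝ) 1, M₀ r := by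
      refine le_trans (setLIntegral_mono' measurableSet_ball fun z hz => ?_)
        (lint_log M₀ hM₀ hae)
      have hz' : ‖z‖ < 1 := by simpa [mem_ball, dist_eq_norm] using hz
      have hlognn := log_inv_norm_nonneg z hz'
      simp only [← enorm_eq_nnnorm, ← ofReal_norm]
      rw [← ENNReal.ofReal_mul hlognn]
      apply ENNReal.ofReal_le_ofReal
      rw [Real.norm_eq_abs, abs_of_nonneg (mul_nonneg hlognn (norm_nonneg _))]
    exact lt_of_le_of_lt hb (ENNReal.mul_lt_top ENNReal.ofReal_lt_top hfin.lt_top)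

theorem norm_one_sub_ge {w z : ℂ} (hz : ‖z‖ ≤ 1) :
    1 - ‖w‖ ≤ ‖1 - w * (starRingEnd ℂ) z‖ := by
  have h1 : ‖w * (starRingEnd ℂ) z‖ ≤ ‖w‖ := by
    rw [norm_mul, RCLike.norm_conj]
    nlinarith [norm_nonneg w, norm_nonneg z]
  have h2 := norm_sub_norm_le (1:ℂ) (w * (starRingEnd ℂ) z)
  rw [norm_one] at h2
  linarith

theorem one_sub_mul_conj_ne {w z : ℂ} (hw : ‖w‖ < 1) (hz : ‖z‖ ≤ 1) :
    (1:ℂ) - w * (starRingEnd ℂ) z ≠ 0 := by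
  have := norm_one_sub_ge (w := w) hz
  intro h
  rw [h, norm_zero] at this
  linarith

theorem norm_one_add_le {w z : ℂ} (hw : ‖w‖ ≤ 1) (hz : ‖z‖ ≤ 1) :
    ‖1 + w * (starRingEnd ℂ) z‖ ≤ 2 := by
  have h1 : ‖w * (starRingEnd ℂ) z‖ ≤ 1 := by
    rw [norm_mul, RCLike.norm_conj]
    nlinarith [norm_nonneg w, norm_nonneg z]
  have h2 := norm_add_le (1:ℂ) (w * (starRingEnd ℂ) z)
  rw [norm_one] at h2
  linarith

theorem aesm_K {g : ℂ → ℂ} (hgc : ContinuousOn g (ball (0:ℂ) 1)) (w : ℂ) :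
    AEStronglyMeasurable
      (fun z : ℂ => (Real.log (1/‖z‖) : ℂ) * w * g z * ((1 - w * (starRingEnd ℂ) z)^2)⁻¹)
      (volume.restrict (ball (0:ℂ) 1)) := by
  apply AEStronglyMeasurable.mul
  apply AEStronglyMeasurable.mul
  apply AEStronglyMeasurable.mul
  · exact (Complex.measurable_ofReal.comp
      (Real.measurable_log.comp (measurable_const.div measurable_norm))).aestronglyMeasurable
  · exact aestronglyMeasurable_const
  · exact hgc.aestronglyMeasurable measurableSet_ball
  · exact (((measurable_const.sub
      (measurable_const.mul Complex.continuous_conj.measurable)).pow_const 2).inv).aestronglyMeasurable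

theorem aesm_F' {g : ℂ → ℂ} (hgc : ContinuousOn g (ball (0:ℂ) 1)) (w : ℂ) :
    AEStronglyMeasurable
      (fun z : ℂ => (Real.log (1/‖z‖) : ℂ) * g z *
        ((1 + w * (starRingEnd ℂ) z) * (((1 - w * (starRingEnd ℂ) z)^3)⁻¹)))
      (volume.restrict (ball (0:ℂ) 1)) := by
  apply AEStronglyMeasurable.mul
  apply AEStronglyMeasurable.mul
  · exact (Complex.measurable_ofReal.comp
      (Real.measurable_log.comp (measurable_const.div measurable_norm))).aestronglyMeasurable
  · exact hgc.aestronglyMeasurable measurableSet_ball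
  · apply Measurable.aestronglyMeasurable
    apply Measurable.mul
    · exact measurable_const.add (measurable_const.mul Complex.continuous_conj.measurable)
    · exact ((measurable_const.sub
        (measurable_const.mul Complex.continuous_conj.measurable)).pow_const 3).inv

theorem integrableOn_K {g : ℂ → ℂ} (hgc : ContinuousOn g (ball (0:ℂ) 1))
    (hbase : IntegrableOn (fun z => Real.log (1/‖z‖) * ‖g z‖) (ball (0:ℂ) 1))
    (w : ℂ) (hw : ‖w‖ < 1) :
    IntegrableOn
      (fun z : ℂ => (Real.log (1/‖z‖) : ℂ) * w * g z * ((1 - w * (starRingEnd ℂ) z)^2)⁻¹)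
      (ball (0:ℂ) 1) := by
  have hpos : (0:ℝ) < 1 - ‖w‖ := by linarith
  apply Integrable.mono' (hbase.const_mul (((1-‖w‖)^2)⁻¹)) (aesm_K hgc w)
  refine (ae_restrict_iff' measurableSet_ball).mpr (Filter.Eventually.of_forall fun z hz => ?_)
  have hz1 : ‖z‖ < 1 := by simpa [mem_ball, dist_eq_norm] using hz
  have hlognn := log_inv_norm_nonneg z hz1
  have hge := norm_one_sub_ge (w := w) hz1.le
  rw [norm_mul, norm_mul, norm_mul, norm_inv, norm_pow, Complex.norm_real, Real.norm_eq_abs,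
    abs_of_nonneg hlognn]
  have hinv : (‖1 - w * (starRingEnd ℂ) z‖^2)⁻¹ ≤ ((1-‖w‖)^2)⁻¹ := by
    apply inv_anti₀ (by positivity)
    apply pow_le_pow_left₀ hpos.le hge
  calc Real.log (1/‖z‖) * ‖w‖ * ‖g z‖ * (‖1 - w * (starRingEnd ℂ) z‖^2)⁻¹
      ≤ Real.log (1/‖z‖) * 1 * ‖g z‖ * ((1-‖w‖)^2)⁻¹ := by
        apply mul_le_mul _ hinv (by positivity) (by positivity)
        apply mul_le_mul _ le_rfl (norm_nonneg _) (by positivity)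
        nlinarith [hw.le, hlognn]
    _ = ((1-‖w‖)^2)⁻¹ * (Real.log (1/‖z‖) * ‖g z‖) := by ring

/-- Differentiation under the integral sign. -/
theorem hasDerivAt_int {g : ℂ → ℂ} (hgc : ContinuousOn g (ball (0:ℂ) 1))
    (hbase : IntegrableOn (fun z => Real.log (1/‖z‖) * ‖g z‖) (ball (0:ℂ) 1))
    (w₀ : ℂ) (hw₀ : ‖w₀‖ < 1) :
    HasDerivAt (fun w : ℂ => ∫ z in ball (0:ℂ) 1,
        (Real.log (1/‖z‖) : ℂ) * w * g z * ((1 - w * (starRingEnd ℂ) z)^2)⁻¹)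
      (∫ z in ball (0:ℂ) 1, (Real.log (1/‖z‖) : ℂ) * g z *
        ((1 + w₀ * (starRingEnd ℂ) z) * (((1 - w₀ * (starRingEnd ℂ) z)^3)⁻¹))) w₀ := by
  set s₁ : ℝ := (1 + ‖w₀‖)/2 with hs₁def
  have hs₁lt : s₁ < 1 := by rw [hs₁def]; linarith
  have hs₁pos : 0 < 1 - s₁ := by linarith
  set ε : ℝ := (1 - ‖w₀‖)/2 with hεdef
  have hε : 0 < ε := by rw [hεdef]; linarith
  have hwε : ∀ w ∈ ball w₀ ε, ‖w‖ < s₁ := by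
    intro w hwb
    rw [mem_ball, dist_eq_norm] at hwb
    calc ‖w‖ = ‖w₀ + (w - w₀)‖ := by ring_nf
      _ ≤ ‖w₀‖ + ‖w - w₀‖ := norm_add_le _ _
      _ < ‖w₀‖ + ε := by linarith
      _ = s₁ := by rw [hεdef, hs₁def]; ring
  have key := hasDerivAt_integral_of_dominated_loc_of_deriv_le (μ := volume.restrict (ball (0:ℂ) 1))
    (F := fun w z => (Real.log (1/‖z‖) : ℂ) * w * g z * ((1 - w * (starRingEnd ℂ) z)^2)⁻¹)
    (F' := fun w z => (Real.log (1/‖z‖) : ℂ) * g z *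
      ((1 + w * (starRingEnd ℂ) z) * (((1 - w * (starRingEnd ℂ) z)^3)⁻¹)))
    (bound := fun z => (2 * ((1-s₁)^3)⁻¹) * (Real.log (1/‖z‖) * ‖g z‖))
    (ball_mem_nhds w₀ hε)
    (Filter.Eventually.of_forall fun w => aesm_K hgc w)
    (integrableOn_K hgc hbase w₀ hw₀)
    (aesm_F' hgc w₀)
    ?_ ?_ ?_
  · exact key.2
  · -- bound
    refine (ae_restrict_iff' measurableSet_ball).mpr (Filter.Eventually.of_forall fun z hz => ?_)
    intro w hwb
    have hz1 : ‖z‖ < 1 := by simpa [mem_ball, dist_eq_norm] using hz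
    have hw1 : ‖w‖ < s₁ := hwε w hwb
    have hlognn := log_inv_norm_nonneg z hz1
    have hge : 1 - s₁ ≤ ‖1 - w * (starRingEnd ℂ) z‖ := by
      have := norm_one_sub_ge (w := w) hz1.le
      linarith
    have hadd : ‖1 + w * (starRingEnd ℂ) z‖ ≤ 2 :=
      norm_one_add_le (by linarith) hz1.le
    rw [norm_mul, norm_mul, norm_mul, norm_inv, norm_pow, Complex.norm_real, Real.norm_eq_abs,
      abs_of_nonneg hlognn]
    have hinv : (‖1 - w * (starRingEnd ℂ) z‖^3)⁻¹ ≤ ((1-s₁)^3)⁻¹ := by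
      apply inv_anti₀ (by positivity)
      apply pow_le_pow_left₀ hs₁pos.le hge
    calc Real.log (1/‖z‖) * ‖g z‖ * (‖1 + w * (starRingEnd ℂ) z‖ *
          (‖1 - w * (starRingEnd ℂ) z‖^3)⁻¹)
        ≤ Real.log (1/‖z‖) * ‖g z‖ * (2 * ((1-s₁)^3)⁻¹) := by
          apply mul_le_mul_of_nonneg_left _ (by positivity)
          apply mul_le_mul hadd hinv (by positivity) (by norm_num)
      _ = (2 * ((1-s₁)^3)⁻¹) * (Real.log (1/‖z‖) * ‖g z‖) := by ring
  · exact hbase.const_mul _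
  · -- differentiability
    refine (ae_restrict_iff' measurableSet_ball).mpr (Filter.Eventually.of_forall fun z hz => ?_)
    intro w hwb
    have hz1 : ‖z‖ < 1 := by simpa [mem_ball, dist_eq_norm] using hz
    have hw1 : ‖w‖ < 1 := lt_trans (hwε w hwb) hs₁lt
    have hne : (1:ℂ) - w * (starRingEnd ℂ) z ≠ 0 := one_sub_mul_conj_ne hw1 hz1.le
    have h1 : HasDerivAt (fun w : ℂ => (1:ℂ) - w * (starRingEnd ℂ) z) (-(starRingEnd ℂ) z) w := by
      simpa using ((hasDerivAt_id w).mul_const ((starRingEnd ℂ) z)).const_sub 1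
    have h2 : HasDerivAt (fun w : ℂ => ((1:ℂ) - w * (starRingEnd ℂ) z)^2)
        ((2 : ℕ) * ((1:ℂ) - w * (starRingEnd ℂ) z)^1 * (-(starRingEnd ℂ) z)) w := h1.pow 2
    have h3 := h2.inv (pow_ne_zero 2 hne)
    have h4 : HasDerivAt (fun w : ℂ => ((Real.log (1/‖z‖) : ℂ) * w) * g z)
        ((Real.log (1/‖z‖) : ℂ) * g z) w := by
      simpa using (((hasDerivAt_id w).const_mul (Real.log (1/‖z‖) : ℂ)).mul_const (g z))
    have h5 := h4.mul h3
    refine h5.congr_deriv ?_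
    simp only [Pi.inv_apply]
    field_simp
    ring

theorem kernel2_meas (M₀ : ℝ → ℝ≥0∞) (hM₀ : Measurable M₀) :
    Measurable fun p : ℝ × ℝ =>
      M₀ p.2 * ENNReal.ofReal (2*π * (p.2 * Real.log (1/p.2)) * ((1 - p.1*p.2)^2)⁻¹) := by
  apply Measurable.mul (hM₀.comp measurable_snd)
  apply ENNReal.measurable_ofReal.comp
  apply Measurable.mul
  · exact (measurable_snd.mul
      (Real.measurable_log.comp (measurable_const.div measurable_snd))).const_mul _
  · exact (((measurable_fst.mul measurable_snd).const_sub 1).pow_const 2).inv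

end

end QW

/-- The norm `‖g‖_𝒲 = ∫₀¹ sup_{|θ|≤π} |g(r e^{iθ})| dr` on `𝒲(𝔻)`. -/
noncomputable def wNorm (g : ℂ → ℂ) : ℝ≥0∞ :=
  ∫⁻ r in Set.Ioo (0:ℝ) 1,
    ⨆ θ ∈ Set.Icc (-Real.pi) Real.pi,
      (‖g ((r : ℂ) * Complex.exp ((θ : ℂ) * Complex.I))‖₊ : ℝ≥0∞)

open QW in
/-- The operator `Q` maps `𝒲(𝔻)` boundedly into `𝓑(𝔻)`, with `‖Qg‖_𝓑 ≤ 16 ‖g‖_𝒲`. -/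
theorem Q_maps_W_into_besov (g : ℂ → ℂ)
    (hgc : ContinuousOn g (ball (0:ℂ) 1)) (hgW : wNorm g < ⊤)
    (Qg : ℂ → ℂ)
    (hQ : ∀ w : ℂ, Qg w = (2 / Real.pi : ℂ) *
      ∫ z in ball (0:ℂ) 1,
        (Real.log (1 / ‖z‖) : ℂ) * w * g z * ((1 - w * (starRingEnd ℂ) z) ^ 2)⁻¹) :
    (∀ w ∈ ball (0:ℂ) 1, DifferentiableAt ℂ Qg w) ∧
    (⨆ w ∈ ball (0:ℂ) 1, (‖Qg w‖₊ : ℝ≥0∞)) + besovNorm0 Qg ≤ 16 * wNorm g := by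
  obtain ⟨M₀, hM₀, hae⟩ := exists_M0 hgc
  have hwnorm : wNorm g = ∫⁻ r in Set.Ioo (0:ℝ) 1, Mfun g r := rfl
  have hMeq : ∫⁻ r in Set.Ioo (0:ℝ) 1, Mfun g r = ∫⁻ r in Set.Ioo (0:ℝ) 1, M₀ r :=
    lintegral_congr_ae hae
  have hI : wNorm g = ∫⁻ r in Set.Ioo (0:ℝ) 1, M₀ r := hwnorm.trans hMeq
  have hfin : ∫⁻ r in Set.Ioo (0:ℝ) 1, M₀ r ≠ ⊤ := by rw [← hI]; exact hgW.ne
  have hbase := integrableOn_log_norm hgc M₀ hM₀ hae hfin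
  have hQder : ∀ w : ℂ, ‖w‖ < 1 → HasDerivAt Qg
      ((2 / Real.pi : ℂ) * ∫ z in ball (0:ℂ) 1, (Real.log (1/‖z‖) : ℂ) * g z *
        ((1 + w * (starRingEnd ℂ) z) * (((1 - w * (starRingEnd ℂ) z)^3)⁻¹))) w := by
    intro w hw
    have hQeq : Qg = fun w => (2 / Real.pi : ℂ) *
        ∫ z in ball (0:ℂ) 1,
          (Real.log (1 / ‖z‖) : ℂ) * w * g z * ((1 - w * (starRingEnd ℂ) z) ^ 2)⁻¹ :=
      funext hQ
    rw [hQeq]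
    exact (hasDerivAt_int hgc hbase w hw).const_mul _
  have hconst : (‖(2 / Real.pi : ℂ)‖₊ : ℝ≥0∞) = ENNReal.ofReal (2 / Real.pi) := by
    rw [← enorm_eq_nnnorm, ← ofReal_norm]
    congr 1
    rw [norm_div, Complex.norm_real, Real.norm_eq_abs, abs_of_pos Real.pi_pos]
    norm_num
  have hπpos := Real.pi_pos
  have hc4 : ENNReal.ofReal (2 / Real.pi) * ENNReal.ofReal (2 * Real.pi)
      = ENNReal.ofReal 4 := by
    rw [← ENNReal.ofReal_mul (by positivity)]
    congr 1
    field_simp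
    ring
  constructor
  · intro w hw
    exact (hQder w (mem_ball_zero_iff.mp hw)).differentiableAt
  · have hsup : (⨆ w ∈ ball (0:ℂ) 1, (‖Qg w‖₊ : ℝ≥0∞))
        ≤ ENNReal.ofReal 4 * ∫⁻ r in Set.Ioo (0:ℝ) 1, M₀ r := by
      apply iSup₂_le
      intro w hw
      have hw1 := mem_ball_zero_iff.mp hw
      rw [hQ w]
      calc (‖(2 / Real.pi : ℂ) * ∫ z in ball (0:ℂ) 1,
              (Real.log (1 / ‖z‖) : ℂ) * w * g z *
                ((1 - w * (starRingEnd ℂ) z) ^ 2)⁻¹‖₊ : ℝ≥0∞)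
          = (‖(2 / Real.pi : ℂ)‖₊ : ℝ≥0∞) * (‖∫ z in ball (0:ℂ) 1,
              (Real.log (1 / ‖z‖) : ℂ) * w * g z *
                ((1 - w * (starRingEnd ℂ) z) ^ 2)⁻¹‖₊ : ℝ≥0∞) := by
            rw [nnnorm_mul, ENNReal.coe_mul]
        _ ≤ ENNReal.ofReal (2 / Real.pi) * ∫⁻ z in ball (0:ℂ) 1,
              (‖((Real.log (1 / ‖z‖) : ℂ) * w * g z *
                ((1 - w * (starRingEnd ℂ) z) ^ 2)⁻¹ : ℂ)‖₊ : ℝ≥0∞) := by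
            rw [hconst]
            exact mul_le_mul_right (enorm_integral_le_lintegral_enorm _) _
        _ ≤ ENNReal.ofReal (2 / Real.pi) *
              (ENNReal.ofReal (2 * Real.pi) * ∫⁻ r in Set.Ioo (0:ℝ) 1, M₀ r) :=
            mul_le_mul_right (sup_bound M₀ hM₀ hae w hw1) _
        _ = ENNReal.ofReal 4 * ∫⁻ r in Set.Ioo (0:ℝ) 1, M₀ r := by
            rw [← mul_assoc, hc4]
    have hbesov : besovNorm0 Qg ≤ ENNReal.ofReal 4 * ∫⁻ r in Set.Ioo (0:ℝ) 1, M₀ r := by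
      have hmeas_inner : Measurable fun s : ℝ => ∫⁻ r in Set.Ioo (0:ℝ) 1,
          M₀ r * ENNReal.ofReal (2*Real.pi * (r * Real.log (1/r)) * ((1 - s*r)^2)⁻¹) :=
        Measurable.lintegral_prod_right (kernel2_meas M₀ hM₀)
      calc besovNorm0 Qg
          ≤ ∫⁻ s in Set.Ioo (0:ℝ) 1, ENNReal.ofReal (2 / Real.pi) *
              ∫⁻ r in Set.Ioo (0:ℝ) 1,
                M₀ r * ENNReal.ofReal (2*Real.pi * (r * Real.log (1/r)) * ((1 - s*r)^2)⁻¹) := by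
            refine setLIntegral_mono' measurableSet_Ioo fun s hs => ?_
            apply iSup₂_le
            intro θ hθ
            have hwnorm' : ‖(s:ℂ) * Complex.exp ((θ:ℂ) * Complex.I)‖ = s :=
              norm_circle s θ hs.1.le
            have hwlt : ‖(s:ℂ) * Complex.exp ((θ:ℂ) * Complex.I)‖ < 1 := by
              rw [hwnorm']; exact hs.2
            have hder := hQder _ hwlt
            rw [hder.deriv]
            calc (‖(2 / Real.pi : ℂ) * ∫ z in ball (0:ℂ) 1, (Real.log (1/‖z‖) : ℂ) * g z *
                    ((1 + ((s:ℂ) * Complex.exp ((θ:ℂ) * Complex.I)) * (starRingEnd ℂ) z) *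
                      (((1 - ((s:ℂ) * Complex.exp ((θ:ℂ) * Complex.I)) *
                        (starRingEnd ℂ) z)^3)⁻¹))‖₊ : ℝ≥0∞)
                ≤ ENNReal.ofReal (2 / Real.pi) * ∫⁻ z in ball (0:ℂ) 1,
                    (‖((Real.log (1/‖z‖) : ℂ) * g z *
                      ((1 + ((s:ℂ) * Complex.exp ((θ:ℂ) * Complex.I)) * (starRingEnd ℂ) z) *
                        (((1 - ((s:ℂ) * Complex.exp ((θ:ℂ) * Complex.I)) *
                          (starRingEnd ℂ) z)^3)⁻¹)) : ℂ)‖₊ : ℝ≥0∞) := by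
                  rw [nnnorm_mul, ENNReal.coe_mul, hconst]
                  exact mul_le_mul_right (enorm_integral_le_lintegral_enorm _) _
              _ ≤ ENNReal.ofReal (2 / Real.pi) * ∫⁻ r in Set.Ioo (0:ℝ) 1,
                    M₀ r * ENNReal.ofReal (2*Real.pi * (r * Real.log (1/r)) *
                      ((1 - s*r)^2)⁻¹) := by
                  apply mul_le_mul_right
                  have hdb := deriv_bound M₀ hM₀ hae _ hwlt
                  rw [hwnorm'] at hdb
                  exact hdb
        _ = ENNReal.ofReal (2 / Real.pi) * ∫⁻ s in Set.Ioo (0:ℝ) 1,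
              ∫⁻ r in Set.Ioo (0:ℝ) 1,
                M₀ r * ENNReal.ofReal (2*Real.pi * (r * Real.log (1/r)) * ((1 - s*r)^2)⁻¹) :=
            lintegral_const_mul _ hmeas_inner
        _ ≤ ENNReal.ofReal (2 / Real.pi) *
              (ENNReal.ofReal (2 * Real.pi) * ∫⁻ r in Set.Ioo (0:ℝ) 1, M₀ r) :=
            mul_le_mul_right (besov_sum M₀ hM₀) _
        _ = ENNReal.ofReal 4 * ∫⁻ r in Set.Ioo (0:ℝ) 1, M₀ r := by
            rw [← mul_assoc, hc4]
    calc (⨆ w ∈ ball (0:ℂ) 1, (‖Qg w‖₊ : ℝ≥0∞)) + besovNorm0 Qg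
        ≤ ENNReal.ofReal 4 * (∫⁻ r in Set.Ioo (0:ℝ) 1, M₀ r) +
            ENNReal.ofReal 4 * (∫⁻ r in Set.Ioo (0:ℝ) 1, M₀ r) := add_le_add hsup hbesov
      _ = (ENNReal.ofReal 4 + ENNReal.ofReal 4) * (∫⁻ r in Set.Ioo (0:ℝ) 1, M₀ r) := by
          rw [add_mul]
      _ ≤ 16 * (∫⁻ r in Set.Ioo (0:ℝ) 1, M₀ r) := by
          apply mul_le_mul_left
          rw [← ENNReal.ofReal_add (by norm_num) (by norm_num)]
          norm_num
      _ = 16 * wNorm g := by rw [hI]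
end
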